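/- arXiv:1107.1505 — 12 statements merged into one kernel-verified Lean document; each statement's English description precedes it below -/
import Mathlib

section
/- Let H and K be Hilbert spaces and A : H → K a bounded linear operator. Then the range of A and the range of its adjoint A* are linearly isometric as inner product spaces. -/
open ContinuousLinearMap

section Aux

variable {H K K' : Type*}
  [NormedAddCommGroup H] [InnerProductSpace ℂ H] [CompleteSpace H]
  [NormedAddCommGroup K] [InnerProductSpace ℂ K] [CompleteSpace K]
  [NormedAddCommGroup K'] [InnerProductSpace ℂ K'] [CompleteSpace K']

private lemma aux_norm_eq (B : H →L[ℂ] K) (C : H →L[ℂ] K')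
    (h : adjoint B ∘L B = adjoint C ∘L C) (x : H) : ‖B x‖ = ‖C x‖ := by
  have h1 := B.apply_norm_sq_eq_inner_adjoint_left x
  have h2 := C.apply_norm_sq_eq_inner_adjoint_left x
  rw [h] at h1
  have : ‖B x‖ ^ 2 = ‖C x‖ ^ 2 := h1.trans h2.symm
  have := congrArg Real.sqrt this
  simpa [Real.sqrt_sq, norm_nonneg] using this

/-- Key lemma: if `B† B = C† C`, then for any `v` in the closure of the range of `B`,
`B† v` lies in the range of `C†`. -/
private lemma aux_mem_range (B : H →L[ℂ] K) (C : H →L[ℂ] K')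
    (h : adjoint B ∘L B = adjoint C ∘L C) {v : K}
    (hv : v ∈ closure (Set.range B)) :
    adjoint B v ∈ LinearMap.range (adjoint C : K' →ₗ[ℂ] H) := by
  obtain ⟨s, hs_mem, hs_lim⟩ := mem_closure_iff_seq_limit.mp hv
  choose u hu using hs_mem
  -- `C ∘ u` is Cauchy
  have hBu : Filter.Tendsto (fun n => B (u n)) Filter.atTop (nhds v) := by
    simpa [hu] using hs_lim
  have hBcauchy : CauchySeq fun n => B (u n) := hBu.cauchySeq
  have hCcauchy : CauchySeq fun n => C (u n) := by
    rw [Metric.cauchySeq_iff] at hBcauchy ⊢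
    intro ε hε
    obtain ⟨N, hN⟩ := hBcauchy ε hε
    refine ⟨N, fun m hm n hn => ?_⟩
    have := hN m hm n hn
    calc dist (C (u m)) (C (u n)) = ‖C (u m - u n)‖ := by
          rw [dist_eq_norm, map_sub]
      _ = ‖B (u m - u n)‖ := (aux_norm_eq B C h _).symm
      _ = dist (B (u m)) (B (u n)) := by rw [dist_eq_norm, map_sub]
      _ < ε := this
  obtain ⟨w, hw⟩ := cauchySeq_tendsto_of_complete hCcauchy
  refine ⟨w, ?_⟩
  have t1 : Filter.Tendsto (fun n => adjoint C (C (u n))) Filter.atTop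
      (nhds (adjoint C w)) := ((adjoint C).continuous.tendsto w).comp hw
  have t2 : Filter.Tendsto (fun n => adjoint B (B (u n))) Filter.atTop
      (nhds (adjoint B v)) := ((adjoint B).continuous.tendsto v).comp hBu
  have heq : (fun n => adjoint C (C (u n))) = fun n => adjoint B (B (u n)) := by
    funext n
    have := congrFun (congrArg (fun (T : H →L[ℂ] H) => (T : H → H)) h) (u n)
    simpa using this.symm
  rw [heq] at t1
  exact tendsto_nhds_unique t1 t2

/-- If `B† B = C† C` then `range B† ⊆ range C†`. -/
private lemma aux_range_le (B : H →L[ℂ] K) (C : H →L[ℂ] K')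
    (h : adjoint B ∘L B = adjoint C ∘L C) :
    LinearMap.range (adjoint B : K →ₗ[ℂ] H) ≤ LinearMap.range (adjoint C : K' →ₗ[ℂ] H) := by
  rintro _ ⟨y, rfl⟩
  set U : Submodule ℂ K := (LinearMap.range (B : H →ₗ[ℂ] K)).topologicalClosure with hU
  haveI : CompleteSpace U := IsClosed.completeSpace_coe (hs := (LinearMap.range (B : H →ₗ[ℂ] K)).isClosed_topologicalClosure)
  set P := Submodule.orthogonalProjectionOnto U
  have hPy : (P y : K) ∈ closure (Set.range B) := by
    have := (P y).2
    simp only [hU, Submodule.topologicalClosure_coe, LinearMap.coe_range] at this; exact this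
  have key := aux_mem_range B C h hPy
  have hsub : adjoint B (y - (P y : K)) = 0 := by
    have hmem : y - (P y : K) ∈ Uᗮ := Submodule.sub_starProjection_mem_orthogonal (K := U) y
    refine ext_inner_right ℂ fun x => ?_
    rw [adjoint_inner_left, inner_zero_left]
    exact inner_eq_zero_symm.mp (hmem (B x) (Submodule.le_topologicalClosure _ ⟨x, rfl⟩))
  have : adjoint B y = adjoint B (P y : K) := by
    have := map_sub (adjoint B) y (P y : K)
    rw [hsub] at this
    linear_combination (norm := module) -this
  rw [ContinuousLinearMap.coe_coe, this]
  exact key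

end Aux

/-- The range of a bounded operator between Hilbert spaces and the range of its
adjoint are linearly isometric inner product spaces. -/
theorem range_linearIsometryEquiv_range_adjoint
    {H K : Type*} [NormedAddCommGroup H] [InnerProductSpace ℂ H] [CompleteSpace H]
    [NormedAddCommGroup K] [InnerProductSpace ℂ K] [CompleteSpace K]
    (A : H →L[ℂ] K) :
    Nonempty (↥(LinearMap.range (A : H →ₗ[ℂ] K)) ≃ₗᵢ[ℂ]
      ↥(LinearMap.range (ContinuousLinearMap.adjoint A : K →ₗ[ℂ] H))) := by
  set T : H →L[ℂ] H := adjoint A ∘L A with hT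
  have hTpos : (0 : H →L[ℂ] H) ≤ T := by
    rw [nonneg_iff_isPositive]
    simpa [hT, ContinuousLinearMap.one_def] using isPositive_one.adjoint_conj A
  set R : H →L[ℂ] H := CFC.sqrt T with hR
  have hRpos : (0 : H →L[ℂ] H) ≤ R := CFC.sqrt_nonneg (a := T)
  have hRsa : ContinuousLinearMap.adjoint R = R := by
    have : IsSelfAdjoint R := ((nonneg_iff_isPositive R).mp hRpos).isSelfAdjoint
    rw [← star_eq_adjoint]
    exact this
  have hRR : R ∘L R = T := by
    have := CFC.sqrt_mul_sqrt_self T hTpos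
    simpa [hR, mul_def] using this
  have hcomp : adjoint A ∘L A = adjoint R ∘L R := by rw [hRsa, hRR]
  -- ranges of `A†` and `R` coincide
  have hrange : LinearMap.range (adjoint A : K →ₗ[ℂ] H) = LinearMap.range (R : H →ₗ[ℂ] H) := by
    apply le_antisymm
    · have := aux_range_le A R hcomp
      rwa [hRsa] at this
    · have := aux_range_le R A hcomp.symm
      rwa [hRsa] at this
  -- kernels of `A` and `R` coincide
  have hnorm : ∀ x, ‖A x‖ = ‖R x‖ := aux_norm_eq A R hcomp
  have hker : LinearMap.ker (A : H →ₗ[ℂ] K) = LinearMap.ker (R : H →ₗ[ℂ] H) := by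
    ext x
    simp only [LinearMap.mem_ker, ContinuousLinearMap.coe_coe]
    constructor
    · intro hx
      have : ‖R x‖ = 0 := by rw [← hnorm, hx, norm_zero]
      exact norm_eq_zero.mp this
    · intro hx
      have : ‖A x‖ = 0 := by rw [hnorm, hx, norm_zero]
      exact norm_eq_zero.mp this
  -- the linear equivalence between the ranges
  let e : ↥(LinearMap.range (A : H →ₗ[ℂ] K)) ≃ₗ[ℂ] ↥(LinearMap.range (R : H →ₗ[ℂ] H)) :=
    (A : H →ₗ[ℂ] K).quotKerEquivRange.symm ≪≫ₗ
      (Submodule.quotEquivOfEq _ _ hker) ≪≫ₗ (R : H →ₗ[ℂ] H).quotKerEquivRange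
  have he : ∀ x : H, e ⟨(A : H →ₗ[ℂ] K) x, ⟨x, rfl⟩⟩ = ⟨(R : H →ₗ[ℂ] H) x, ⟨x, rfl⟩⟩ := by
    intro x
    have h1 : (A : H →ₗ[ℂ] K).quotKerEquivRange.symm ⟨(A : H →ₗ[ℂ] K) x, ⟨x, rfl⟩⟩ =
        Submodule.Quotient.mk x := by
      rw [LinearEquiv.symm_apply_eq]
      exact Subtype.ext ((A : H →ₗ[ℂ] K).quotKerEquivRange_apply_mk x)
    simp only [e, LinearEquiv.trans_apply, h1, Submodule.quotEquivOfEq_mk]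
    exact Subtype.ext ((R : H →ₗ[ℂ] H).quotKerEquivRange_apply_mk x)
  have hnorm_e : ∀ v, ‖e v‖ = ‖v‖ := by
    rintro ⟨_, x, rfl⟩
    rw [he x]
    simpa using (hnorm x).symm
  have hrA : LinearMap.range (A : H →ₗ[ℂ] K) = LinearMap.range (A : H →ₗ[ℂ] K) := rfl
  have hrR : LinearMap.range (R : H →ₗ[ℂ] H) = LinearMap.range (R : H →ₗ[ℂ] H) := rfl
  refine ⟨?_⟩
  rw [hrange, hrA, hrR]
  exact { toLinearEquiv := e, norm_map' := hnorm_e }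
end

section
/- Let H₁, H₂, … be mutually orthogonal closed subspaces of a Hilbert space H, and let S(H₁,H₂,…) be the set of vectors x = Σₙ xₙ with xₙ ∈ Hₙ and Σₙ 4ⁿ‖xₙ‖² < ∞. Then S(H₁,H₂,…) is a linear subspace of H and is an operator range, i.e., equals the range of some bounded operator into H. -/
open scoped InnerProductSpace ENNReal NNReal

/-- Given mutually orthogonal closed subspaces `H₁, H₂, …` of a Hilbert space `H`,
the set `S(H₁,H₂,…)` of all `x = Σₙ xₙ` with `xₙ ∈ Hₙ` and `Σₙ 4ⁿ‖xₙ‖² < ∞`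
is a linear subspace of `H` and is an operator range, i.e. it is the range of a
bounded operator from some Hilbert space into `H`. -/
theorem setSum_isSubmodule_and_operatorRange
    {H : Type u} [NormedAddCommGroup H] [InnerProductSpace ℂ H] [CompleteSpace H]
    (Hs : ℕ → Submodule ℂ H) (hclosed : ∀ n, IsClosed (Hs n : Set H))
    (horth : ∀ m n, m ≠ n → ∀ x ∈ Hs m, ∀ y ∈ Hs n, ⟪x, y⟫_ℂ = 0) :
    ∃ S : Submodule ℂ H,
      (S : Set H) = {x : H | ∃ f : ℕ → H, (∀ n, f n ∈ Hs n) ∧ HasSum f x ∧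
        Summable (fun n => (4 : ℝ) ^ n * ‖f n‖ ^ 2)} ∧
      ∃ (G : Type u) (_ : NormedAddCommGroup G) (_ : InnerProductSpace ℂ G)
        (_ : CompleteSpace G) (T : G →L[ℂ] H), LinearMap.range (T : G →ₗ[ℂ] H) = S := by
  classical
  haveI : ∀ n, CompleteSpace (Hs n) := fun n => (hclosed n).completeSpace_coe
  haveI : Fact ((1 : ℝ≥0∞) ≤ 2) := ⟨one_le_two⟩
  set G := lp (fun n : ℕ => (Hs n : Type u)) 2 with hG
  -- the coefficient sequence
  set c : ℕ → ℝ := fun n => (1 / 2 : ℝ) ^ n with hc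
  have hgeo : Summable c := summable_geometric_of_lt_one (by norm_num) (by norm_num)
  have hsumnorm : ∀ g : G, Summable (fun n => ‖c n • ((g n : H))‖) := by
    intro g
    refine Summable.of_nonneg_of_le (fun n => norm_nonneg _) (fun n => ?_)
      (hgeo.mul_right ‖g‖)
    rw [norm_smul, Real.norm_of_nonneg (show (0:ℝ) ≤ c n by positivity)]
    exact mul_le_mul_of_nonneg_left (lp.norm_apply_le_norm (by norm_num) g n)
      (by positivity)
  have hsummable : ∀ g : G, Summable (fun n => c n • ((g n : H))) :=
    fun g => (hsumnorm g).of_norm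
  have hnormbound : ∀ g : G, ‖∑' n, c n • ((g n : H))‖ ≤ 2 * ‖g‖ := by
    intro g
    refine (norm_tsum_le_tsum_norm (hsumnorm g)).trans ?_
    have : ∑' n, ‖c n • ((g n : H))‖ ≤ ∑' n, c n * ‖g‖ := by
      refine (hsumnorm g).tsum_le_tsum (fun n => ?_) (hgeo.mul_right ‖g‖)
      rw [norm_smul, Real.norm_of_nonneg (show (0:ℝ) ≤ c n by positivity)]
      exact mul_le_mul_of_nonneg_left (lp.norm_apply_le_norm (by norm_num) g n)
        (by positivity)
    refine this.trans ?_
    rw [tsum_mul_right, hc]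
    rw [tsum_geometric_of_lt_one (by norm_num) (by norm_num)]
    rw [show ((1 : ℝ) - 1/2)⁻¹ = 2 by norm_num]
  let Tlin : G →ₗ[ℂ] H :=
    { toFun := fun g => ∑' n, c n • ((g n : H))
      map_add' := by
        intro g h
        have he : (fun n => c n • (((g + h) n : H)))
            = fun n => c n • ((g n : H)) + c n • ((h n : H)) := by
          funext n
          rw [lp.coeFn_add, Pi.add_apply]
          push_cast
          rw [smul_add]
        show ∑' n, c n • (((g + h) n : H)) = _
        rw [he]
        exact (hsummable g).tsum_add (hsummable h)
      map_smul' := by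
        intro a g
        have he : (fun n => c n • (((a • g) n : H)))
            = fun n => a • (c n • ((g n : H))) := by
          funext n
          rw [lp.coeFn_smul, Pi.smul_apply]
          push_cast
          rw [smul_comm]
        show ∑' n, c n • (((a • g) n : H)) = _
        rw [he]
        simp only [RingHom.id_apply]
        exact ((hsummable g).hasSum.const_smul a).tsum_eq }
  let T : G →L[ℂ] H := Tlin.mkContinuous 2 (fun g => hnormbound g)
  refine ⟨LinearMap.range (T : G →ₗ[ℂ] H), ?_, G, inferInstance, inferInstance, inferInstance, T, rfl⟩
  ext x
  simp only [SetLike.mem_coe, LinearMap.mem_range, Set.mem_setOf_eq]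
  constructor
  · rintro ⟨g, rfl⟩
    refine ⟨fun n => c n • ((g n : H)), fun n => ?_, (hsummable g).hasSum, ?_⟩
    · exact Submodule.smul_of_tower_mem _ _ (g n).2
    · have hmem := lp.memℓp g
      rw [memℓp_gen_iff (by norm_num : 0 < (2 : ℝ≥0∞).toReal)] at hmem
      have he : (fun n => (4 : ℝ) ^ n * ‖c n • ((g n : H))‖ ^ 2)
          = fun n => ‖g n‖ ^ (2 : ℝ≥0∞).toReal := by
        funext n
        rw [norm_smul, Real.norm_of_nonneg (show (0:ℝ) ≤ c n by positivity)]
        have : ‖(g n : H)‖ = ‖g n‖ := rfl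
        rw [this, show (2 : ℝ≥0∞).toReal = (2 : ℕ) by norm_num, Real.rpow_natCast]
        rw [mul_pow, hc]
        ring_nf
        rw [mul_assoc, show ((1:ℝ)/2) ^ (n * 2) * 4 ^ n = 1 by
          rw [mul_comm n 2, pow_mul, ← mul_pow]; norm_num, mul_one]
      rw [he]
      exact hmem
  · rintro ⟨f, hf, hsum, hS⟩
    set g : ∀ n : ℕ, (Hs n : Type u) := fun n =>
      ⟨(2 : ℝ) ^ n • f n, Submodule.smul_of_tower_mem _ _ (hf n)⟩ with hgdef
    have hnorm : ∀ n, ‖g n‖ ^ (2 : ℝ≥0∞).toReal = (4 : ℝ) ^ n * ‖f n‖ ^ 2 := by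
      intro n
      have : ‖g n‖ = (2 : ℝ) ^ n * ‖f n‖ := by
        rw [hgdef]
        simp only [Submodule.coe_norm]
        rw [norm_smul, Real.norm_eq_abs, abs_of_nonneg (by positivity)]
      rw [this, show (2 : ℝ≥0∞).toReal = (2 : ℕ) by norm_num, Real.rpow_natCast]
      rw [mul_pow, ← pow_mul, show (4 : ℝ) = 2 ^ 2 by norm_num, ← pow_mul]
      ring_nf
    have hmem : Memℓp g 2 := by
      rw [memℓp_gen_iff (by norm_num : 0 < (2 : ℝ≥0∞).toReal)]
      have : (fun n => ‖g n‖ ^ (2 : ℝ≥0∞).toReal)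
          = fun n => (4 : ℝ) ^ n * ‖f n‖ ^ 2 := funext hnorm
      rw [this]
      exact hS
    refine ⟨⟨g, hmem⟩, ?_⟩
    have he : (fun n => c n • (((⟨g, hmem⟩ : G) n : H))) = f := by
      funext n
      show c n • ((2 : ℝ) ^ n • f n) = f n
      rw [smul_smul, hc, ← mul_pow]
      norm_num
    show ∑' n, c n • (((⟨g, hmem⟩ : G) n : H)) = x
    rw [he]
    exact hsum.tsum_eq
end

section
/- For every bounded operator A : H → K between Hilbert spaces and every ε > 0, there exists a closed subspace V of H such that |A| maps V onto V, A is bounded below on V (i.e., ‖Ax‖ ≥ c‖x‖ on V for some c > 0), and ‖A − A P_V‖ ≤ ε, where P_V is the orthogonal projection onto V. -/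
open ContinuousLinearMap RCLike
open scoped NNReal

section Aux

variable {H : Type*} [NormedAddCommGroup H] [InnerProductSpace ℂ H] [CompleteSpace H]

local notation "⟪" x ", " y "⟫" => @inner ℂ _ _ x y

/-- For a selfadjoint operator `B`, `re ⟪(B*B) x, x⟫ = ‖B x‖ ^ 2`. -/
lemma aux_re_inner_mul_self (B : H →L[ℂ] H) (hB : IsSelfAdjoint B) (x : H) :
    re ⟪(B * B) x, x⟫ = ‖B x‖ ^ 2 := by
  have h1 : (B * B) x = B (B x) := rfl
  rw [h1]
  nth_rewrite 1 [← hB.adjoint_eq]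
  rw [ContinuousLinearMap.adjoint_inner_left]
  exact inner_self_eq_norm_sq (𝕜 := ℂ) (B x)

end Aux

set_option maxHeartbeats 1000000 in
/-- For every bounded operator `A : H → K` between Hilbert spaces and every `ε > 0`
there is a closed subspace `V` of `H` such that `|A|` (the positive square root of `A*A`)
maps `V` onto `V`, `A` is bounded below on `V`, and `‖A - A P_V‖ ≤ ε`, where `P_V` is
the orthogonal projection of `H` onto `V` (a self-adjoint idempotent with range `V`). -/
theorem exists_subspace_modulus_invariant_boundedBelow
    {H K : Type*} [NormedAddCommGroup H] [InnerProductSpace ℂ H] [CompleteSpace H]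
    [NormedAddCommGroup K] [InnerProductSpace ℂ K] [CompleteSpace K]
    (A : H →L[ℂ] K) (T : H →L[ℂ] H) (hT : T.IsPositive)
    (hT2 : T ∘L T = (ContinuousLinearMap.adjoint A) ∘L A)
    (ε : ℝ) (hε : 0 < ε) :
    ∃ V : Submodule ℂ H, IsClosed (V : Set H) ∧
      Submodule.map T.toLinearMap V = V ∧
      (∃ c : ℝ, 0 < c ∧ ∀ x ∈ V, c * ‖x‖ ≤ ‖A x‖) ∧
      ∃ P : H →L[ℂ] H, IsSelfAdjoint P ∧ P ∘L P = P ∧ LinearMap.range (P : H →ₗ[ℂ] H) = V ∧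
        ‖A - A ∘L P‖ ≤ ε := by
  have hTsa : IsSelfAdjoint T := hT.isSelfAdjoint
  rcases subsingleton_or_nontrivial H with hsub | hnontriv
  · refine ⟨⊥, ?_, by simp, ⟨1, one_pos, ?_⟩, 0, .zero _, by simp, ?_, ?_⟩
    · rw [Submodule.bot_coe]
      exact isClosed_singleton
    · intro x hx
      rw [Submodule.mem_bot] at hx
      simp [hx]
    · apply le_antisymm
      · rintro x ⟨y, rfl⟩
        simp
      · intro x hx
        rw [Submodule.mem_bot] at hx
        exact ⟨0, by simp [hx]⟩
    · have hA0 : A = 0 := by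
        ext x
        have : x = 0 := Subsingleton.elim x 0
        simp [this]
      simp [hA0]
      exact hε.le
  -- `‖A x‖ = ‖T x‖` for all `x`.
  have normAT : ∀ x : H, ‖A x‖ = ‖T x‖ := by
    intro x
    have h1 : (inner ℂ (A x) (A x)) = inner ℂ (T x) (T x) := by
      rw [← ContinuousLinearMap.adjoint_inner_left A x (A x)]
      have h2 : ContinuousLinearMap.adjoint A (A x) = T (T x) := by
        have := congrArg (fun S : H →L[ℂ] H => S x) hT2
        simpa using this.symm
      rw [h2]
      nth_rewrite 1 [← hTsa.adjoint_eq]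
      rw [ContinuousLinearMap.adjoint_inner_left]
    have h3 : (‖A x‖ : ℝ) ^ 2 = ‖T x‖ ^ 2 := by
      have := congrArg re h1
      rwa [inner_self_eq_norm_sq, inner_self_eq_norm_sq] at this
    nlinarith [norm_nonneg (A x), norm_nonneg (T x)]
  set δ : ℝ := ε / 2 with hδdef
  have hδ : 0 < δ := by positivity
  set f : ℝ → ℝ := fun t => max (t - δ) 0 with hfdef
  have hfc : Continuous f := (continuous_id.sub continuous_const).max continuous_const
  have hf0 : ∀ t, t ≤ δ → f t = 0 := by
    intro t ht
    rw [hfdef]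
    exact max_eq_right (by linarith)
  have hfnn : ∀ t, 0 ≤ f t := fun t => le_max_right _ _
  set Q : H →L[ℂ] H := cfc f T with hQdef
  have hQsa : IsSelfAdjoint Q := cfc_predicate f T
  -- T and Q commute
  have hTQ : cfc (fun t => t * f t) T = T * Q := by
    rw [cfc_mul _ _ T (by fun_prop) (by fun_prop), cfc_id' ℝ T]
  have hQT : cfc (fun t => t * f t) T = Q * T := by
    have h : (fun t : ℝ => t * f t) = fun t => f t * t := by funext t; ring
    rw [h, cfc_mul _ _ T (by fun_prop) (by fun_prop), cfc_id' ℝ T]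
  have hcomm : T * Q = Q * T := by rw [← hTQ, hQT]
  have hcomm' : ∀ y : H, T (Q y) = Q (T y) := by
    intro y
    have := congrArg (fun S : H →L[ℂ] H => S y) hcomm
    simpa [ContinuousLinearMap.mul_apply] using this
  set V : Submodule ℂ H := (LinearMap.range Q.toLinearMap).topologicalClosure with hVdef
  have hVclosed : IsClosed (V : Set H) := Submodule.isClosed_topologicalClosure _
  haveI : CompleteSpace V := hVclosed.completeSpace_coe
  have hrangeV : ∀ y : H, Q y ∈ V := fun y =>
    Submodule.le_topologicalClosure _ ⟨y, rfl⟩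
  have hmemV : ∀ x : H, x ∈ V → x ∈ closure (LinearMap.range Q.toLinearMap : Set H) := by
    intro x hx
    rwa [← Submodule.topologicalClosure_coe]
  -- lower bound on range of Q, then on V
  have hlowQ : ∀ y : H, δ * ‖Q y‖ ≤ ‖T (Q y)‖ := by
    intro y
    have hC : cfc (fun t => δ * f t) T = δ • Q := by
      rw [cfc_const_mul δ f T hfc.continuousOn, hQdef]
    have hSnn : (0 : H →L[ℂ] H) ≤
        cfc (fun t => (t * f t) * (t * f t) - (δ * f t) * (δ * f t)) T := by
      apply cfc_nonneg
      intro t _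
      rcases le_or_gt t δ with h | h
      · rw [hf0 t h]; simp
      · have h1 : 0 ≤ f t := hfnn t
        have h2 : δ * f t ≤ t * f t := mul_le_mul_of_nonneg_right h.le h1
        have h3 : 0 ≤ δ * f t := mul_nonneg hδ.le h1
        nlinarith
    have hSeq : cfc (fun t => (t * f t) * (t * f t) - (δ * f t) * (δ * f t)) T
        = cfc (fun t => t * f t) T * cfc (fun t => t * f t) T
          - cfc (fun t => δ * f t) T * cfc (fun t => δ * f t) T := by
      rw [← cfc_mul (fun t => t * f t) (fun t => t * f t) T (by fun_prop) (by fun_prop),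
        ← cfc_mul (fun t => δ * f t) (fun t => δ * f t) T (by fun_prop) (by fun_prop),
        ← cfc_sub _ _ T (by fun_prop) (by fun_prop)]
    have hBsa : IsSelfAdjoint (cfc (fun t => t * f t) T) := cfc_predicate _ T
    have hCsa : IsSelfAdjoint (δ • Q) := (IsSelfAdjoint.all δ).smul hQsa
    rw [hSeq, hC] at hSnn
    have hpos := (RCLike.nonneg_iff.mp (((ContinuousLinearMap.nonneg_iff_isPositive _).mp hSnn).inner_nonneg_left y)).1
    have hre : re (inner ℂ ((cfc (fun t => t * f t) T * cfc (fun t => t * f t) T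
        - (δ • Q) * (δ • Q)) y) y)
        = ‖cfc (fun t => t * f t) T y‖ ^ 2 - ‖(δ • Q) y‖ ^ 2 := by
      rw [ContinuousLinearMap.sub_apply, inner_sub_left, map_sub,
        aux_re_inner_mul_self _ hBsa, aux_re_inner_mul_self _ hCsa]
    rw [hre] at hpos
    have hB : cfc (fun t => t * f t) T y = T (Q y) := by
      rw [hTQ, ContinuousLinearMap.mul_apply]
    have hCy : ‖(δ • Q) y‖ = δ * ‖Q y‖ := by
      rw [ContinuousLinearMap.smul_apply, norm_smul, Real.norm_eq_abs, abs_of_pos hδ]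
    rw [hB, hCy] at hpos
    nlinarith [norm_nonneg (T (Q y)), norm_nonneg (Q y),
      mul_nonneg hδ.le (norm_nonneg (Q y))]
  have hlowV : ∀ x ∈ V, δ * ‖x‖ ≤ ‖T x‖ := by
    intro x hx
    have hclosed : IsClosed {z : H | δ * ‖z‖ ≤ ‖T z‖} :=
      isClosed_le (by fun_prop) (T.continuous.norm)
    have hsub : (LinearMap.range Q.toLinearMap : Set H) ⊆ {z : H | δ * ‖z‖ ≤ ‖T z‖} := by
      rintro _ ⟨y, rfl⟩
      exact hlowQ y
    exact closure_minimal hsub hclosed (hmemV x hx)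
  -- T maps V into V
  have hTV_mem : ∀ x ∈ V, T x ∈ V := by
    intro x hx
    have hsub : (LinearMap.range Q.toLinearMap : Set H) ⊆ T ⁻¹' (V : Set H) := by
      rintro _ ⟨y, rfl⟩
      simp only [Set.mem_preimage, SetLike.mem_coe, ContinuousLinearMap.coe_coe]
      rw [hcomm' y]
      exact hrangeV (T y)
    have hpre : IsClosed (T ⁻¹' (V : Set H)) := hVclosed.preimage T.continuous
    exact closure_minimal hsub hpre (hmemV x hx)
  -- T(V) is all of V
  have hW : Submodule.map T.toLinearMap V = V := by
    apply le_antisymm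
    · rintro _ ⟨x, hx, rfl⟩
      exact hTV_mem x hx
    · -- T(V) is closed
      set TV : V →L[ℂ] H := T ∘L V.subtypeL with hTVdef
      have hanti : AntilipschitzWith (⟨δ, hδ.le⟩ : ℝ≥0)⁻¹ TV := by
        apply TV.antilipschitz_of_bound
        intro x
        change ‖x‖ ≤ ((⟨δ, hδ.le⟩ : ℝ≥0) : ℝ)⁻¹ * ‖TV x‖
        rw [inv_mul_eq_div, le_div_iff₀ (by exact_mod_cast hδ)]
        have h1 := hlowV x x.2
        have h2 : TV x = T x := rfl
        rw [h2]
        calc ‖(x : H)‖ * (⟨δ, hδ.le⟩ : ℝ≥0) = δ * ‖(x : H)‖ := by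
              simp [mul_comm]
        _ ≤ ‖T (x : H)‖ := h1
      have hclosedrange : IsClosed (Set.range TV) :=
        hanti.isClosed_range TV.uniformContinuous
      have hrangeeq : Set.range TV = T '' (V : Set H) := by
        ext z
        constructor
        · rintro ⟨v, rfl⟩; exact ⟨v, v.2, rfl⟩
        · rintro ⟨v, hv, rfl⟩; exact ⟨⟨v, hv⟩, rfl⟩
      -- range Q ⊆ T(V)
      have hmax_pos : ∀ t : ℝ, 0 < max t δ := fun t => lt_of_lt_of_le hδ (le_max_right t δ)
      have hmc : Continuous (fun t : ℝ => f t / max t δ) :=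
        hfc.div (continuous_id.max continuous_const) (fun t => (hmax_pos t).ne')
      have hinvc : Continuous (fun t : ℝ => (max t δ)⁻¹) :=
        (continuous_id.max continuous_const).inv₀ (fun t => (hmax_pos t).ne')
      have hQ_eq : Q = T * cfc (fun t : ℝ => f t / max t δ) T := by
        have h1 : f = fun t => t * (f t / max t δ) := by
          funext t
          rcases le_or_gt t δ with h | h
          · rw [hf0 t h]
            simp
          · have hmax : max t δ = t := max_eq_left h.le
            rw [hmax, mul_comm, div_mul_cancel₀]
            exact (lt_trans hδ h).ne'
        conv_lhs => rw [hQdef, h1]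
        rw [cfc_mul _ _ T (by fun_prop) hmc.continuousOn, cfc_id' ℝ T]
      have hM_eq : cfc (fun t : ℝ => f t / max t δ) T
          = Q * cfc (fun t : ℝ => (max t δ)⁻¹) T := by
        have h1 : (fun t : ℝ => f t / max t δ) = fun t => f t * (max t δ)⁻¹ := by
          funext t; rw [div_eq_mul_inv]
        rw [h1, cfc_mul _ _ T hfc.continuousOn hinvc.continuousOn, hQdef]
      have hsub : (LinearMap.range Q.toLinearMap : Set H) ⊆ T '' (V : Set H) := by
        rintro _ ⟨y, rfl⟩
        refine ⟨cfc (fun t : ℝ => f t / max t δ) T y, ?_, ?_⟩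
        · have h2 : cfc (fun t : ℝ => f t / max t δ) T y
              = Q (cfc (fun t : ℝ => (max t δ)⁻¹) T y) := by
            rw [hM_eq, ContinuousLinearMap.mul_apply]
          rw [h2]
          exact hrangeV _
        · have := congrArg (fun S : H →L[ℂ] H => S y) hQ_eq
          simpa [ContinuousLinearMap.mul_apply] using this.symm
      intro x hx
      have hVsub : closure (LinearMap.range Q.toLinearMap : Set H) ⊆ Set.range TV :=
        closure_minimal (by rw [hrangeeq]; exact hsub) hclosedrange
      obtain ⟨v, hveq⟩ := hVsub (hmemV x hx)
      exact ⟨v, v.2, hveq⟩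
  -- the orthogonal projection
  set P : H →L[ℂ] H := V.subtypeL ∘L V.orthogonalProjectionOnto with hPdef
  have hPsa : IsSelfAdjoint P := isSelfAdjoint_starProjection V
  have hPmem : ∀ x : H, P x ∈ V := by
    intro x
    rw [hPdef]
    exact (V.orthogonalProjectionOnto x).2
  have hPapply : ∀ x ∈ V, P x = x := by
    intro x hx
    rw [hPdef]
    simp only [ContinuousLinearMap.comp_apply, Submodule.subtypeL_apply]
    exact (Submodule.starProjection_eq_self_iff (K := V)).mpr hx
  have hPP : P ∘L P = P := by
    ext x
    exact hPapply _ (hPmem x)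
  have hPrange : LinearMap.range (P : H →ₗ[ℂ] H) = V := by
    apply le_antisymm
    · rintro _ ⟨y, rfl⟩
      exact hPmem y
    · intro x hx
      exact ⟨x, hPapply x hx⟩
  -- Q vanishes on the orthogonal complement
  have hQperp : ∀ y ∈ Vᗮ, Q y = 0 := by
    intro y hy
    have h1 : inner ℂ (Q y) (Q y) = 0 := by
      have h2 : Q (Q y) ∈ V := hrangeV _
      have h3 : inner ℂ (Q (Q y)) y = 0 :=
        (Submodule.mem_orthogonal V y).mp hy _ h2
      rw [← h3, ← ContinuousLinearMap.adjoint_inner_right Q (Q y) y, hQsa.adjoint_eq]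
    exact inner_self_eq_zero.mp h1
  -- the key spectral inequality: ‖T y‖ ≤ ε ‖y‖ on the complement
  have hTperp : ∀ y ∈ Vᗮ, ‖T y‖ ≤ ε * ‖y‖ := by
    intro y hy
    set M0 : ℝ := (‖T‖ * ‖T‖) / (δ * δ) with hM0def
    have hM0 : 0 ≤ M0 := by positivity
    have hspec : ∀ t ∈ spectrum ℝ T, t * t ≤ ε ^ 2 + M0 * (f t * f t) := by
      intro t ht
      have ht0 : 0 ≤ t :=
        spectrum_nonneg_of_nonneg ((ContinuousLinearMap.nonneg_iff_isPositive T).mpr hT) ht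
      have htn : t ≤ ‖T‖ := by
        have := spectrum.norm_le_norm_of_mem ht
        rwa [Real.norm_eq_abs, abs_of_nonneg ht0] at this
      rcases le_or_gt t ε with h | h
      · nlinarith [mul_nonneg hM0 (mul_nonneg (hfnn t) (hfnn t))]
      · have hεδ : ε = 2 * δ := by rw [hδdef]; ring
        have hft : f t = t - δ := by
          rw [hfdef]
          exact max_eq_left (by rw [hεδ] at h; linarith)
        have hδft : δ ≤ f t := by rw [hft]; rw [hεδ] at h; linarith
        have key : t * t * (δ * δ) ≤ (‖T‖ * ‖T‖) * (f t * f t) := by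
          have h1 : t * δ ≤ ‖T‖ * f t :=
            mul_le_mul htn hδft hδ.le (norm_nonneg T)
          nlinarith [mul_nonneg ht0 hδ.le, mul_nonneg (norm_nonneg T) (hfnn t)]
        have h2 : t * t ≤ M0 * (f t * f t) := by
          rw [hM0def, div_mul_eq_mul_div, le_div_iff₀ (by positivity)]
          linarith [key]
        nlinarith [sq_nonneg ε]
    have hmono : cfc (fun t : ℝ => t * t) T
        ≤ cfc (fun t => ε ^ 2 + M0 * (f t * f t)) T :=
      cfc_mono hspec
    have hlhs : cfc (fun t : ℝ => t * t) T = T * T := by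
      rw [cfc_mul (fun t : ℝ => t) (fun t : ℝ => t) T (by fun_prop) (by fun_prop), cfc_id' ℝ T]
    have hrhs : cfc (fun t => ε ^ 2 + M0 * (f t * f t)) T
        = algebraMap ℝ (H →L[ℂ] H) (ε ^ 2) + M0 • (Q * Q) := by
      rw [cfc_add (a := T) (fun _ : ℝ => ε ^ 2) (fun t => M0 * (f t * f t)) (by fun_prop) (by fun_prop),
        cfc_const (ε ^ 2) T,
        cfc_const_mul M0 (fun t => f t * f t) T (by fun_prop),
        cfc_mul f f T (by fun_prop) (by fun_prop), hQdef]
    rw [hlhs, hrhs] at hmono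
    have hpos := (RCLike.nonneg_iff.mp (((ContinuousLinearMap.nonneg_iff_isPositive _).mp
      (sub_nonneg.mpr hmono)).inner_nonneg_left y)).1
    have hre : re (inner ℂ ((algebraMap ℝ (H →L[ℂ] H) (ε ^ 2) + M0 • (Q * Q) - T * T) y) y)
        = ε ^ 2 * ‖y‖ ^ 2 + M0 * ‖Q y‖ ^ 2 - ‖T y‖ ^ 2 := by
      rw [ContinuousLinearMap.sub_apply, ContinuousLinearMap.add_apply,
        inner_sub_left, inner_add_left, map_sub, map_add,
        aux_re_inner_mul_self _ hTsa]
      congr 1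
      congr 1
      · have h1 : (algebraMap ℝ (H →L[ℂ] H) (ε ^ 2)) y = (ε ^ 2 : ℝ) • y := by
          rw [Algebra.algebraMap_eq_smul_one]
          simp
        rw [h1, RCLike.real_smul_eq_coe_smul (K := ℂ) (ε ^ 2) y, inner_smul_real_left]
        simp only [RCLike.smul_re]
        rw [inner_self_eq_norm_sq]
      · have h2 : (M0 • (Q * Q)) y = (M0 : ℝ) • ((Q * Q) y) := by
          simp
        rw [h2, RCLike.real_smul_eq_coe_smul (K := ℂ) M0 ((Q * Q) y), inner_smul_real_left]
        simp only [RCLike.smul_re]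
        rw [aux_re_inner_mul_self _ hQsa]
    rw [hre] at hpos
    rw [hQperp y hy, norm_zero] at hpos
    have h4 : ‖T y‖ ^ 2 ≤ ε ^ 2 * ‖y‖ ^ 2 := by nlinarith
    nlinarith [norm_nonneg (T y), norm_nonneg y, mul_nonneg hε.le (norm_nonneg y)]
  refine ⟨V, hVclosed, hW, ⟨δ, hδ, fun x hx => ?_⟩, P, hPsa, hPP, hPrange, ?_⟩
  · rw [normAT x]; exact hlowV x hx
  · apply ContinuousLinearMap.opNorm_le_bound _ hε.le
    intro x
    have h1 : (A - A ∘L P) x = A (x - P x) := by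
      simp [ContinuousLinearMap.sub_apply, map_sub]
    have h2 : x - P x ∈ Vᗮ := V.sub_starProjection_mem_orthogonal x
    have h3 : ‖x - P x‖ ≤ ‖x‖ := by
      have horth : inner ℂ (P x) (x - P x) = 0 :=
        (Submodule.mem_orthogonal V _).mp h2 _ (hPmem x)
      have hpyth := norm_add_sq_eq_norm_sq_add_norm_sq_of_inner_eq_zero (P x) (x - P x) horth
      have hsum : P x + (x - P x) = x := by abel
      rw [hsum] at hpyth
      nlinarith [norm_nonneg (P x), norm_nonneg (x - P x), norm_nonneg x]
    calc ‖(A - A ∘L P) x‖ = ‖T (x - P x)‖ := by rw [h1, normAT]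
    _ ≤ ε * ‖x - P x‖ := hTperp _ h2
    _ ≤ ε * ‖x‖ := by nlinarith
end

section
/- Let A, A₁, A₂, … ∈ B(H,K) with Aₙ → A in norm, and let V be a closed subspace of H on which A is bounded below. Then for all sufficiently large n, dim(K ⊖ Aₙ(V)) = dim(K ⊖ A(V)), where ⊖ denotes orthogonal complement and dim is Hilbert dimension. -/
/-- The Hilbert dimension of an inner product space: the supremum of cardinalities of
orthonormal subsets. -/
noncomputable def hdim (𝕜 E : Type*) [RCLike 𝕜] [NormedAddCommGroup E]
    [InnerProductSpace 𝕜 E] : Cardinal :=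
  ⨆ s : {s : Set E // Orthonormal 𝕜 (fun x : s => (x : E))}, Cardinal.mk s.1

open scoped InnerProductSpace

lemma hdim_le_of_injective {E F : Type v} [NormedAddCommGroup E] [InnerProductSpace ℂ E]
    [NormedAddCommGroup F] [InnerProductSpace ℂ F] [CompleteSpace E] [CompleteSpace F]
    (T : E →L[ℂ] F) (hT : Function.Injective T) : hdim ℂ E ≤ hdim ℂ F := by
  refine ciSup_le' fun S => ?_
  obtain ⟨s, hs⟩ := S
  obtain ⟨w, b, hb⟩ := exists_hilbertBasis ℂ F
  have hworth : Orthonormal ℂ (fun x : w => (x : F)) := by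
    have := b.orthonormal
    rwa [hb] at this
  have hwle : Cardinal.mk w ≤ hdim ℂ F :=
    le_ciSup (Cardinal.bddAbove_range _) (⟨w, hworth⟩ : {s : Set F // Orthonormal ℂ (fun x : s => (x : F))})
  -- countable fibers
  have hcount : ∀ i : w, ({x : s | ⟪(i : F), T x⟫_ℂ ≠ 0} : Set s).Countable := by
    intro i
    set y := ContinuousLinearMap.adjoint T (i : F) with hy
    have hsum : Summable fun x : s => ‖⟪(x : E), y⟫_ℂ‖ ^ 2 :=
      Orthonormal.inner_products_summable y hs
    have hcs := hsum.countable_support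
    refine hcs.mono ?_
    intro x hx
    have h1 : ⟪y, (x : E)⟫_ℂ ≠ 0 := by
      rw [hy, ContinuousLinearMap.adjoint_inner_left]; exact hx
    have h2 : ⟪(x : E), y⟫_ℂ ≠ 0 := by
      intro h
      apply h1
      rw [← inner_conj_symm, h, map_zero]
    simp only [Function.mem_support]
    intro h0
    exact h2 (norm_eq_zero.mp ((pow_eq_zero_iff two_ne_zero).mp h0))
  have hcover : ∀ x : s, ∃ i : w, ⟪(i : F), T x⟫_ℂ ≠ 0 := by
    intro x
    by_contra hcon
    push_neg at hcon
    have hx1 : ‖(x : E)‖ = 1 := hs.1 x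
    have hxne : (x : E) ≠ 0 := by
      intro h; rw [h, norm_zero] at hx1; norm_num at hx1
    have hTx : T (x : E) ≠ 0 := fun h => hxne (hT (by simpa using h))
    apply hTx
    have hz : b.repr (T (x : E)) = 0 := by
      ext i
      rw [b.repr_apply_apply, show (b i) = (i : F) from congrFun hb i]
      simpa using hcon i
    exact b.repr.injective (by rw [hz, map_zero])
  have hmk : Cardinal.mk s ≤ Cardinal.mk w * Cardinal.aleph0 := by
    have hU : (⋃ i : w, {x : s | ⟪(i : F), T x⟫_ℂ ≠ 0}) = Set.univ := by
      ext x
      simp only [Set.mem_iUnion, Set.mem_univ, iff_true]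
      obtain ⟨i, hi⟩ := hcover x
      exact ⟨i, hi⟩
    calc Cardinal.mk s = Cardinal.mk (⋃ i : w, {x : s | ⟪(i : F), T x⟫_ℂ ≠ 0}) := by
          rw [hU, Cardinal.mk_univ]
      _ ≤ Cardinal.mk w * ⨆ i : w, Cardinal.mk ({x : s | ⟪(i : F), T x⟫_ℂ ≠ 0} : Set s) :=
          Cardinal.mk_iUnion_le _
      _ ≤ Cardinal.mk w * Cardinal.aleph0 := by
          apply mul_le_mul' le_rfl
          exact ciSup_le' fun i => (Cardinal.mk_le_aleph0_iff.mpr (hcount i).to_subtype)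
  rcases w.finite_or_infinite with hfin | hinf
  · -- finite-dimensional case
    have hspan : Submodule.span ℂ w = ⊤ := by
      have hd := b.dense_span
      rw [hb, Subtype.range_coe] at hd
      have hfd : FiniteDimensional ℂ (Submodule.span ℂ w) := FiniteDimensional.span_of_finite ℂ hfin
      have hcl : IsClosed ((Submodule.span ℂ w : Submodule ℂ F) : Set F) :=
        Submodule.closed_of_finiteDimensional _
      have heq : (Submodule.span ℂ w).topologicalClosure = Submodule.span ℂ w :=
        SetLike.ext' (by rw [Submodule.topologicalClosure_coe, hcl.closure_eq])
      rwa [heq] at hd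
    haveI hFfd : FiniteDimensional ℂ F := by
      have h1 : FiniteDimensional ℂ (Submodule.span ℂ w) := FiniteDimensional.span_of_finite ℂ hfin
      rw [hspan] at h1
      exact Module.Finite.equiv Submodule.topEquiv
    have h2 : Cardinal.mk s ≤ Module.rank ℂ E := hs.linearIndependent.cardinal_le_rank'
    have h3 : Module.rank ℂ E ≤ Module.rank ℂ F :=
      LinearMap.rank_le_of_injective T.toLinearMap hT
    have h4 : Module.rank ℂ F ≤ hdim ℂ F := by
      set v := (stdOrthonormalBasis ℂ F).toBasis
      set u := ⇑(stdOrthonormalBasis ℂ F)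
      have hu : Orthonormal ℂ u := (stdOrthonormalBasis ℂ F).orthonormal
      have hrange : Orthonormal ℂ (fun x : (Set.range u) => (x : F)) := hu.toSubtypeRange
      have hinj : Function.Injective u := hu.linearIndependent.injective
      have : Cardinal.mk (Set.range u) = Module.rank ℂ F := by
        have h5 : Cardinal.mk (Set.range u) = (Module.finrank ℂ F : Cardinal) := by
          classical
          rw [Cardinal.mk_fintype, Set.card_range_of_injective hinj, Fintype.card_fin]
        rw [h5, Module.finrank_eq_rank]
      calc Module.rank ℂ F = Cardinal.mk (Set.range u) := this.symm
        _ ≤ hdim ℂ F := le_ciSup (Cardinal.bddAbove_range _)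
            (⟨Set.range u, hrange⟩ : {s : Set F // Orthonormal ℂ (fun x : s => (x : F))})
    exact h2.trans (h3.trans h4)
  · have hale : Cardinal.aleph0 ≤ Cardinal.mk w := Cardinal.infinite_iff.1 hinf.to_subtype
    have : Cardinal.mk w * Cardinal.aleph0 = Cardinal.mk w := by
      rw [Cardinal.mul_eq_max hale le_rfl, max_eq_left hale]
    exact (hmk.trans this.le).trans hwle

/-- If `Aₙ → A` in operator norm and `A` is bounded below on a closed subspace `V`, then
for all sufficiently large `n`, `dim (K ⊖ Aₙ(V)) = dim (K ⊖ A(V))`. -/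
theorem eventually_hdim_orthogonal_image_eq
    {H K : Type u} [NormedAddCommGroup H] [InnerProductSpace ℂ H] [CompleteSpace H]
    [NormedAddCommGroup K] [InnerProductSpace ℂ K] [CompleteSpace K]
    (A : H →L[ℂ] K) (As : ℕ → (H →L[ℂ] K))
    (hconv : Filter.Tendsto As Filter.atTop (nhds A))
    (V : Submodule ℂ H) (hV : IsClosed (V : Set H))
    (c : ℝ) (hc : 0 < c) (hbb : ∀ x ∈ V, c * ‖x‖ ≤ ‖A x‖) :
    ∃ N : ℕ, ∀ n ≥ N,
      hdim ℂ ↥(Submodule.map (As n).toLinearMap V)ᗮ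
        = hdim ℂ ↥(Submodule.map A.toLinearMap V)ᗮ := by
  have hhalf : 0 < c / 2 := by linarith
  obtain ⟨N, hN⟩ := (Metric.tendsto_atTop.mp hconv) (c / 2) hhalf
  refine ⟨N, fun n hn => ?_⟩
  set B := As n with hB
  have hdist : ‖B - A‖ < c / 2 := by
    have := hN n hn
    rwa [dist_eq_norm] at this
  set e := ‖B - A‖ with he
  have he0 : 0 ≤ e := norm_nonneg _
  have hdiff : ∀ v ∈ V, ‖B v - A v‖ ≤ e * ‖v‖ := by
    intro v _
    calc ‖B v - A v‖ = ‖(B - A) v‖ := by simp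
      _ ≤ e * ‖v‖ := (B - A).le_opNorm v
  have hBbb : ∀ v ∈ V, (c / 2) * ‖v‖ ≤ ‖B v‖ := by
    intro v hv
    have h1 := hbb v hv
    have h2 := hdiff v hv
    have h3 : ‖A v‖ - ‖B v‖ ≤ ‖B v - A v‖ := by
      have h4 := norm_sub_norm_le (A v) (B v)
      have h5 : ‖A v - B v‖ = ‖B v - A v‖ := norm_sub_rev _ _
      linarith
    nlinarith [norm_nonneg v]
  haveI hVc : CompleteSpace V := hV.completeSpace_coe
  have hclosed : ∀ (P : H →L[ℂ] K) (cP : ℝ), 0 < cP → (∀ v ∈ V, cP * ‖v‖ ≤ ‖P v‖) →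
      IsClosed ((Submodule.map P.toLinearMap V : Submodule ℂ K) : Set K) := by
    intro P cP hcP hPbb
    have hanti : AntilipschitzWith (⟨cP, hcP.le⟩ : NNReal)⁻¹ (fun v : V => P (v : H)) := by
      apply AntilipschitzWith.of_le_mul_dist
      intro x y
      have hmem : (x : H) - y ∈ V := sub_mem x.2 y.2
      have hlow := hPbb _ hmem
      rw [map_sub] at hlow
      rw [Subtype.dist_eq, dist_eq_norm, dist_eq_norm]
      have hc' : (((⟨cP, hcP.le⟩ : NNReal)⁻¹ : NNReal) : ℝ) = cP⁻¹ := NNReal.coe_inv _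
      rw [hc', ← div_eq_inv_mul, le_div_iff₀ hcP, mul_comm]
      exact hlow
    have hrange : Set.range (fun v : V => P (v : H))
        = ((Submodule.map P.toLinearMap V : Submodule ℂ K) : Set K) := by
      ext z
      simp only [Set.mem_range, SetLike.mem_coe, Submodule.mem_map]
      constructor
      · rintro ⟨⟨v, hv⟩, rfl⟩; exact ⟨v, hv, rfl⟩
      · rintro ⟨v, hv, rfl⟩; exact ⟨⟨v, hv⟩, rfl⟩
    rw [← hrange]
    exact hanti.isClosed_range (P.uniformContinuous.comp uniformContinuous_subtype_val)
  set W₁ := Submodule.map A.toLinearMap V with hW₁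
  set W₂ := Submodule.map B.toLinearMap V with hW₂
  have hW₁c : IsClosed (W₁ : Set K) := hclosed A c hc hbb
  have hW₂c : IsClosed (W₂ : Set K) := hclosed B (c/2) hhalf hBbb
  haveI : CompleteSpace W₁ := hW₁c.completeSpace_coe
  haveI : CompleteSpace W₂ := hW₂c.completeSpace_coe
  have haux : ∀ (P Q : H →L[ℂ] K) (cP : ℝ), 0 < cP → e < cP →
      (∀ v ∈ V, cP * ‖v‖ ≤ ‖P v‖) → (∀ v ∈ V, ‖P v - Q v‖ ≤ e * ‖v‖) →
      ∀ x, x ∈ Submodule.map P.toLinearMap V → x ∈ (Submodule.map Q.toLinearMap V)ᗮ → x = 0 := by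
    intro P Q cP hcP hecP hPbb hPQ x hx hxo
    obtain ⟨v, hv, rfl⟩ := hx
    have hQv : ⟪Q v, P v⟫_ℂ = 0 :=
      (Submodule.mem_orthogonal _ _).mp hxo (Q v) ⟨v, hv, rfl⟩
    have h1 : ⟪P v - Q v, P v⟫_ℂ = ⟪P v, P v⟫_ℂ := by
      rw [inner_sub_left, hQv, sub_zero]
    have h2 : (‖P v‖ : ℝ) ^ 2 ≤ e * ‖v‖ * ‖P v‖ := by
      have h3 : ((‖P v‖ : ℝ) ^ 2 : ℝ) = RCLike.re ⟪P v, P v⟫_ℂ := by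
        rw [inner_self_eq_norm_sq]
      have h6 : RCLike.re ⟪P v - Q v, P v⟫_ℂ ≤ ‖⟪P v - Q v, P v⟫_ℂ‖ := RCLike.re_le_norm _
      have h7 : ‖⟪P v - Q v, P v⟫_ℂ‖ ≤ ‖P v - Q v‖ * ‖P v‖ := norm_inner_le_norm _ _
      have h8 : ‖P v - Q v‖ * ‖P v‖ ≤ e * ‖v‖ * ‖P v‖ :=
        mul_le_mul_of_nonneg_right (hPQ v hv) (norm_nonneg _)
      rw [h3, ← h1]
      linarith
    have h4 : cP * ‖v‖ ≤ ‖P v‖ := hPbb v hv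
    by_contra hne
    have hpos : 0 < ‖P v‖ := by
      rw [norm_pos_iff]
      exact hne
    have h5 : ‖P v‖ ≤ e * ‖v‖ := by
      have h2' := h2
      rw [pow_two] at h2'
      exact le_of_mul_le_mul_right h2' hpos
    have h6 : ‖v‖ ≤ 0 := by nlinarith
    have h7 : ‖v‖ = 0 := le_antisymm h6 (norm_nonneg v)
    rw [h7, mul_zero] at h5
    linarith
  have hdisj₁ : ∀ x, x ∈ W₁ → x ∈ W₂ᗮ → x = 0 := by
    refine haux A B c hc (by linarith) hbb ?_
    intro v hv
    rw [norm_sub_rev]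
    exact hdiff v hv
  have hdisj₂ : ∀ x, x ∈ W₂ → x ∈ W₁ᗮ → x = 0 :=
    haux B A (c/2) hhalf hdist hBbb hdiff
  haveI : CompleteSpace ↥W₁ᗮ := W₁.isClosed_orthogonal.completeSpace_coe
  haveI : CompleteSpace ↥W₂ᗮ := W₂.isClosed_orthogonal.completeSpace_coe
  let T : ↥W₁ᗮ →L[ℂ] ↥W₂ᗮ := (Submodule.orthogonalProjectionOnto W₂ᗮ).comp (Submodule.subtypeL W₁ᗮ)
  let S : ↥W₂ᗮ →L[ℂ] ↥W₁ᗮ := (Submodule.orthogonalProjectionOnto W₁ᗮ).comp (Submodule.subtypeL W₂ᗮ)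
  have hTinj : Function.Injective T := by
    intro x y hxy
    have h0 : T (x - y) = 0 := by rw [map_sub, hxy, sub_self]
    have hz : Submodule.orthogonalProjectionOnto W₂ᗮ ((x - y : ↥W₁ᗮ) : K) = 0 := h0
    have hz2 : ((x - y : ↥W₁ᗮ) : K) ∈ (W₂ᗮ)ᗮ := Submodule.orthogonalProjectionOnto_eq_zero_iff.mp hz
    rw [Submodule.orthogonal_orthogonal] at hz2
    have := hdisj₂ _ hz2 (x - y).2
    rw [← sub_eq_zero]
    exact Subtype.ext this
  have hSinj : Function.Injective S := by
    intro x y hxy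
    have h0 : S (x - y) = 0 := by rw [map_sub, hxy, sub_self]
    have hz : Submodule.orthogonalProjectionOnto W₁ᗮ ((x - y : ↥W₂ᗮ) : K) = 0 := h0
    have hz2 : ((x - y : ↥W₂ᗮ) : K) ∈ (W₁ᗮ)ᗮ := Submodule.orthogonalProjectionOnto_eq_zero_iff.mp hz
    rw [Submodule.orthogonal_orthogonal] at hz2
    have := hdisj₁ _ hz2 (x - y).2
    rw [← sub_eq_zero]
    exact Subtype.ext this
  exact le_antisymm (hdim_le_of_injective S hSinj) (hdim_le_of_injective T hTinj)
end

section
/- Let A ∈ B(H,K) and let W be a closed subspace of H with W ∩ ker(A) = {0}. If V ⊆ W is a closed subspace on which A is bounded below, then dim(W ⊖ V) = dim( closure(A(W)) ⊖ A(V) ). -/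
open scoped InnerProductSpace

universe u

section Aux

variable {E F : Type u} [NormedAddCommGroup E] [InnerProductSpace ℂ E]
  [NormedAddCommGroup F] [InnerProductSpace ℂ F]

lemma le_hdim {s : Set E} (hs : Orthonormal ℂ (fun x : s => (x : E))) :
    Cardinal.mk s ≤ hdim ℂ E :=
  le_ciSup (Cardinal.bddAbove_range _)
    (⟨s, hs⟩ : {s : Set E // Orthonormal ℂ (fun x : s => (x : E))})

lemma hdim_le {κ : Cardinal}
    (h : ∀ s : Set E, Orthonormal ℂ (fun x : s => (x : E)) → Cardinal.mk s ≤ κ) :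
    hdim ℂ E ≤ κ :=
  ciSup_le' fun s => h s.1 s.2

lemma card_orthonormal_le {ι : Type u} (T : E →L[ℂ] F) (v : ι → E)
    (hdense : ∀ y : F, (∀ i, ⟪T (v i), y⟫_ℂ = 0) → y = 0)
    (s : Set F) (hs : Orthonormal ℂ (fun x : s => (x : F))) :
    Cardinal.mk s ≤ Cardinal.mk ι * Cardinal.aleph0 := by
  classical
  set S : ι → Set F := fun i => {x ∈ s | ⟪T (v i), x⟫_ℂ ≠ 0} with hS
  have hsub : s ⊆ ⋃ i, S i := by
    intro x hx
    by_contra hx'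
    have hxz : x = 0 := by
      refine hdense x fun i => ?_
      by_contra hne
      exact hx' (Set.mem_iUnion.2 ⟨i, hx, hne⟩)
    have := hs.ne_zero ⟨x, hx⟩
    simp [hxz] at this
  have hcount : ∀ i, (S i).Countable := by
    intro i
    have hsum : Summable fun x : s => ‖⟪(x : F), T (v i)⟫_ℂ‖ ^ 2 :=
      Orthonormal.inner_products_summable (T (v i)) hs
    have hc := hsum.countable_support
    have : S i ⊆ Subtype.val '' (Function.support fun x : s => ‖⟪(x : F), T (v i)⟫_ℂ‖ ^ 2) := by
      intro x hx
      obtain ⟨hxs, hne⟩ := hx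
      refine ⟨⟨x, hxs⟩, ?_, rfl⟩
      simp only [Function.mem_support]
      intro h0
      apply hne
      have hn : ‖⟪(x : F), T (v i)⟫_ℂ‖ = 0 := by
        have := pow_eq_zero_iff (M₀ := ℝ) (n := 2) (by norm_num) |>.mp h0
        exact this
      have : ⟪(x : F), T (v i)⟫_ℂ = 0 := norm_eq_zero.mp hn
      rw [← inner_conj_symm, this, map_zero]
    exact ((hc.image _).mono this)
  have h1 : Cardinal.mk (⋃ i, S i) ≤ Cardinal.mk ι * ⨆ i, Cardinal.mk (S i) :=
    Cardinal.mk_iUnion_le S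
  have h2 : (⨆ i, Cardinal.mk (S i)) ≤ Cardinal.aleph0 :=
    ciSup_le' fun i => (hcount i).le_aleph0
  calc Cardinal.mk s ≤ Cardinal.mk (⋃ i, S i) := Cardinal.mk_le_mk_of_subset hsub
    _ ≤ Cardinal.mk ι * ⨆ i, Cardinal.mk (S i) := h1
    _ ≤ Cardinal.mk ι * Cardinal.aleph0 := mul_le_mul_right h2 _

lemma hdim_le_max_of_codense [CompleteSpace E] (T : E →L[ℂ] F)
    (hd : ∀ y : F, (∀ x : E, ⟪T x, y⟫_ℂ = 0) → y = 0) :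
    hdim ℂ F ≤ max (hdim ℂ E) Cardinal.aleph0 := by
  obtain ⟨w, b, hb⟩ := exists_hilbertBasis ℂ E
  have hwo : Orthonormal ℂ (fun x : w => (x : E)) := by
    rw [← hb]; exact b.orthonormal
  have hw : Cardinal.mk w ≤ hdim ℂ E := le_hdim hwo
  refine hdim_le fun s hs => ?_
  have hdense : ∀ y : F, (∀ i : w, ⟪T ((i : w) : E), y⟫_ℂ = 0) → y = 0 := by
    intro y hy
    refine hd y fun x => ?_
    set g : E →L[ℂ] ℂ := (innerSL ℂ y).comp T with hg
    have hker : (Submodule.span ℂ (Set.range (fun i : w => (i : E)))).topologicalClosure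
        ≤ LinearMap.ker g.toLinearMap := by
      apply Submodule.topologicalClosure_minimal
      · rw [Submodule.span_le]
        rintro _ ⟨i, rfl⟩
        simp only [SetLike.mem_coe, LinearMap.mem_ker]
        have := hy i
        rw [← inner_conj_symm] at this
        have : ⟪y, T ((i : w) : E)⟫_ℂ = 0 := by
          rwa [map_eq_zero] at this
        simpa [hg] using this
      · exact ContinuousLinearMap.isClosed_ker g
    have htop : (Submodule.span ℂ (Set.range (fun i : w => (i : E)))).topologicalClosure = ⊤ := by
      have := b.dense_span
      rwa [hb] at this
    have hx0 : ∀ x : E, g x = 0 := by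
      intro x
      have : x ∈ LinearMap.ker g.toLinearMap := hker (htop ▸ Submodule.mem_top)
      exact this
    have := hx0 x
    simp only [hg, ContinuousLinearMap.comp_apply, innerSL_apply_apply] at this
    rw [← inner_conj_symm, this, map_zero]
  have := card_orthonormal_le T (fun i : w => (i : E)) hdense s hs
  refine this.trans ?_
  calc Cardinal.mk w * Cardinal.aleph0
      ≤ max (max (Cardinal.mk w) Cardinal.aleph0) Cardinal.aleph0 := Cardinal.mul_le_max _ _
    _ = max (Cardinal.mk w) Cardinal.aleph0 := by rw [max_assoc, max_self]
    _ ≤ max (hdim ℂ E) Cardinal.aleph0 := max_le_max hw le_rfl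

lemma hdim_eq_finrank (E : Type u) [NormedAddCommGroup E] [InnerProductSpace ℂ E]
    [FiniteDimensional ℂ E] : hdim ℂ E = (Module.finrank ℂ E : Cardinal) := by
  apply le_antisymm
  · refine hdim_le fun s hs => ?_
    have hli : LinearIndependent ℂ (fun x : s => (x : E)) := hs.linearIndependent
    have := hli.cardinal_le_rank
    rwa [← Module.finrank_eq_rank] at this
  · set b := stdOrthonormalBasis ℂ E
    have hinj : Function.Injective b := b.orthonormal.linearIndependent.injective
    have hr : Orthonormal ℂ (fun x : Set.range b => (x : E)) := b.orthonormal.toSubtypeRange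
    have hle := le_hdim hr
    have hmk : Cardinal.mk (Set.range ⇑b) = (Module.finrank ℂ E : Cardinal) := by
      have := Cardinal.mk_range_eq_of_injective hinj
      rw [Cardinal.mk_fin] at this
      simpa using this
    rwa [hmk] at hle

lemma finiteDimensional_of_hdim_lt_aleph0 [CompleteSpace E]
    (h : hdim ℂ E < Cardinal.aleph0) : FiniteDimensional ℂ E := by
  obtain ⟨w, b, hb⟩ := exists_hilbertBasis ℂ E
  have hwo : Orthonormal ℂ (fun x : w => (x : E)) := by rw [← hb]; exact b.orthonormal
  have hw : Cardinal.mk w < Cardinal.aleph0 := lt_of_le_of_lt (le_hdim hwo) h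
  have hwf : w.Finite := by
    rwa [Cardinal.lt_aleph0_iff_set_finite] at hw
  have hspan : (Submodule.span ℂ w).topologicalClosure = ⊤ := by
    have := b.dense_span
    rw [hb] at this
    simpa [Subtype.range_coe] using this
  have hfd : FiniteDimensional ℂ (Submodule.span ℂ w) :=
    FiniteDimensional.span_of_finite ℂ hwf
  have hclosed : (Submodule.span ℂ w).topologicalClosure = Submodule.span ℂ w :=
    IsClosed.submodule_topologicalClosure_eq (Submodule.span ℂ w).closed_of_finiteDimensional
  rw [hclosed] at hspan
  rw [hspan] at hfd
  exact Module.Finite.equiv Submodule.topEquiv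

lemma hdim_eq_of_inj_codense_fd [CompleteSpace E] [CompleteSpace F] [FiniteDimensional ℂ E]
    (T : E →L[ℂ] F) (hinj : Function.Injective T)
    (hd : ∀ y : F, (∀ x : E, ⟪T x, y⟫_ℂ = 0) → y = 0) : hdim ℂ E = hdim ℂ F := by
  have horth : (LinearMap.range T.toLinearMap)ᗮ = ⊥ := by
    rw [Submodule.eq_bot_iff]
    intro y hy
    refine hd y fun x => ?_
    exact hy (T x) (LinearMap.mem_range_self _ x)
  haveI : FiniteDimensional ℂ (LinearMap.range T.toLinearMap) := by
    have : FiniteDimensional ℂ (LinearMap.range T.toLinearMap) :=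
      Module.Finite.range T.toLinearMap
    exact this
  have hrange : LinearMap.range T.toLinearMap = ⊤ := by
    have := Submodule.orthogonal_orthogonal (LinearMap.range T.toLinearMap)
    rw [horth, Submodule.bot_orthogonal_eq_top] at this
    exact this.symm
  have hsurj : Function.Surjective T := by
    exact LinearMap.range_eq_top.mp hrange
  let e : E ≃ₗ[ℂ] F := LinearEquiv.ofBijective (T : E →ₗ[ℂ] F) ⟨hinj, hsurj⟩
  haveI : FiniteDimensional ℂ F := Module.Finite.equiv e
  rw [hdim_eq_finrank, hdim_eq_finrank, e.finrank_eq]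

lemma hdim_eq_of_inj_codense [CompleteSpace E] [CompleteSpace F] (T : E →L[ℂ] F)
    (hinj : Function.Injective T)
    (hd : ∀ y : F, (∀ x : E, ⟪T x, y⟫_ℂ = 0) → y = 0) : hdim ℂ E = hdim ℂ F := by
  set T' := ContinuousLinearMap.adjoint T with hT'
  have hadj : ∀ (x : E) (y : F), ⟪T' y, x⟫_ℂ = ⟪y, T x⟫_ℂ := fun x y =>
    ContinuousLinearMap.adjoint_inner_left T x y
  have hinj' : Function.Injective T' := by
    have hker : ∀ y : F, T' y = 0 → y = 0 := by
      intro y hy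
      refine hd y fun x => ?_
      have h1 : ⟪T' y, x⟫_ℂ = 0 := by rw [hy]; simp
      rw [hadj] at h1
      rwa [← inner_conj_symm, map_eq_zero] at h1
    intro a b hab
    have := hker (a - b) (by rw [map_sub, hab, sub_self])
    exact sub_eq_zero.mp this
  have hd' : ∀ x : E, (∀ y : F, ⟪T' y, x⟫_ℂ = 0) → x = 0 := by
    intro x hx
    have := hx (T x)
    rw [hadj] at this
    have hTx : T x = 0 := by
      rwa [inner_self_eq_zero] at this
    have : T x = T 0 := by rw [hTx, map_zero]
    exact hinj this
  rcases lt_or_ge (hdim ℂ E) Cardinal.aleph0 with hE | hE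
  · haveI := finiteDimensional_of_hdim_lt_aleph0 hE
    exact hdim_eq_of_inj_codense_fd T hinj hd
  · rcases lt_or_ge (hdim ℂ F) Cardinal.aleph0 with hF | hF
    · haveI := finiteDimensional_of_hdim_lt_aleph0 hF
      exact (hdim_eq_of_inj_codense_fd T' hinj' hd').symm
    · have h1 : hdim ℂ F ≤ max (hdim ℂ E) Cardinal.aleph0 := hdim_le_max_of_codense T hd
      have h2 : hdim ℂ E ≤ max (hdim ℂ F) Cardinal.aleph0 := hdim_le_max_of_codense T' hd'
      rw [max_eq_left hE] at h1
      rw [max_eq_left hF] at h2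
      exact le_antisymm h2 h1

end Aux

/-- If `W` is a closed subspace of `H` with `W ∩ ker A = {0}` and `V ⊆ W` is a closed
subspace on which `A` is bounded below, then
`dim (W ⊖ V) = dim (closure (A(W)) ⊖ A(V))`. -/
theorem hdim_relative_complement_eq
    {H K : Type u} [NormedAddCommGroup H] [InnerProductSpace ℂ H] [CompleteSpace H]
    [NormedAddCommGroup K] [InnerProductSpace ℂ K] [CompleteSpace K]
    (A : H →L[ℂ] K)
    (W : Submodule ℂ H) (hW : IsClosed (W : Set H))
    (hker : W ⊓ LinearMap.ker A.toLinearMap = ⊥)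
    (V : Submodule ℂ H) (hVW : V ≤ W) (hVclosed : IsClosed (V : Set H))
    (c : ℝ) (hc : 0 < c) (hbb : ∀ x ∈ V, c * ‖x‖ ≤ ‖A x‖) :
    hdim ℂ ↥(Vᗮ ⊓ W)
      = hdim ℂ ↥((Submodule.map A.toLinearMap V)ᗮ ⊓
          (Submodule.map A.toLinearMap W).topologicalClosure) := by
  classical
  set N : Submodule ℂ K := Submodule.map A.toLinearMap V with hN
  set M : Submodule ℂ K := Nᗮ ⊓ (Submodule.map A.toLinearMap W).topologicalClosure with hM
  set E₀ : Submodule ℂ H := Vᗮ ⊓ W with hE₀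
  -- completeness instances
  haveI hVc : CompleteSpace V := hVclosed.completeSpace_coe
  have hE₀closed : IsClosed (E₀ : Set H) := by
    have : (E₀ : Set H) = (Vᗮ : Set H) ∩ (W : Set H) := rfl
    rw [this]
    exact V.isClosed_orthogonal.inter hW
  haveI : CompleteSpace E₀ := hE₀closed.completeSpace_coe
  have hMclosed : IsClosed (M : Set K) := by
    have : (M : Set K) = (Nᗮ : Set K)
        ∩ ((Submodule.map A.toLinearMap W).topologicalClosure : Set K) := rfl
    rw [this]
    exact N.isClosed_orthogonal.inter
      (Submodule.map A.toLinearMap W).isClosed_topologicalClosure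
  haveI : CompleteSpace M := hMclosed.completeSpace_coe
  -- N = A(V) is closed since A is bounded below on V
  have hNclosed : IsClosed (N : Set K) := by
    set f : V →L[ℂ] K := A.comp V.subtypeL with hf
    have hanti : AntilipschitzWith (⟨c, hc.le⟩ : NNReal)⁻¹ f := by
      apply ContinuousLinearMap.antilipschitz_of_bound
      intro x
      have hb := hbb x x.2
      change ‖x‖ ≤ c⁻¹ * ‖f x‖; rw [le_inv_mul_iff₀ hc]
      simpa [hf] using hb
    have hcl := ContinuousLinearMap.closed_range_of_antilipschitz hanti
    have hrange : (LinearMap.range f.toLinearMap : Set K) = (N : Set K) := by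
      ext y
      simp only [SetLike.mem_coe, LinearMap.mem_range, hN, Submodule.mem_map]
      constructor
      · rintro ⟨x, rfl⟩
        exact ⟨x, x.2, rfl⟩
      · rintro ⟨x, hx, rfl⟩
        exact ⟨⟨x, hx⟩, rfl⟩
    have := (LinearMap.range f.toLinearMap).isClosed_topologicalClosure
    rw [hcl] at this
    rwa [hrange] at this
  haveI : CompleteSpace N := hNclosed.completeSpace_coe
  -- the comparison operator
  set T : E₀ →L[ℂ] M := (Submodule.orthogonalProjectionOnto M).comp (A.comp E₀.subtypeL) with hT
  have hTapp : ∀ x : E₀, T x = Submodule.orthogonalProjectionOnto M (A (x : H)) := fun x => rfl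
  -- injectivity
  have hinj : Function.Injective T := by
    have hker0 : ∀ x : E₀, T x = 0 → x = 0 := by
      intro x hx
      have hAx : A (x : H) ∈ Mᗮ := by
        rw [← Submodule.orthogonalProjectionOnto_eq_zero_iff (K := M)]
        rw [← hTapp x]; exact hx
      set p : K := (Submodule.orthogonalProjectionOnto N (A (x : H)) : K) with hp
      set q : K := A (x : H) - p with hq
      have hqN : q ∈ Nᗮ := Submodule.sub_starProjection_mem_orthogonal (K := N) _
      have hAxW : A (x : H) ∈ Submodule.map A.toLinearMap W :=
        ⟨(x : H), x.2.2, rfl⟩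
      have hpW : p ∈ (Submodule.map A.toLinearMap W).topologicalClosure := by
        apply Submodule.le_topologicalClosure
        exact Submodule.map_mono hVW (Submodule.coe_mem _)
      have hqW : q ∈ (Submodule.map A.toLinearMap W).topologicalClosure := by
        apply sub_mem _ hpW
        exact Submodule.le_topologicalClosure _ hAxW
      have hqM : q ∈ M := Submodule.mem_inf.2 ⟨hqN, hqW⟩
      have h1 : ⟪q, A (x : H)⟫_ℂ = 0 := (Submodule.mem_orthogonal M _).1 hAx q hqM
      have h2 : ⟪q, p⟫_ℂ = 0 := by
        have := (Submodule.mem_orthogonal N q).1 hqN p (Submodule.coe_mem _)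
        rwa [← inner_conj_symm, map_eq_zero] at this
      have hq0 : q = 0 := by
        have : ⟪q, q⟫_ℂ = 0 := by
          rw [hq, inner_sub_right, h1, h2, sub_zero]
        rwa [inner_self_eq_zero] at this
      have hAxN : A (x : H) ∈ N := by
        have : A (x : H) = p := by rw [← sub_eq_zero]; exact hq0
        rw [this]; exact Submodule.coe_mem _
      obtain ⟨v, hv, hvA⟩ := hAxN
      have hxv : (x : H) - v ∈ W ⊓ LinearMap.ker A.toLinearMap := by
        refine Submodule.mem_inf.2 ⟨sub_mem x.2.2 (hVW hv), ?_⟩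
        rw [LinearMap.mem_ker, ContinuousLinearMap.coe_coe]
        have : A ((x : H) - v) = A (x : H) - A v := map_sub A _ _
        rw [this, ← hvA]
        simp
      rw [hker] at hxv
      have hxveq : (x : H) = v := by
        have := (Submodule.mem_bot ℂ).1 hxv
        rwa [sub_eq_zero] at this
      have hxV : (x : H) ∈ V := hxveq ▸ hv
      have hx0 : ⟪(x : H), (x : H)⟫_ℂ = 0 :=
        (Submodule.mem_orthogonal V _).1 x.2.1 _ hxV
      have : (x : H) = 0 := inner_self_eq_zero.mp hx0
      exact Subtype.ext this
    intro a b hab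
    have := hker0 (a - b) (by rw [map_sub, hab, sub_self])
    exact sub_eq_zero.mp this
  -- codensity
  have hd : ∀ y : M, (∀ x : E₀, ⟪T x, y⟫_ℂ = 0) → y = 0 := by
    intro y hy
    have hAy : ∀ x : E₀, ⟪A (x : H), (y : K)⟫_ℂ = 0 := by
      intro x
      have := hy x
      rw [hTapp x] at this
      rwa [Submodule.inner_orthogonalProjectionOnto_eq_of_mem_right] at this
    have hVy : ∀ v ∈ V, ⟪A v, (y : K)⟫_ℂ = 0 := by
      intro v hv
      have hyN : (y : K) ∈ Nᗮ := y.2.1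
      exact (Submodule.mem_orthogonal N _).1 hyN _ ⟨v, hv, rfl⟩
    have hWy : ∀ w ∈ W, ⟪A w, (y : K)⟫_ℂ = 0 := by
      intro w hw
      set pv : H := (Submodule.orthogonalProjectionOnto V w : H) with hpv
      have hpvV : pv ∈ V := Submodule.coe_mem _
      have hsubV : w - pv ∈ Vᗮ := Submodule.sub_starProjection_mem_orthogonal (K := V) w
      have hsubW : w - pv ∈ W := sub_mem hw (hVW hpvV)
      have hx : w - pv ∈ E₀ := Submodule.mem_inf.2 ⟨hsubV, hsubW⟩
      have h1 := hAy ⟨w - pv, hx⟩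
      have h2 := hVy pv hpvV
      have haw : A w = A pv + A (w - pv) := by rw [← map_add]; congr 1; abel
      rw [haw, inner_add_left, h2, zero_add]
      exact h1
    have hyW : (y : K) ∈ (Submodule.map A.toLinearMap W)ᗮ := by
      rw [Submodule.mem_orthogonal]
      rintro _ ⟨w, hw, rfl⟩
      exact hWy w hw
    -- y is in the closure of A(W) and orthogonal to A(W), hence 0
    have hyC : (y : K) ∈ (Submodule.map A.toLinearMap W).topologicalClosure := y.2.2
    have hy0 : (y : K) = 0 := by
      set g : K →L[ℂ] ℂ := innerSL ℂ (y : K) with hg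
      have hkerg : (Submodule.map A.toLinearMap W).topologicalClosure ≤ LinearMap.ker g.toLinearMap := by
        apply Submodule.topologicalClosure_minimal
        · intro z hz
          simp only [SetLike.mem_coe, LinearMap.mem_ker, hg, innerSL_apply_apply]
          have := (Submodule.mem_orthogonal _ _).1 hyW z hz
          rwa [← inner_conj_symm, map_eq_zero] at this
        · exact ContinuousLinearMap.isClosed_ker g
      have := hkerg hyC
      simp only [LinearMap.mem_ker, hg, innerSL_apply_apply] at this
      exact inner_self_eq_zero.mp this
    exact Subtype.ext hy0
  exact hdim_eq_of_inj_codense T hinj hd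
end

section
/- Let H be a separable infinite-dimensional Hilbert space and A ∈ B(H,K) with nonclosed range. Then ι_i(A) = ι_f(A) = ℵ₀, i.e., dim ker(A) + IC(R(A)) = dim(K ⊖ closure R(A)) + IC(R(A)) = ℵ₀, where K is separable. -/
/-- `IC(R(A))`: the index of incompleteness of the range of `A`. -/
noncomputable def rangeIC {H K : Type u} [NormedAddCommGroup H] [InnerProductSpace ℂ H]
    [CompleteSpace H] [NormedAddCommGroup K] [InnerProductSpace ℂ K] [CompleteSpace K]
    (A : H →L[ℂ] K) : Cardinal :=
  ⨅ V : {V : Submodule ℂ K // V ≤ LinearMap.range (A : H →ₗ[ℂ] K) ∧ IsComplete (V : Set K)},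
    hdim ℂ ↥((V : Submodule ℂ K)ᗮ ⊓ (LinearMap.range (A : H →ₗ[ℂ] K)).topologicalClosure)

lemma hdim_le_aleph0 (E : Type*) [NormedAddCommGroup E] [InnerProductSpace ℂ E]
    [TopologicalSpace.SeparableSpace E] : hdim ℂ E ≤ Cardinal.aleph0 := by
  refine ciSup_le' fun s => ?_
  obtain ⟨s, hs⟩ := s
  rw [Cardinal.mk_le_aleph0_iff]
  refine Pairwise.countable_of_isOpen_disjoint
    (s := fun x : s => Metric.ball (x : E) 2⁻¹) ?_
    (fun i => Metric.isOpen_ball) (fun i => Metric.nonempty_ball.2 (by norm_num))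
  intro i j hij
  have hd : (1 : ℝ) ≤ dist (i : E) (j : E) := by
    have h1 : ‖(i : E)‖ = 1 := hs.1 i
    have h2 : ‖(j : E)‖ = 1 := hs.1 j
    have h0 : (inner ℂ (i : E) (j : E)) = 0 := hs.2 hij
    have hsq : ‖(i : E) - (j : E)‖ ^ 2 = 2 := by
      rw [@norm_sub_sq ℂ, h0, h1, h2]; norm_num
    have hnn : (0 : ℝ) ≤ ‖(i : E) - (j : E)‖ := norm_nonneg _
    rw [dist_eq_norm]
    nlinarith
  rw [Function.onFun, Set.disjoint_left]
  intro z hzi hzj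
  have : dist (i : E) (j : E) < 1 := by
    calc dist (i : E) (j : E) ≤ dist (i : E) z + dist z (j : E) := dist_triangle _ _ _
    _ < 2⁻¹ + 2⁻¹ := by
        have := Metric.mem_ball.1 hzi
        have := Metric.mem_ball.1 hzj
        rw [dist_comm (i : E) z]; linarith
    _ = 1 := by norm_num
  linarith

lemma aleph0_le_hdim (E : Type*) [NormedAddCommGroup E] [InnerProductSpace ℂ E]
    (h : ¬ FiniteDimensional ℂ E) : Cardinal.aleph0 ≤ hdim ℂ E := by
  classical
  let b := Module.Basis.ofVectorSpace ℂ E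
  haveI : Infinite (Module.Basis.ofVectorSpaceIndex ℂ E) := by
    by_contra hfin
    rw [not_infinite_iff_finite] at hfin
    exact h (Module.Finite.of_basis b)
  let emb := Infinite.natEmbedding (Module.Basis.ofVectorSpaceIndex ℂ E)
  have li : LinearIndependent ℂ (⇑b ∘ ⇑emb) :=
    b.linearIndependent.comp emb emb.injective
  set g : ℕ → E := InnerProductSpace.gramSchmidtNormed ℂ (⇑b ∘ ⇑emb) with hgdef
  have hg : Orthonormal ℂ g := InnerProductSpace.gramSchmidtNormed_orthonormal li
  have ginj : Function.Injective g := hg.linearIndependent.injective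
  have hmk : Cardinal.mk (Set.range g) = Cardinal.aleph0 := by
    have := Cardinal.mk_range_eq_of_injective ginj
    simpa using this
  calc Cardinal.aleph0 = Cardinal.mk (Set.range g) := hmk.symm
  _ ≤ hdim ℂ E := le_ciSup (Cardinal.bddAbove_range _)
      (⟨Set.range g, hg.toSubtypeRange⟩ :
        {s : Set E // Orthonormal ℂ (fun x : s => (x : E))})

/-- If `H` is a separable infinite-dimensional Hilbert space, `K` is a separable Hilbert
space, and `A : H → K` is a bounded operator with nonclosed range, then
`ι_i(A) = ι_f(A) = ℵ₀`, i.e. `dim ker A + IC(R(A)) = dim (K ⊖ closure R(A)) + IC(R(A)) = ℵ₀`. -/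
theorem iota_eq_aleph0_of_separable_nonclosed_range
    {H K : Type u} [NormedAddCommGroup H] [InnerProductSpace ℂ H] [CompleteSpace H]
    [NormedAddCommGroup K] [InnerProductSpace ℂ K] [CompleteSpace K]
    [TopologicalSpace.SeparableSpace H] [TopologicalSpace.SeparableSpace K]
    (hinf : ¬ FiniteDimensional ℂ H)
    (A : H →L[ℂ] K) (hrange : ¬ IsClosed (LinearMap.range (A : H →ₗ[ℂ] K) : Set K)) :
    hdim ℂ ↥(LinearMap.ker (A : H →ₗ[ℂ] K)) + rangeIC A = Cardinal.aleph0 ∧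
    hdim ℂ ↥((LinearMap.range (A : H →ₗ[ℂ] K)).topologicalClosure)ᗮ + rangeIC A = Cardinal.aleph0 := by
  haveI : SecondCountableTopology H := UniformSpace.secondCountable_of_separable H
  haveI : SecondCountableTopology K := UniformSpace.secondCountable_of_separable K
  set M := (LinearMap.range (A : H →ₗ[ℂ] K)).topologicalClosure with hM
  have hRM : LinearMap.range (A : H →ₗ[ℂ] K) ≤ M := Submodule.le_topologicalClosure _
  -- key: for every admissible V, the complement piece is infinite dimensional
  have key : ∀ V : Submodule ℂ K, V ≤ LinearMap.range (A : H →ₗ[ℂ] K) → IsComplete (V : Set K) →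
      ¬ FiniteDimensional ℂ ↥(Vᗮ ⊓ M) := by
    intro V hV hc hfd
    haveI : CompleteSpace V := hc.completeSpace_coe
    have hVM : V ≤ M := hV.trans hRM
    have hsup : V ⊔ Vᗮ ⊓ M = M := Submodule.sup_orthogonal_inf_of_hasOrthogonalProjection hVM
    set F' : Submodule ℂ K := LinearMap.range (A : H →ₗ[ℂ] K) ⊓ (Vᗮ ⊓ M) with hF'
    haveI : FiniteDimensional ℂ ↥F' :=
      Submodule.finiteDimensional_of_le (inf_le_right : F' ≤ Vᗮ ⊓ M)
    have hdecomp : LinearMap.range (A : H →ₗ[ℂ] K) = V ⊔ F' := by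
      have h1 : LinearMap.range (A : H →ₗ[ℂ] K) = LinearMap.range (A : H →ₗ[ℂ] K) ⊓ M := (inf_eq_left.2 hRM).symm
      have h2 : LinearMap.range (A : H →ₗ[ℂ] K) ⊓ (V ⊔ Vᗮ ⊓ M) = V ⊔ F' := by
        rw [inf_comm, sup_inf_assoc_of_le _ hV, hF', inf_comm]
      rw [h1, ← hsup, h2]
    -- the projection onto Vᗮ along V
    set Q : K →L[ℂ] K :=
      ContinuousLinearMap.id ℂ K - V.subtypeL.comp (V.orthogonalProjectionOnto) with hQ
    have hQapply : ∀ x : K, Q x = x - (V.orthogonalProjectionOnto x : K) := fun x => rfl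
    have hset : (LinearMap.range (A : H →ₗ[ℂ] K) : Set K) = Q ⁻¹' (F' : Set K) := by
      ext x
      simp only [Set.mem_preimage, SetLike.mem_coe]
      constructor
      · intro hx
        rw [hdecomp] at hx
        obtain ⟨v, hv, f, hf, rfl⟩ := Submodule.mem_sup.1 hx
        have hfo : f ∈ Vᗮ := hf.2.1
        have : Q (v + f) = f := by
          rw [hQapply, map_add, Submodule.coe_add,
            Submodule.orthogonalProjectionOnto_mem_subspace_eq_self ⟨v, hv⟩,
            Submodule.orthogonalProjectionOnto_apply_of_mem_orthogonal hfo,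
            Submodule.coe_zero]
          abel
        rw [this]; exact hf
      · intro hx
        have h1 : (V.orthogonalProjectionOnto x : K) ∈ LinearMap.range (A : H →ₗ[ℂ] K) :=
          hV (V.orthogonalProjectionOnto x).2
        have h2 : x - (V.orthogonalProjectionOnto x : K) ∈ LinearMap.range (A : H →ₗ[ℂ] K) := by
          rw [← hQapply]; exact hx.1
        have := Submodule.add_mem _ h1 h2
        simpa using this
    have : IsClosed (LinearMap.range (A : H →ₗ[ℂ] K) : Set K) := by
      rw [hset]
      exact (F'.closed_of_finiteDimensional).preimage Q.continuous
    exact hrange this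
  -- range IC equals ℵ₀
  have hIC : rangeIC A = Cardinal.aleph0 := by
    haveI : Nonempty {V : Submodule ℂ K // V ≤ LinearMap.range (A : H →ₗ[ℂ] K) ∧ IsComplete (V : Set K)} := by
      refine ⟨⟨⊥, bot_le, ?_⟩⟩
      rw [Submodule.bot_coe]
      exact isClosed_singleton.isComplete
    have hval : ∀ V : {V : Submodule ℂ K // V ≤ LinearMap.range (A : H →ₗ[ℂ] K) ∧ IsComplete (V : Set K)},
        hdim ℂ ↥((V : Submodule ℂ K)ᗮ ⊓ M) = Cardinal.aleph0 := by
      intro V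
      refine le_antisymm (hdim_le_aleph0 _) (aleph0_le_hdim _ ?_)
      exact key V V.2.1 V.2.2
    rw [rangeIC, iInf_congr hval]
    exact ciInf_const
  have hfin : ∀ a : Cardinal, a ≤ Cardinal.aleph0 → a + rangeIC A = Cardinal.aleph0 := by
    intro a ha
    rw [hIC]
    exact Cardinal.add_eq_right le_rfl ha
  exact ⟨hfin _ (hdim_le_aleph0 _), hfin _ (hdim_le_aleph0 _)⟩
end

section
/- For a pre-Hilbert space E: if E is complete then IC(E) = 0, and if E is not complete then IC(E) is an infinite cardinal, where IC(E) = min{dim(Ē ⊖ V) : V a complete subspace of E} and Ē is the completion of E. -/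
lemma hdim_eq_zero_of_subsingleton {H : Type*} [NormedAddCommGroup H]
    [InnerProductSpace ℂ H] [Subsingleton H] : hdim ℂ H = 0 := by
  refine le_antisymm (ciSup_le' fun s => ?_) (Cardinal.zero_le _)
  have : IsEmpty s.1 := by
    refine ⟨fun e => ?_⟩
    exact s.2.ne_zero e (Subsingleton.eq_zero (e : H))
  simp [Cardinal.mk_eq_zero s.1]

lemma hdim_ge_aleph0_of_not_finiteDimensional {H : Type*} [NormedAddCommGroup H]
    [InnerProductSpace ℂ H] [CompleteSpace H] (h : ¬ FiniteDimensional ℂ H) :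
    Cardinal.aleph0 ≤ hdim ℂ H := by
  obtain ⟨w, b, hb⟩ := exists_hilbertBasis ℂ H
  have hrange : Set.range (⇑b) = w := by rw [hb]; exact Subtype.range_coe
  have hw : w.Infinite := by
    intro hfin
    apply h
    have hfd : FiniteDimensional ℂ ↥(Submodule.span ℂ w) :=
      FiniteDimensional.span_of_finite ℂ hfin
    have hclosed : IsClosed ((Submodule.span ℂ w : Submodule ℂ H) : Set H) :=
      (Submodule.span ℂ w).closed_of_finiteDimensional
    have htop : Submodule.span ℂ w = ⊤ := by
      have hd := b.dense_span
      rw [hrange] at hd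
      rwa [hclosed.submodule_topologicalClosure_eq] at hd
    rw [htop] at hfd
    exact (Submodule.topEquiv : (⊤ : Submodule ℂ H) ≃ₗ[ℂ] H).finiteDimensional
  have horth : Orthonormal ℂ (fun x : w => (x : H)) := by
    have := b.orthonormal
    rwa [hb] at this
  haveI := hw.to_subtype
  calc Cardinal.aleph0 ≤ Cardinal.mk w := Cardinal.aleph0_le_mk _
    _ ≤ hdim ℂ H := le_ciSup (f := fun s : {s : Set H // Orthonormal ℂ (fun x : s => (x : H))} =>
      Cardinal.mk s.1) (Cardinal.bddAbove_range _) ⟨w, horth⟩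

/-- For a pre-Hilbert space `E` (realized as a dense subspace of a Hilbert space `F`, its
completion), the index of incompleteness `IC(E) = min {dim (Ē ⊖ V) : V complete subspace
of E}` is `0` if `E` is complete, and an infinite cardinal otherwise. -/
theorem IC_eq_zero_iff_complete
    {F : Type u} [NormedAddCommGroup F] [InnerProductSpace ℂ F] [CompleteSpace F]
    (E : Submodule ℂ F) (hdense : Dense (E : Set F)) :
    (IsComplete (E : Set F) →
      (⨅ V : {V : Submodule ℂ F // V ≤ E ∧ IsComplete (V : Set F)},
        hdim ℂ ↥((V : Submodule ℂ F)ᗮ)) = 0) ∧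
    (¬ IsComplete (E : Set F) →
      Cardinal.aleph0 ≤
        ⨅ V : {V : Submodule ℂ F // V ≤ E ∧ IsComplete (V : Set F)},
          hdim ℂ ↥((V : Submodule ℂ F)ᗮ)) := by
  constructor
  · intro hE
    have hEtop : E = ⊤ := by
      apply SetLike.coe_injective
      rw [Submodule.top_coe, ← hE.isClosed.closure_eq]
      exact hdense.closure_eq
    have hsub : Subsingleton ↥(Eᗮ) := by
      rw [hEtop, Submodule.top_orthogonal_eq_bot]
      infer_instance
    have h0 : hdim ℂ ↥(Eᗮ) = 0 := hdim_eq_zero_of_subsingleton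
    have hle := ciInf_le (f := fun V : {V : Submodule ℂ F // V ≤ E ∧ IsComplete (V : Set F)} =>
      hdim ℂ ↥((V : Submodule ℂ F)ᗮ)) (OrderBot.bddBelow _) ⟨E, le_rfl, hE⟩
    exact le_antisymm (hle.trans h0.le) (Cardinal.zero_le _)
  · intro hE
    have : Nonempty {V : Submodule ℂ F // V ≤ E ∧ IsComplete (V : Set F)} :=
      ⟨⟨⊥, bot_le, by rw [Submodule.bot_coe]; exact isClosed_singleton.isComplete⟩⟩
    refine le_ciInf fun ⟨V, hVE, hVc⟩ => ?_
    haveI : CompleteSpace ↥V := hVc.completeSpace_coe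
    haveI : CompleteSpace ↥(Vᗮ) := (Submodule.isClosed_orthogonal V).completeSpace_coe
    refine hdim_ge_aleph0_of_not_finiteDimensional fun hfd => ?_
    -- derive a contradiction: E would be all of F
    apply hE
    have hWfd : FiniteDimensional ℂ ↥(E ⊓ Vᗮ : Submodule ℂ F) :=
      Submodule.finiteDimensional_of_le inf_le_right
    have hWclosed : IsClosed ((E ⊓ Vᗮ : Submodule ℂ F) : Set F) :=
      (E ⊓ Vᗮ).closed_of_finiteDimensional
    set f : F →L[ℂ] F := ContinuousLinearMap.id ℂ F - V.subtypeL.comp (V.orthogonalProjectionOnto)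
      with hf
    have hfE : ∀ x ∈ (E : Set F), f x ∈ ((E ⊓ Vᗮ : Submodule ℂ F) : Set F) := by
      intro x hx
      refine Submodule.mem_inf.2 ⟨?_, ?_⟩
      · exact Submodule.sub_mem E hx (hVE (V.orthogonalProjectionOnto x).2)
      · exact Submodule.sub_starProjection_mem_orthogonal x
    have hVperp_le : Vᗮ ≤ E := by
      intro y hy
      have hfy : f y = y := by
        simp [hf, Submodule.orthogonalProjectionOnto_apply_of_mem_orthogonal hy]
      have hmem : f y ∈ closure ((E ⊓ Vᗮ : Submodule ℂ F) : Set F) :=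
        map_mem_closure f.continuous (hdense y) hfE
      rw [hWclosed.closure_eq, hfy] at hmem
      exact hmem.1
    have hEtop : E = ⊤ := by
      rw [eq_top_iff, ← Submodule.sup_orthogonal_of_hasOrthogonalProjection (K := V)]
      exact sup_le hVE hVperp_le
    rw [hEtop, Submodule.top_coe]
    exact complete_univ
end

section
/- Let A, B be nonnegative bounded operators on a Hilbert space H. Then B ≤ c·A for some scalar c > 0 if and only if there exists a nonnegative bounded operator C on H with B = √A C √A. -/
set_option synthInstance.maxHeartbeats 1000000
set_option maxHeartbeats 1000000

open ContinuousLinearMap RCLike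
open scoped ComplexInnerProductSpace NNReal

section Aux

variable {H : Type*} [NormedAddCommGroup H] [InnerProductSpace ℂ H] [CompleteSpace H]

private lemma inner_self_re_eq {Q R : H →L[ℂ] H} (hR : IsSelfAdjoint R)
    (hQR : R ∘L R = Q) (x : H) : re ⟪Q x, x⟫ = ‖R x‖ ^ 2 := by
  have h : ⟪Q x, x⟫ = ⟪R x, R x⟫ := by
    rw [← hQR]
    exact hR.isSymmetric (R x) x
  rw [h, inner_self_eq_norm_sq]

end Aux

/-- For nonnegative bounded operators `A, B` on a Hilbert space, `B ≤ c·A` for some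
scalar `c > 0` iff `B = √A C √A` for some nonnegative bounded operator `C`. Here `S`
denotes the (unique) positive square root `√A` of `A`. -/
theorem le_smul_iff_sqrt_conj
    {H : Type*} [NormedAddCommGroup H] [InnerProductSpace ℂ H] [CompleteSpace H]
    (A B S : H →L[ℂ] H) (hA : A.IsPositive) (hB : B.IsPositive)
    (hS : S.IsPositive) (hS2 : S ∘L S = A) :
    (∃ c : ℝ, 0 < c ∧ (c • A - B).IsPositive) ↔
      (∃ C : H →L[ℂ] H, C.IsPositive ∧ B = S ∘L C ∘L S) := by
  have hSadj : ContinuousLinearMap.adjoint S = S := isSelfAdjoint_iff'.mp hS.isSelfAdjoint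
  have hAx : ∀ x : H, re ⟪A x, x⟫ = ‖S x‖ ^ 2 := inner_self_re_eq hS.isSelfAdjoint hS2
  constructor
  · rintro ⟨c, hc, hpos⟩
    -- the square root of B
    have hB' : (0 : H →L[ℂ] H) ≤ B := (nonneg_iff_isPositive B).mpr hB
    set R : H →L[ℂ] H := CFC.sqrt B with hRdef
    have hR' : (0 : H →L[ℂ] H) ≤ R := CFC.sqrt_nonneg B
    have hRsa : IsSelfAdjoint R := ((nonneg_iff_isPositive R).mp hR').isSelfAdjoint
    have hRadj : ContinuousLinearMap.adjoint R = R := isSelfAdjoint_iff'.mp hRsa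
    have hRR : R ∘L R = B := by
      rw [← ContinuousLinearMap.mul_def]; exact CFC.sqrt_mul_sqrt_self B hB'
    have hBx : ∀ x : H, re ⟪B x, x⟫ = ‖R x‖ ^ 2 := inner_self_re_eq hRsa hRR
    -- the key estimate
    have key : ∀ x : H, ‖R x‖ ≤ Real.sqrt c * ‖S x‖ := by
      intro x
      have h0 := hpos.2 x
      rw [ContinuousLinearMap.reApplyInnerSelf_apply] at h0
      have hx : ((c • A - B) x) = (c : ℂ) • A x - B x := by
        simp [ContinuousLinearMap.sub_apply]
      rw [hx, inner_sub_left, map_sub, inner_smul_left] at h0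
      have h1 : ‖R x‖ ^ 2 ≤ c * ‖S x‖ ^ 2 := by
        have := sub_nonneg.mp h0
        rw [hBx x] at this
        calc ‖R x‖ ^ 2 ≤ re ((starRingEnd ℂ) (c : ℂ) * ⟪A x, x⟫) := this
        _ = c * re ⟪A x, x⟫ := by
            simp [Complex.conj_ofReal]
        _ = c * ‖S x‖ ^ 2 := by rw [hAx x]
      calc ‖R x‖ = Real.sqrt (‖R x‖ ^ 2) := (Real.sqrt_sq (norm_nonneg _)).symm
      _ ≤ Real.sqrt (c * ‖S x‖ ^ 2) := Real.sqrt_le_sqrt h1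
      _ = Real.sqrt c * ‖S x‖ := by
          rw [Real.sqrt_mul hc.le, Real.sqrt_sq (norm_nonneg _)]
    -- build the operator T with T ∘ S = R
    set Sl : H →ₗ[ℂ] H := (S : H →ₗ[ℂ] H) with hSl
    have hker : LinearMap.ker Sl ≤ LinearMap.ker (R : H →ₗ[ℂ] H) := by
      intro x hx
      have hx' : S x = 0 := hx
      have : ‖R x‖ ≤ 0 := by simpa [hx'] using key x
      simpa using le_antisymm this (norm_nonneg _)
    set T₀ : LinearMap.range Sl →ₗ[ℂ] H :=
      ((LinearMap.ker Sl).liftQ (R : H →ₗ[ℂ] H) hker).comp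
        Sl.quotKerEquivRange.symm.toLinearMap with hT₀
    have hT₀S : ∀ (x : H) (h : Sl x ∈ LinearMap.range Sl), T₀ ⟨Sl x, h⟩ = R x := by
      intro x h
      rw [hT₀]
      simp only [LinearMap.comp_apply, LinearEquiv.coe_coe]
      rw [LinearMap.quotKerEquivRange_symm_apply_image Sl x h]
      simp [Submodule.liftQ_apply]
    have hT₀bound : ∀ y : LinearMap.range Sl, ‖T₀ y‖ ≤ Real.sqrt c * ‖y‖ := by
      rintro ⟨y, hy⟩
      obtain ⟨x, rfl⟩ := hy
      rw [hT₀S x (LinearMap.mem_range_self Sl x)]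
      exact key x
    set T₁ : LinearMap.range Sl →L[ℂ] H := T₀.mkContinuous (Real.sqrt c) hT₀bound with hT₁
    -- the closure of the range of S
    set K : Submodule ℂ H := (LinearMap.range Sl).topologicalClosure with hK
    have hKle : LinearMap.range Sl ≤ K := Submodule.le_topologicalClosure _
    set e : LinearMap.range Sl →L[ℂ] K :=
      (Submodule.inclusion hKle).mkContinuous 1 (fun x => by rw [one_mul]; rfl) with he
    have henorm : ∀ y : LinearMap.range Sl, ‖y‖ ≤ (1 : ℝ≥0) * ‖e y‖ := by
      intro y; rw [NNReal.coe_one, one_mul]; rfl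
    have h_ui : IsUniformInducing e :=
      (ContinuousLinearMap.isUniformEmbedding_of_bound e henorm).isUniformInducing
    have h_dense : DenseRange e := by
      intro z
      rw [closure_subtype]
      have h1 : ((↑) : K → H) '' Set.range e = (LinearMap.range Sl : Set H) := by
        ext w
        constructor
        · rintro ⟨u, ⟨v, rfl⟩, rfl⟩; exact v.2
        · intro hw; exact ⟨e ⟨w, hw⟩, ⟨⟨w, hw⟩, rfl⟩, rfl⟩
      rw [h1]
      have hz : (z : H) ∈ ((LinearMap.range Sl).topologicalClosure : Set H) := z.2
      rwa [Submodule.topologicalClosure_coe] at hz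
    set Tbar : K →L[ℂ] H := T₁.extend e with hTbar
    set T : H →L[ℂ] H := Tbar ∘L (K.orthogonalProjection : H →L[ℂ] K) with hT
    have hTS : T ∘L S = R := by
      ext x
      have hmemK : S x ∈ K := hKle (LinearMap.mem_range_self Sl x)
      have hproj : K.orthogonalProjection (S x) = ⟨S x, hmemK⟩ :=
        Submodule.orthogonalProjection_mem_subspace_eq_self (⟨S x, hmemK⟩ : K)
      have hproj' : (K.orthogonalProjection (S x) : K) =
          e ⟨Sl x, LinearMap.mem_range_self Sl x⟩ := by
        rw [hproj]; rfl
      calc (T ∘L S) x = Tbar (K.orthogonalProjection (S x)) := rfl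
      _ = Tbar (e ⟨Sl x, LinearMap.mem_range_self Sl x⟩) := by rw [hproj']
      _ = T₁ ⟨Sl x, LinearMap.mem_range_self Sl x⟩ := ContinuousLinearMap.extend_eq _ h_dense h_ui _
      _ = R x := hT₀S x (LinearMap.mem_range_self Sl x)
    refine ⟨ContinuousLinearMap.adjoint T ∘L T, ?_, ?_⟩
    · exact isPositive_adjoint_comp_self T
    · have h1 : ContinuousLinearMap.adjoint R = S ∘L ContinuousLinearMap.adjoint T := by
        rw [← hTS, ContinuousLinearMap.adjoint_comp, hSadj]
      have h2 : S ∘L ContinuousLinearMap.adjoint T = R := by rw [← h1, hRadj]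
      calc B = R ∘L R := hRR.symm
      _ = (S ∘L ContinuousLinearMap.adjoint T) ∘L (T ∘L S) := by rw [h2, hTS]
      _ = S ∘L (ContinuousLinearMap.adjoint T ∘L T) ∘L S := by ext x; rfl
  · rintro ⟨C, hC, hBC⟩
    set r : ℝ := ‖C‖ + 1 with hr
    have hr0 : 0 < r := by positivity
    refine ⟨r, hr0, ?_⟩
    constructor
    · have h1 : star (r • A - B) = r • A - B := by
        rw [star_sub, star_smul, star_trivial, hA.isSelfAdjoint.star_eq, hB.isSelfAdjoint.star_eq]
      exact (show IsSelfAdjoint (r • A - B) from h1).isSymmetric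
    · intro x
      rw [ContinuousLinearMap.reApplyInnerSelf_apply]
      have hx : ((r • A - B) x) = (r : ℂ) • A x - B x := by
        simp [ContinuousLinearMap.sub_apply]
      rw [hx, inner_sub_left, map_sub, inner_smul_left]
      have hBx : re ⟪B x, x⟫ = re ⟪C (S x), S x⟫ := by
        rw [hBC]
        calc re ⟪(S ∘L C ∘L S) x, x⟫
            = re ⟪(ContinuousLinearMap.adjoint S) (C (S x)), x⟫ := by rw [hSadj]; rfl
        _ = re ⟪C (S x), S x⟫ := by rw [ContinuousLinearMap.adjoint_inner_left]
      have hCle : re ⟪C (S x), S x⟫ ≤ ‖C‖ * ‖S x‖ ^ 2 := by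
        calc re ⟪C (S x), S x⟫ ≤ ‖⟪C (S x), S x⟫‖ := re_le_norm _
        _ ≤ ‖C (S x)‖ * ‖S x‖ := norm_inner_le_norm _ _
        _ ≤ (‖C‖ * ‖S x‖) * ‖S x‖ :=
            mul_le_mul_of_nonneg_right (C.le_opNorm _) (norm_nonneg _)
        _ = ‖C‖ * ‖S x‖ ^ 2 := by ring
      have hre : re ((starRingEnd ℂ) ((r : ℝ) : ℂ) * ⟪A x, x⟫)
          = r * ‖S x‖ ^ 2 := by
        simp [Complex.conj_ofReal, hAx x]
      rw [hre, hBx]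
      nlinarith [sq_nonneg ‖S x‖, hCle, hr0]
end

section
/- Let A ∈ B₊(H) and define L₊(A) = {B ∈ B₊(H) : B ≤ cA for some c > 0} and 𝓛₊(A) its norm closure. If B ∈ 𝓛₊(A), then 𝓛₊(B) ⊆ 𝓛₊(A). -/
set_option synthInstance.maxHeartbeats 1000000
set_option maxHeartbeats 1000000

variable {H : Type*} [NormedAddCommGroup H] [InnerProductSpace ℂ H] [CompleteSpace H]

/-- `L₊(A)`: the cone of nonnegative operators dominated by a positive multiple of `A`. -/
def Lplus (A : H →L[ℂ] H) : Set (H →L[ℂ] H) :=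
  {B | B.IsPositive ∧ ∃ c : ℝ, 0 < c ∧ (c • A - B).IsPositive}

lemma mem_Lplus_iff {A X : H →L[ℂ] H} :
    X ∈ Lplus A ↔ 0 ≤ X ∧ ∃ c : ℝ, 0 < c ∧ X ≤ c • A := by
  simp [Lplus, ContinuousLinearMap.nonneg_iff_isPositive, ContinuousLinearMap.le_def]

lemma rsmul_nonneg {X : H →L[ℂ] H} (hX : 0 ≤ X) {r : ℝ} (hr : 0 ≤ r) : 0 ≤ r • X := by
  have h1 : r • X = cfc (fun t : ℝ => r * t) X := by
    have : (fun t : ℝ => r * t) = fun t : ℝ => r • (id t) := by ext t; simp [smul_eq_mul]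
    rw [this, cfc_smul r id X, cfc_id ℝ X (IsSelfAdjoint.of_nonneg hX)]
  rw [h1]
  exact cfc_nonneg fun t ht => mul_nonneg hr (spectrum_nonneg_of_nonneg hX ht)

lemma rsmul_mono {X Y : H →L[ℂ] H} (h : X ≤ Y) {r : ℝ} (hr : 0 ≤ r) : r • X ≤ r • Y := by
  have := rsmul_nonneg (sub_nonneg.mpr h) hr
  rw [smul_sub] at this
  exact sub_nonneg.mp this

lemma sq_le_norm_smul {X : H →L[ℂ] H} (hX : 0 ≤ X) : X * X ≤ ‖X‖ • X := by
  have hsa : IsSelfAdjoint X := IsSelfAdjoint.of_nonneg hX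
  have h1 : X * X = cfc (fun t : ℝ => t * t) X := by
    rw [cfc_mul (fun t : ℝ => t) (fun t : ℝ => t) X, cfc_id' ℝ X hsa]
  have h2 : ‖X‖ • X = cfc (fun t : ℝ => ‖X‖ * t) X := by
    have : (fun t : ℝ => ‖X‖ * t) = fun t : ℝ => ‖X‖ • (id t) := by ext t; simp [smul_eq_mul]
    rw [this, cfc_smul (‖X‖) id X, cfc_id ℝ X hsa]
  rw [h1, h2]
  refine cfc_mono fun t ht => ?_
  have ht0 : 0 ≤ t := spectrum_nonneg_of_nonneg hX ht
  have htn : t ≤ ‖X‖ := by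
    have h := spectrum.norm_le_norm_mul_of_mem (𝕜 := ℝ) ht
    have h1n : ‖(1 : H →L[ℂ] H)‖ ≤ 1 := ContinuousLinearMap.norm_id_le
    calc t ≤ |t| := le_abs_self t
    _ ≤ ‖X‖ * ‖(1 : H →L[ℂ] H)‖ := h
    _ ≤ ‖X‖ * 1 := by nlinarith [norm_nonneg X]
    _ = ‖X‖ := mul_one _
  nlinarith

lemma nonneg_of_mem_closure {A B : H →L[ℂ] H} (hA : A.IsPositive)
    (hB : B ∈ closure (Lplus A)) : 0 ≤ B := by
  have h1 : closure (Lplus A) ⊆ closure {x : H →L[ℂ] H | 0 ≤ x} :=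
    closure_mono fun x hx => (mem_Lplus_iff.mp hx).1
  have h2 := h1 hB
  rwa [IsClosed.closure_eq CStarAlgebra.isClosed_nonneg] at h2

lemma conj_mem_closure {A B : H →L[ℂ] H} (hA : 0 ≤ A)
    (hB : B ∈ closure (Lplus A)) {Z : H →L[ℂ] H} (hZ : 0 ≤ Z) :
    B * Z * B ∈ closure (Lplus A) := by
  refine map_mem_closure (f := fun X : H →L[ℂ] H => X * Z * X) (by fun_prop) hB ?_
  intro X hX
  obtain ⟨hX0, d, hd, hXle⟩ := mem_Lplus_iff.mp hX
  have hXsa : IsSelfAdjoint X := IsSelfAdjoint.of_nonneg hX0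
  refine mem_Lplus_iff.mpr ⟨?_, ‖Z‖ * ‖X‖ * d + d, by positivity, ?_⟩
  · have := star_left_conjugate_nonneg hZ X
    rwa [hXsa.star_eq] at this
  · have h1 : X * Z * X ≤ ‖Z‖ • (X * X) := by
      have := CStarAlgebra.star_left_conjugate_le_norm_smul (a := X) (b := Z)
        (IsSelfAdjoint.of_nonneg hZ)
      rwa [hXsa.star_eq] at this
    have h2 : X * Z * X ≤ (‖Z‖ * ‖X‖) • X := by
      refine h1.trans ?_
      have := rsmul_mono (sq_le_norm_smul hX0) (norm_nonneg Z)
      rwa [smul_smul] at this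
    have h3 : X * Z * X ≤ (‖Z‖ * ‖X‖ * d) • A := by
      refine h2.trans ?_
      have := rsmul_mono hXle (by positivity : (0:ℝ) ≤ ‖Z‖ * ‖X‖)
      rwa [smul_smul] at this
    refine h3.trans ?_
    rw [add_smul]
    exact le_add_of_nonneg_right (rsmul_nonneg hA hd.le)

lemma approx_conj {B C : H →L[ℂ] H} (hB : 0 ≤ B) (hC : 0 ≤ C) {c : ℝ} (hc : 0 < c)
    (hle : C ≤ c • B) {ε : ℝ} (hε : 0 < ε) :
    ∃ Z : H →L[ℂ] H, 0 ≤ Z ∧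
      ‖B * Z * B - C‖ ≤ 2 * ‖CFC.sqrt C‖ * Real.sqrt (c * ε) := by
  have hBsa : IsSelfAdjoint B := IsSelfAdjoint.of_nonneg hB
  have hspec : ∀ t ∈ spectrum ℝ B, 0 ≤ t := fun t ht => spectrum_nonneg_of_nonneg hB ht
  set g : ℝ → ℝ := fun t => (t + ε)⁻¹ with hgdef
  set f : ℝ → ℝ := fun t => t * (t + ε)⁻¹ with hfdef
  have hpos : ∀ t ∈ spectrum ℝ B, 0 < t + ε := fun t ht => by
    have := hspec t ht; linarith
  have hg : ContinuousOn g (spectrum ℝ B) :=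
    ContinuousOn.inv₀ (by fun_prop) fun t ht => (hpos t ht).ne'
  have hf : ContinuousOn f (spectrum ℝ B) := continuousOn_id.mul hg
  set G : H →L[ℂ] H := cfc g B with hGdef
  set W : H →L[ℂ] H := cfc f B with hWdef
  have hGsa : IsSelfAdjoint G := IsSelfAdjoint.cfc
  have hWsa : IsSelfAdjoint W := IsSelfAdjoint.cfc
  have hBG : B * G = W := by
    rw [hWdef, show f = (fun t => t * g t) from rfl,
      cfc_mul (fun t : ℝ => t) g B continuousOn_id hg, cfc_id' ℝ B hBsa]
  have hGB : G * B = W := by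
    have h1 : (fun t : ℝ => g t * t) = f := by ext t; simp [hfdef, hgdef, mul_comm]
    rw [hWdef, ← h1, cfc_mul g (fun t : ℝ => t) B hg continuousOn_id, cfc_id' ℝ B hBsa]
  -- the approximant
  refine ⟨G * C * G, ?_, ?_⟩
  · have := star_left_conjugate_nonneg hC G
    rwa [hGsa.star_eq] at this
  have hBZB : B * (G * C * G) * B = W * C * W := by
    calc B * (G * C * G) * B = (B * G) * C * (G * B) := by simp only [mul_assoc]
    _ = W * C * W := by rw [hBG, hGB]
  rw [hBZB]
  -- D := W - 1
  set D : H →L[ℂ] H := W - 1 with hDdef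
  have hDsa : IsSelfAdjoint D := hWsa.sub (IsSelfAdjoint.one (H →L[ℂ] H))
  have hDcfc : D = cfc (fun t => f t - 1) B := by
    have h := cfc_sub f 1 B hf continuousOn_const
    rw [cfc_one ℝ B hBsa] at h
    rw [hDdef, hWdef]
    exact h.symm
  have hDBD : D * B * D = cfc (fun t => (f t - 1) * t * (f t - 1)) B := by
    rw [cfc_mul (fun t => (f t - 1) * t) (fun t => f t - 1) B
        ((hf.sub continuousOn_const).mul continuousOn_id) (hf.sub continuousOn_const),
      cfc_mul (fun t => f t - 1) (fun t : ℝ => t) B (hf.sub continuousOn_const) continuousOn_id,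
      cfc_id' ℝ B hBsa, ← hDcfc]
  have hnormDBD : ‖D * B * D‖ ≤ ε := by
    rw [hDBD]
    refine norm_cfc_le hε.le fun t ht => ?_
    have ht0 := hspec t ht
    have hu := hpos t ht
    have h1 : f t - 1 = -(ε / (t + ε)) := by
      rw [hfdef]; field_simp; ring
    have h2 : -(ε / (t + ε)) * t * -(ε / (t + ε)) = ε ^ 2 * t / (t + ε) ^ 2 := by
      field_simp
    rw [h1, h2, Real.norm_eq_abs, abs_of_nonneg (by positivity),
      div_le_iff₀ (by positivity)]
    nlinarith [mul_nonneg (mul_nonneg hε.le ht0) ht0, mul_nonneg (mul_nonneg hε.le hε.le) ht0,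
      mul_nonneg (mul_nonneg hε.le hε.le) hε.le]
  -- D C D estimates
  set s : H →L[ℂ] H := CFC.sqrt C with hsdef
  have hs0 : 0 ≤ s := CFC.sqrt_nonneg C
  have hssa : IsSelfAdjoint s := IsSelfAdjoint.of_nonneg hs0
  have hss : s * s = C := CFC.sqrt_mul_sqrt_self C hC
  have hDCD0 : 0 ≤ D * C * D := by
    have := star_left_conjugate_nonneg hC D
    rwa [hDsa.star_eq] at this
  have hDCD : D * C * D ≤ c • (D * B * D) := by
    have h := star_left_conjugate_le_conjugate hle D
    rw [hDsa.star_eq] at h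
    calc D * C * D ≤ D * (c • B) * D := h
    _ = c • (D * B * D) := by rw [mul_smul_comm, smul_mul_assoc]
  have hnormDCD : ‖D * C * D‖ ≤ c * ε := by
    calc ‖D * C * D‖ ≤ ‖c • (D * B * D)‖ :=
          CStarAlgebra.norm_le_norm_of_nonneg_of_le hDCD0 hDCD
    _ = c * ‖D * B * D‖ := by
          rw [norm_smul, Real.norm_eq_abs, abs_of_pos hc]
    _ ≤ c * ε := by nlinarith [norm_nonneg (D * B * D)]
  have hDs : ‖D * s‖ ≤ Real.sqrt (c * ε) := by
    have h1 : (D * s) * star (D * s) = D * C * D := by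
      rw [star_mul, hssa.star_eq, hDsa.star_eq, ← hss]; simp only [mul_assoc]
    have h2 : ‖D * s‖ * ‖D * s‖ ≤ c * ε := by
      rw [← CStarRing.norm_self_mul_star, h1]; exact hnormDCD
    rw [Real.le_sqrt (norm_nonneg _) (by positivity), sq]
    exact h2
  have hsD : ‖s * D‖ = ‖D * s‖ := by
    rw [show s * D = star (D * s) by rw [star_mul, hssa.star_eq, hDsa.star_eq], norm_star]
  have hW1 : ‖W‖ ≤ 1 := by
    rw [hWdef]
    refine norm_cfc_le one_pos.le fun t ht => ?_
    have ht0 := hspec t ht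
    have hu := hpos t ht
    have hft : f t = t / (t + ε) := (div_eq_mul_inv t (t + ε)).symm
    rw [hft, Real.norm_eq_abs, abs_of_nonneg (by positivity), div_le_one hu]
    linarith
  -- final estimate
  have hkey : W * C * W - C = D * C * W + C * D := by
    rw [hDdef]; noncomm_ring
  have hDCW : ‖D * C * W‖ ≤ Real.sqrt (c * ε) * ‖s‖ := by
    have h1 : D * C * W = (D * s) * (s * W) := by
      rw [← hss]; simp only [mul_assoc]
    rw [h1]
    calc ‖(D * s) * (s * W)‖ ≤ ‖D * s‖ * ‖s * W‖ := norm_mul_le _ _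
    _ ≤ ‖D * s‖ * (‖s‖ * ‖W‖) :=
        mul_le_mul_of_nonneg_left (norm_mul_le s W) (norm_nonneg _)
    _ ≤ Real.sqrt (c * ε) * ‖s‖ :=
        mul_le_mul hDs (mul_le_of_le_one_right (norm_nonneg s) hW1)
          (by positivity) (Real.sqrt_nonneg _)
  have hCD : ‖C * D‖ ≤ ‖s‖ * Real.sqrt (c * ε) := by
    have h1 : C * D = s * (s * D) := by rw [← hss]; simp only [mul_assoc]
    rw [h1]
    calc ‖s * (s * D)‖ ≤ ‖s‖ * ‖s * D‖ := norm_mul_le _ _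
    _ ≤ ‖s‖ * Real.sqrt (c * ε) := by
        rw [hsD] at *
        nlinarith [norm_nonneg s]
  calc ‖W * C * W - C‖ = ‖D * C * W + C * D‖ := by rw [hkey]
  _ ≤ ‖D * C * W‖ + ‖C * D‖ := norm_add_le _ _
  _ ≤ 2 * ‖s‖ * Real.sqrt (c * ε) := by nlinarith


/-- If `B ∈ 𝓛₊(A)` (the norm closure of `L₊(A)`), then `𝓛₊(B) ⊆ 𝓛₊(A)`. -/
theorem closure_Lplus_subset (A B : H →L[ℂ] H) (hA : A.IsPositive)
    (hB : B ∈ closure (Lplus A)) :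
    closure (Lplus B) ⊆ closure (Lplus A) := by
  have hA0 : 0 ≤ A := (ContinuousLinearMap.nonneg_iff_isPositive A).mpr hA
  have hB0 : 0 ≤ B := nonneg_of_mem_closure hA hB
  refine closure_minimal ?_ isClosed_closure
  intro C hC
  obtain ⟨hC0, c, hc, hle⟩ := mem_Lplus_iff.mp hC
  rw [← closure_closure (s := Lplus A), Metric.mem_closure_iff]
  intro δ hδ
  set M : ℝ := ‖CFC.sqrt C‖ with hM
  have hM0 : 0 ≤ M := norm_nonneg _
  set ε : ℝ := (δ / (2 * M + 2)) ^ 2 / c with hε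
  have hεpos : 0 < ε := by positivity
  obtain ⟨Z, hZ0, hbound⟩ := approx_conj hB0 hC0 hc hle hεpos
  refine ⟨B * Z * B, conj_mem_closure hA0 hB hZ0, ?_⟩
  have hsqrt : Real.sqrt (c * ε) = δ / (2 * M + 2) := by
    rw [hε, mul_div_cancel₀ _ hc.ne', Real.sqrt_sq (by positivity)]
  rw [dist_eq_norm, norm_sub_rev]
  calc ‖B * Z * B - C‖ ≤ 2 * M * Real.sqrt (c * ε) := hbound
  _ = 2 * M * (δ / (2 * M + 2)) := by rw [hsqrt]
  _ < δ := by
      rw [mul_div_assoc']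
      rw [div_lt_iff₀ (by positivity)]
      nlinarith
end

section
/- Let A ∈ B₊(H) and B ∈ 𝓛₊(A), the norm closure of {X ∈ B₊(H) : X ≤ cA for some c > 0}. Then the closure of the range of B is contained in the closure of the range of A. -/
open ContinuousLinearMap RCLike

variable {H : Type*} [NormedAddCommGroup H] [InnerProductSpace ℂ H] [CompleteSpace H]

local notation "⟪" x ", " y "⟫" => @inner ℂ _ _ x y

/-- A positive operator with vanishing quadratic form at `x` kills `x`. -/
lemma IsPositive.apply_eq_zero_of_re_inner_eq_zero {X : H →L[ℂ] H} (hX : X.IsPositive)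
    {x : H} (hx : re ⟪X x, x⟫ = 0) : X x = 0 := by
  have hsym := hX.1
  set y := X x with hy
  have key : ∀ t : ℝ, 0 ≤ re ⟪X y, y⟫ * (t * t) + (2 * re ⟪X x, y⟫) * t + 0 := by
    intro t
    have h0 := hX.2 (x + (t : ℂ) • y)
    rw [ContinuousLinearMap.reApplyInnerSelf_apply] at h0
    have hexp : ⟪X (x + (t : ℂ) • y), x + (t : ℂ) • y⟫
        = ⟪X x, x⟫ + (t : ℂ) * ⟪X x, y⟫ + ((t:ℂ) * ⟪X y, x⟫ + (t:ℂ) * (t:ℂ) * ⟪X y, y⟫) := by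
      simp only [map_add, map_smul, inner_add_left, inner_add_right, inner_smul_left,
        inner_smul_right, Complex.conj_ofReal]
      ring
    have hyx : ⟪X y, x⟫ = starRingEnd ℂ ⟪X x, y⟫ := by
      rw [inner_conj_symm]; exact hsym y x
    rw [hexp, hyx] at h0
    simp only [RCLike.re_to_complex, RCLike.im_to_complex, map_add, Complex.add_re, Complex.mul_re, RCLike.ofReal_re, RCLike.ofReal_im, RCLike.conj_re,
      Complex.conj_re, Complex.conj_im, Complex.ofReal_re, Complex.ofReal_im, Complex.mul_im, hx] at h0 ⊢
    have hx' : (⟪X x, x⟫ : ℂ).re = 0 := hx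
    ring_nf at h0 ⊢; linarith [h0, hx']
  have hd := discrim_le_zero key
  rw [discrim] at hd
  have hb : re ⟪X x, y⟫ = 0 := by nlinarith [sq_nonneg (2 * re ⟪X x, y⟫)]
  have hn : ‖y‖ ^ 2 = 0 := by
    rw [← inner_self_eq_norm_sq (𝕜 := ℂ)]
    simpa [hy] using hb
  have : ‖y‖ = 0 := by nlinarith [norm_nonneg y]
  simpa [hy] using norm_eq_zero.mp this

/-- If `B ∈ 𝓛₊(A)` (the norm closure of `L₊(A)`), then
`closure R(B) ⊆ closure R(A)`. -/
theorem closure_range_subset_of_mem_closure_Lplus (A B : H →L[ℂ] H)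
    (hA : A.IsPositive) (hB : B ∈ closure (Lplus A)) :
    (LinearMap.range (B : H →ₗ[ℂ] H)).topologicalClosure ≤ (LinearMap.range (A : H →ₗ[ℂ] H)).topologicalClosure := by
  obtain ⟨u, hu, hulim⟩ := mem_closure_iff_seq_limit.mp hB
  have happ : ∀ x : H, Filter.Tendsto (fun n => u n x) Filter.atTop (nhds (B x)) := by
    intro x
    exact ((ContinuousLinearMap.apply ℂ H x).continuous.tendsto B).comp hulim
  have hBsa : IsSelfAdjoint B := by
    have hadj : Filter.Tendsto (fun n => ContinuousLinearMap.adjoint (u n)) Filter.atTop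
        (nhds (ContinuousLinearMap.adjoint B)) :=
      ((ContinuousLinearMap.adjoint (𝕜 := ℂ) (E := H) (F := H)).continuous.tendsto B).comp hulim
    have heq : (fun n => ContinuousLinearMap.adjoint (u n)) = u := by
      funext n
      rw [← ContinuousLinearMap.star_eq_adjoint]
      exact ContinuousLinearMap.isSelfAdjoint_iff_isSymmetric.mpr (hu n).1.1
    rw [heq] at hadj
    rw [IsSelfAdjoint, ContinuousLinearMap.star_eq_adjoint]
    exact tendsto_nhds_unique hadj hulim
  have hker : ∀ x : H, A x = 0 → B x = 0 := by
    intro x hx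
    have hzero : ∀ n, u n x = 0 := by
      intro n
      obtain ⟨hpos, c, hc, hsub⟩ := hu n
      refine IsPositive.apply_eq_zero_of_re_inner_eq_zero hpos ?_
      have h1 : 0 ≤ RCLike.re (⟪(u n) x, x⟫ : ℂ) := by
        have := hpos.2 x; rwa [ContinuousLinearMap.reApplyInnerSelf_apply] at this
      have h2 : 0 ≤ RCLike.re (⟪(c • A - u n) x, x⟫ : ℂ) := by
        have := hsub.2 x; rwa [ContinuousLinearMap.reApplyInnerSelf_apply] at this
      have h3 : ((c • A - u n) x : H) = -(u n x) := by
        simp [hx]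
      rw [h3] at h2
      simp only [inner_neg_left, map_neg] at h2
      linarith
    have := happ x
    simp only [hzero] at this
    exact tendsto_nhds_unique this tendsto_const_nhds
  have hsymB := ContinuousLinearMap.isSelfAdjoint_iff_isSymmetric.mp hBsa
  have step1 : (LinearMap.range (B : H →ₗ[ℂ] H)).topologicalClosure ≤ (LinearMap.ker (A : H →ₗ[ℂ] H))ᗮ := by
    have hle : LinearMap.range (B : H →ₗ[ℂ] H) ≤ (LinearMap.ker (A : H →ₗ[ℂ] H))ᗮ := by
      rintro _ ⟨x, rfl⟩
      rw [Submodule.mem_orthogonal]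
      intro v hv
      have hv0 : B v = 0 := hker v (LinearMap.mem_ker.mp hv)
      calc (⟪v, B x⟫ : ℂ) = ⟪B v, x⟫ := (hsymB v x).symm
        _ = 0 := by rw [hv0, inner_zero_left]
    exact Submodule.topologicalClosure_minimal _ hle (Submodule.isClosed_orthogonal _)
  have step2 : (LinearMap.ker (A : H →ₗ[ℂ] H))ᗮ ≤ (LinearMap.range (A : H →ₗ[ℂ] H)).topologicalClosure := by
    rw [← Submodule.orthogonal_orthogonal_eq_closure]
    apply Submodule.orthogonal_le
    intro v hv
    rw [LinearMap.mem_ker]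
    apply IsPositive.apply_eq_zero_of_re_inner_eq_zero hA
    have : (⟪A v, v⟫ : ℂ) = 0 := hv (A v) ⟨v, rfl⟩
    rw [this]; simp
  exact le_trans step1 step2
end

section
/- Let A ∈ B₊(H), B ∈ B₊(H), and let E be the spectral measure of B. Then B belongs to 𝓛₊(A) (the norm closure of {X ∈ B₊(H) : X ≤ cA, some c > 0}) if and only if the spectral projection E([1/n, ∞)) belongs to 𝓛₊(A) for every n ≥ 1. -/
set_option maxHeartbeats 1000000
set_option synthInstance.maxHeartbeats 200000

variable {H : Type*} [NormedAddCommGroup H] [InnerProductSpace ℂ H] [CompleteSpace H]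

section Aux

open ContinuousLinearMap RCLike

local notation "⟪" x ", " y "⟫" => @inner ℂ H _ x y

variable {T S Q W A p : H →L[ℂ] H}

lemma aux_inner_symm (hT : IsSelfAdjoint T) (x y : H) : ⟪T x, y⟫ = ⟪x, T y⟫ :=
  (isSelfAdjoint_iff_isSymmetric.mp hT) x y

lemma aux_re_smul (r : ℝ) (v w : H) : re ⟪r • v, w⟫ = r * re ⟪v, w⟫ := by
  rw [RCLike.real_smul_eq_coe_smul (K := ℂ), inner_smul_real_left, RCLike.smul_re]

lemma aux_smul_sa (r : ℝ) {T : H →L[ℂ] H} (hT : IsSelfAdjoint T) :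
    IsSelfAdjoint (r • T) := by
  rw [isSelfAdjoint_iff_isSymmetric] at hT ⊢
  intro x y
  show ⟪(r • T) x, y⟫ = ⟪x, (r • T) y⟫
  rw [ContinuousLinearMap.smul_apply, ContinuousLinearMap.smul_apply,
    RCLike.real_smul_eq_coe_smul (K := ℂ) r (T x), inner_smul_real_left,
    RCLike.real_smul_eq_coe_smul (K := ℂ) r (T y), inner_smul_real_right]
  exact congrArg (fun z => r • z) (hT x y)

lemma aux_smul_pos {r : ℝ} (hr : 0 ≤ r) (hT : T.IsPositive) : (r • T).IsPositive := by
  refine isPositive_def'.mpr ⟨aux_smul_sa r hT.isSelfAdjoint, fun x => ?_⟩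
  rw [ContinuousLinearMap.reApplyInnerSelf_apply, ContinuousLinearMap.smul_apply, aux_re_smul]
  exact mul_nonneg hr (hT.re_inner_nonneg_left x)

lemma aux_le_trans {X Y Z : H →L[ℂ] H} (h1 : (X - Y).IsPositive)
    (h2 : (Y - Z).IsPositive) : (X - Z).IsPositive := by
  have := h1.add h2
  rwa [sub_add_sub_cancel] at this

lemma aux_cs (hT : T.IsPositive) (x y : H) :
    re ⟪T x, y⟫ ^ 2 ≤ re ⟪T x, x⟫ * re ⟪T y, y⟫ := by
  have key : ∀ t : ℝ, 0 ≤ re ⟪T y, y⟫ * (t * t) + (2 * re ⟪T x, y⟫) * t + re ⟪T x, x⟫ := by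
    intro t
    have h0 : 0 ≤ re ⟪T (x + (t : ℂ) • y), x + (t : ℂ) • y⟫ := hT.re_inner_nonneg_left _
    have hexp : ⟪T (x + (t : ℂ) • y), x + (t : ℂ) • y⟫
        = ⟪T x, x⟫ + (t : ℂ) * ⟪T x, y⟫ + (t : ℂ) * ⟪T y, x⟫ + (t : ℂ) ^ 2 * ⟪T y, y⟫ := by
      rw [map_add, map_smul, inner_add_left, inner_add_right, inner_add_right,
        inner_smul_left, inner_smul_right, inner_smul_left, inner_smul_right]
      simp [Complex.conj_ofReal]
      ring
    have hsymm : re ⟪T y, x⟫ = re ⟪T x, y⟫ := by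
      rw [aux_inner_symm hT.isSelfAdjoint y x, ← inner_conj_symm, RCLike.conj_re]
    rw [hexp] at h0
    have hre : re (⟪T x, x⟫ + (t : ℂ) * ⟪T x, y⟫ + (t : ℂ) * ⟪T y, x⟫
        + (t : ℂ) ^ 2 * ⟪T y, y⟫)
        = re ⟪T x, x⟫ + t * re ⟪T x, y⟫ + t * re ⟪T y, x⟫ + t ^ 2 * re ⟪T y, y⟫ := by
      simp only [map_add, sq, ← Complex.ofReal_mul]
      simp [RCLike.re_ofReal_mul]
    rw [hre] at h0
    rw [hsymm] at h0
    nlinarith [h0]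
  have hd := discrim_le_zero key
  rw [discrim] at hd
  nlinarith [hd]

lemma aux_re_bound (hT : T.IsPositive) (x : H) : re ⟪T x, x⟫ ≤ ‖T‖ * ‖x‖ ^ 2 := by
  calc re ⟪T x, x⟫ ≤ ‖⟪T x, x⟫‖ := RCLike.re_le_norm _
    _ ≤ ‖T x‖ * ‖x‖ := norm_inner_le_norm _ _
    _ ≤ (‖T‖ * ‖x‖) * ‖x‖ := mul_le_mul_of_nonneg_right (T.le_opNorm x) (norm_nonneg x)
    _ = ‖T‖ * ‖x‖ ^ 2 := by ring

lemma aux_normsq (hT : T.IsPositive) (x : H) : ‖T x‖ ^ 2 ≤ ‖T‖ * re ⟪T x, x⟫ := by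
  have h := aux_cs hT x (T x)
  rw [inner_self_eq_norm_sq (𝕜 := ℂ)] at h
  have h2 : re ⟪T (T x), T x⟫ ≤ ‖T‖ * ‖T x‖ ^ 2 := aux_re_bound hT (T x)
  have h2' : 0 ≤ re ⟪T (T x), T x⟫ := hT.re_inner_nonneg_left (T x)
  have hb : 0 ≤ re ⟪T x, x⟫ := hT.re_inner_nonneg_left x
  have h3 : (‖T x‖ ^ 2) ^ 2 ≤ (‖T‖ * re ⟪T x, x⟫) * ‖T x‖ ^ 2 := by nlinarith
  rcases eq_or_lt_of_le (sq_nonneg ‖T x‖) with h0 | hpos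
  · rw [← h0]
    exact mul_nonneg (norm_nonneg T) hb
  · exact le_of_mul_le_mul_right (by nlinarith) hpos

lemma aux_norm_le (hT : T.IsPositive) {c : ℝ} (hc : 0 ≤ c)
    (h : (c • (1 : H →L[ℂ] H) - T).IsPositive) : ‖T‖ ≤ c := by
  refine T.opNorm_le_bound hc (fun x => ?_)
  have hb : ∀ y : H, re ⟪T y, y⟫ ≤ c * ‖y‖ ^ 2 := by
    intro y
    have h0 := h.re_inner_nonneg_left y
    have e : (c • (1 : H →L[ℂ] H) - T) y = c • y - T y := by
      simp [ContinuousLinearMap.sub_apply]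
    rw [show re ⟪(c • (1 : H →L[ℂ] H) - T) y, y⟫ = c * ‖y‖ ^ 2 - re ⟪T y, y⟫ from by
      rw [e, inner_sub_left, map_sub, aux_re_smul, inner_self_eq_norm_sq (𝕜 := ℂ)]] at h0
    linarith
  have h4 := aux_cs hT x (T x)
  rw [inner_self_eq_norm_sq (𝕜 := ℂ)] at h4
  have h5 : re ⟪T (T x), T x⟫ ≤ c * ‖T x‖ ^ 2 := hb (T x)
  have h6 : re ⟪T x, x⟫ ≤ c * ‖x‖ ^ 2 := hb x
  have hb0 : 0 ≤ re ⟪T x, x⟫ := hT.re_inner_nonneg_left x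
  have hb1 : 0 ≤ re ⟪T (T x), T x⟫ := hT.re_inner_nonneg_left (T x)
  have h7 : (‖T x‖ ^ 2) ^ 2 ≤ (c * ‖x‖ ^ 2) * (c * ‖T x‖ ^ 2) := by nlinarith
  rcases eq_or_lt_of_le (sq_nonneg ‖T x‖) with h0 | hpos
  · have : ‖T x‖ = 0 := by nlinarith [norm_nonneg (T x)]
    rw [this]
    exact mul_nonneg hc (norm_nonneg x)
  · have h8 : ‖T x‖ ^ 2 ≤ (c * ‖x‖) ^ 2 := by
      apply le_of_mul_le_mul_right _ hpos
      nlinarith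
    exact (pow_le_pow_iff_left₀ (norm_nonneg _) (mul_nonneg hc (norm_nonneg x))
      two_ne_zero).mp h8

lemma aux_conj_pos (hS : IsSelfAdjoint S) (hW : W.IsPositive) : (S * W * S).IsPositive := by
  refine isPositive_def'.mpr ⟨?_, fun x => ?_⟩
  · show star (S * W * S) = S * W * S
    rw [star_mul, star_mul, hS.star_eq, hW.isSelfAdjoint.star_eq, mul_assoc]
  · show 0 ≤ re ⟪(S * W * S) x, x⟫
    rw [ContinuousLinearMap.mul_apply,
      ContinuousLinearMap.mul_apply, aux_inner_symm hS]
    exact hW.re_inner_nonneg_left (S x)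

lemma aux_conj_le (hW : W.IsPositive) (hS : IsSelfAdjoint S) :
    (‖W‖ • (S * S) - S * W * S).IsPositive := by
  have hSS : IsSelfAdjoint (S * S) := by
    show star (S * S) = S * S
    rw [star_mul, hS.star_eq]
  have hSWS : IsSelfAdjoint (S * W * S) := (aux_conj_pos hS hW).isSelfAdjoint
  refine isPositive_def'.mpr ⟨(aux_smul_sa ‖W‖ hSS).sub hSWS, fun x => ?_⟩
  rw [ContinuousLinearMap.reApplyInnerSelf_apply]
  have e : (‖W‖ • (S * S) - S * W * S) x = ‖W‖ • (S (S x)) - S (W (S x)) := by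
    simp [ContinuousLinearMap.sub_apply, ContinuousLinearMap.mul_apply]
  rw [e, inner_sub_left, map_sub, aux_re_smul, aux_inner_symm hS (S x) x,
    aux_inner_symm hS (W (S x)) x]
  have h1 : re ⟪W (S x), S x⟫ ≤ ‖W‖ * ‖S x‖ ^ 2 := aux_re_bound hW (S x)
  rw [inner_self_eq_norm_sq (𝕜 := ℂ)]
  linarith

lemma aux_sq_le (hQ : Q.IsPositive) : (‖Q‖ • Q - Q * Q).IsPositive := by
  have hQs := hQ.isSelfAdjoint
  have hQQ : IsSelfAdjoint (Q * Q) := by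
    show star (Q * Q) = Q * Q
    rw [star_mul, hQs.star_eq]
  refine isPositive_def'.mpr ⟨(aux_smul_sa ‖Q‖ hQs).sub hQQ, fun x => ?_⟩
  rw [ContinuousLinearMap.reApplyInnerSelf_apply]
  have e : (‖Q‖ • Q - Q * Q) x = ‖Q‖ • (Q x) - Q (Q x) := by
    simp [ContinuousLinearMap.sub_apply, ContinuousLinearMap.mul_apply]
  rw [e, inner_sub_left, map_sub, aux_re_smul, aux_inner_symm hQs (Q x) x,
    inner_self_eq_norm_sq (𝕜 := ℂ)]
  have := aux_normsq hQ x
  linarith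

lemma mem_Lplus_conj (hA : A.IsPositive) (hQ : Q ∈ Lplus A) (hW : W.IsPositive) :
    Q * W * Q ∈ Lplus A := by
  obtain ⟨hQp, c, hc, hcA⟩ := hQ
  refine ⟨aux_conj_pos hQp.isSelfAdjoint hW, (‖W‖ * ‖Q‖ + 1) * c, by positivity, ?_⟩
  have e1 : (‖W‖ • (Q * Q) - Q * W * Q).IsPositive := aux_conj_le hW hQp.isSelfAdjoint
  have e2 : ((‖W‖ * ‖Q‖) • Q - ‖W‖ • (Q * Q)).IsPositive := by
    have := aux_smul_pos (norm_nonneg W) (aux_sq_le hQp)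
    rwa [smul_sub, smul_smul] at this
  have e3 : ((‖W‖ * ‖Q‖ * c) • A - (‖W‖ * ‖Q‖) • Q).IsPositive := by
    have := aux_smul_pos (mul_nonneg (norm_nonneg W) (norm_nonneg Q)) hcA
    rwa [smul_sub, smul_smul] at this
  have e4 : (((‖W‖ * ‖Q‖ + 1) * c) • A - (‖W‖ * ‖Q‖ * c) • A).IsPositive := by
    rw [← sub_smul, show (‖W‖ * ‖Q‖ + 1) * c - ‖W‖ * ‖Q‖ * c = c from by ring]
    exact aux_smul_pos hc.le hA
  exact aux_le_trans (aux_le_trans (aux_le_trans e4 e3) e2) e1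

lemma aux_proj_inner (hs : IsSelfAdjoint p) (hi : p * p = p) (x : H) :
    re ⟪p x, x⟫ = ‖p x‖ ^ 2 := by
  have h1 : ⟪p x, x⟫ = ⟪p x, p x⟫ := by
    calc ⟪p x, x⟫ = ⟪(p * p) x, x⟫ := by rw [hi]
      _ = ⟪p x, p x⟫ := aux_inner_symm hs (p x) x
  rw [h1, inner_self_eq_norm_sq (𝕜 := ℂ)]

lemma aux_proj_pos (hs : IsSelfAdjoint p) (hi : p * p = p) : p.IsPositive := by
  refine isPositive_def'.mpr ⟨hs, fun x => ?_⟩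
  rw [ContinuousLinearMap.reApplyInnerSelf_apply, aux_proj_inner hs hi]
  positivity

lemma aux_one_sub_proj_pos (hs : IsSelfAdjoint p) (hi : p * p = p) :
    ((1 : H →L[ℂ] H) - p).IsPositive := by
  refine isPositive_def'.mpr ⟨(IsSelfAdjoint.one (H →L[ℂ] H)).sub hs, fun x => ?_⟩
  rw [ContinuousLinearMap.reApplyInnerSelf_apply]
  have e : ((1 : H →L[ℂ] H) - p) x = x - p x := by
    simp [ContinuousLinearMap.sub_apply]
  rw [e, inner_sub_left, map_sub, inner_self_eq_norm_sq (𝕜 := ℂ)]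
  have h1 : re ⟪p x, x⟫ = ‖p x‖ ^ 2 := aux_proj_inner hs hi x
  have h2 : re ⟪p x, x⟫ ≤ ‖p x‖ * ‖x‖ :=
    (RCLike.re_le_norm _).trans (norm_inner_le_norm _ _)
  nlinarith [norm_nonneg (p x), norm_nonneg x]

lemma aux_proj_norm_le (hs : IsSelfAdjoint p) (hi : p * p = p) : ‖p‖ ≤ 1 := by
  apply aux_norm_le (aux_proj_pos hs hi) zero_le_one
  rw [one_smul]
  exact aux_one_sub_proj_pos hs hi

lemma aux_dir_fwd {A B : H →L[ℂ] H} (hA : A.IsPositive) (hB : B.IsPositive)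
    {p : H →L[ℂ] H} {n : ℕ} (hn : 1 ≤ n)
    (hs : IsSelfAdjoint p) (hi : p * p = p) (hcm : B * p = p * B)
    (hlo : (B * p - ((n : ℝ)⁻¹) • p).IsPositive)
    (hBcl : B ∈ closure (Lplus A)) : p ∈ closure (Lplus A) := by
  rw [Metric.mem_closure_iff]
  intro ε hε
  have hn1 : (1:ℝ) ≤ (n:ℝ) := by exact_mod_cast hn
  have hn0 : (0:ℝ) < (n:ℝ) := by linarith
  have hppos := aux_proj_pos hs hi
  have hpn : ‖p‖ ≤ 1 := aux_proj_norm_le hs hi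
  have h1p := aux_one_sub_proj_pos hs hi
  have hBs := hB.isSelfAdjoint
  have hkey : ∀ x, re ⟪p x, x⟫ = ‖p x‖ ^ 2 := aux_proj_inner hs hi
  -- facts about B * p, before folding into G
  have hGs : IsSelfAdjoint (B * p) := by
    show star (B * p) = B * p
    rw [star_mul, hs.star_eq, hBs.star_eq, ← hcm]
  have hGp : (B * p) * p = B * p := by rw [mul_assoc, hi]
  have hpG : p * (B * p) = B * p := by rw [← mul_assoc, ← hcm, mul_assoc, hi]
  have hGB : (B * p) * B = B * (B * p) := by rw [mul_assoc, ← hcm]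
  have hGG : (B * p) * (B * p) = B * (B * p) := by rw [← mul_assoc, hGB, mul_assoc, hGp]
  have hGapp : ∀ x, (B * p) x = B (p x) := fun x => ContinuousLinearMap.mul_apply _ _ _
  have hGGinner : ∀ x : H, re ⟪((B * p) * (B * p)) x, x⟫ = ‖(B * p) x‖ ^ 2 := by
    intro x
    rw [ContinuousLinearMap.mul_apply, aux_inner_symm hGs, inner_self_eq_norm_sq (𝕜 := ℂ)]
  have hGup : ∀ x, ‖(B * p) x‖ ≤ ‖B‖ * ‖p x‖ := fun x => by
    rw [hGapp]; exact B.le_opNorm (p x)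
  have hGlow : ∀ x, ((n:ℝ)^2)⁻¹ * ‖p x‖^2 ≤ ‖(B * p) x‖^2 := by
    intro x
    have h0 := hlo.re_inner_nonneg_left (p x)
    have e : (B * p - ((n : ℝ)⁻¹) • p) (p x) = (B * p) (p x) - (n:ℝ)⁻¹ • p (p x) := by
      simp [ContinuousLinearMap.sub_apply, ContinuousLinearMap.smul_apply]
    have hpp : p (p x) = p x := by rw [← ContinuousLinearMap.mul_apply, hi]
    have hGpx : (B * p) (p x) = (B * p) x := by
      rw [← ContinuousLinearMap.mul_apply, hGp]
    rw [e, hpp, hGpx, inner_sub_left, map_sub, aux_re_smul,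
      inner_self_eq_norm_sq (𝕜 := ℂ)] at h0
    have hre : re ⟪(B * p) x, p x⟫ ≤ ‖(B * p) x‖ * ‖p x‖ :=
      (RCLike.re_le_norm _).trans (norm_inner_le_norm _ _)
    rcases eq_or_lt_of_le (norm_nonneg (p x)) with h | h
    · rw [← h]
      have := sq_nonneg ‖(B * p) x‖
      nlinarith
    · have hGxn : (n:ℝ)⁻¹ * ‖p x‖ ≤ ‖(B * p) x‖ := by
        apply le_of_mul_le_mul_right _ h
        nlinarith
      have h2 : ((n:ℝ)⁻¹ * ‖p x‖)^2 ≤ ‖(B * p) x‖^2 :=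
        pow_le_pow_left₀ (mul_nonneg (by positivity) (norm_nonneg _)) hGxn 2
      have h3 : ((n:ℝ)⁻¹ * ‖p x‖)^2 = ((n:ℝ)^2)⁻¹ * ‖p x‖^2 := by
        rw [mul_pow, ← inv_pow]
      linarith
  set G : H →L[ℂ] H := B * p with hG_def
  have hcm' : B * p = p * B := by rw [← hG_def]; exact hcm
  -- constants
  set c' : ℝ := ‖B‖^2 + 1 with hc'_def
  have hc'pos : (0:ℝ) < c' := by positivity
  have hB2c' : ‖B‖^2 ≤ c' := by rw [hc'_def]; linarith
  have hnc' : (1:ℝ) ≤ (n:ℝ)^2 * c' := by nlinarith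
  have hncpos : (0:ℝ) < (n:ℝ)^2 * c' := by positivity
  set r : ℝ := 1 - ((n:ℝ)^2 * c')⁻¹ with hr_def
  have hinv_le : ((n:ℝ)^2 * c')⁻¹ ≤ 1 := by
    have hmc : ((n:ℝ)^2*c')⁻¹ * ((n:ℝ)^2*c') = 1 := inv_mul_cancel₀ hncpos.ne'
    nlinarith [mul_nonneg (inv_nonneg.mpr hncpos.le) (sub_nonneg.mpr hnc')]
  have hr0 : 0 ≤ r := by rw [hr_def]; linarith
  have hrlt : r < 1 := by
    have : 0 < ((n:ℝ)^2*c')⁻¹ := by positivity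
    rw [hr_def]; linarith
  -- the operator C
  set C : H →L[ℂ] H := p - c'⁻¹ • (G * G) with hC_def
  have hGGs : IsSelfAdjoint (G * G) := by
    show star (G * G) = G * G
    rw [star_mul, hGs.star_eq]
  have hCs : IsSelfAdjoint C := hs.sub (aux_smul_sa _ hGGs)
  have hCapp : ∀ x, C x = p x - c'⁻¹ • ((G * G) x) := fun x => by
    rw [hC_def]
    simp [ContinuousLinearMap.sub_apply, ContinuousLinearMap.smul_apply]
  have hCinner : ∀ x, re ⟪C x, x⟫ = ‖p x‖^2 - c'⁻¹ * ‖G x‖^2 := fun x => by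
    rw [hCapp, inner_sub_left, map_sub, aux_re_smul, hGGinner, hkey]
  have hCpos : C.IsPositive := by
    refine isPositive_def'.mpr ⟨hCs, fun x => ?_⟩
    rw [ContinuousLinearMap.reApplyInnerSelf_apply, hCinner]
    have h1 := hGup x
    have h2 : ‖G x‖^2 ≤ ‖B‖^2 * ‖p x‖^2 := by
      nlinarith [norm_nonneg (G x), norm_nonneg (p x), norm_nonneg B]
    have h3 : c'⁻¹ * ‖G x‖^2 ≤ c'⁻¹ * (‖B‖^2 * ‖p x‖^2) :=
      mul_le_mul_of_nonneg_left h2 (by positivity)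
    have h4 : c'⁻¹ * ‖B‖^2 ≤ 1 := by
      have h5 : ‖B‖^2 / c' ≤ 1 := (div_le_one hc'pos).mpr hB2c'
      rw [div_eq_mul_inv] at h5
      rw [mul_comm]
      exact h5
    nlinarith [sq_nonneg ‖p x‖]
  have hCr : (r • p - C).IsPositive := by
    refine isPositive_def'.mpr ⟨(aux_smul_sa r hs).sub hCs, fun x => ?_⟩
    rw [ContinuousLinearMap.reApplyInnerSelf_apply]
    have e : (r • p - C) x = r • p x - C x := by
      simp [ContinuousLinearMap.sub_apply, ContinuousLinearMap.smul_apply]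
    rw [e, inner_sub_left, map_sub, aux_re_smul, hCinner, hkey]
    have h1 := hGlow x
    have h2 : ((n:ℝ)^2*c')⁻¹ = c'⁻¹ * ((n:ℝ)^2)⁻¹ := by rw [mul_inv]; ring
    have h3 : c'⁻¹ * (((n:ℝ)^2)⁻¹ * ‖p x‖^2) ≤ c'⁻¹ * ‖G x‖^2 :=
      mul_le_mul_of_nonneg_left h1 (by positivity)
    rw [hr_def, h2]
    nlinarith [sq_nonneg ‖p x‖]
  have hCnorm : ‖C‖ ≤ r := by
    apply aux_norm_le hCpos hr0
    have h1 : (r • (1 : H →L[ℂ] H) - r • p).IsPositive := by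
      rw [← smul_sub]; exact aux_smul_pos hr0 h1p
    have h2 := h1.add hCr
    rwa [sub_add_sub_cancel] at h2
  have hCp : C * p = C := by
    rw [hC_def, sub_mul, smul_mul_assoc, hi, mul_assoc, hGp]
  have hpC : p * C = C := by
    rw [hC_def, mul_sub, hi, mul_smul_comm, ← mul_assoc, hpG]
  have hBGG : B * (G * G) = (G * G) * B := by
    rw [← mul_assoc, ← hGB, mul_assoc, ← hGB, ← mul_assoc]
  have hBC : B * C = C * B := by
    rw [hC_def, mul_sub, sub_mul, hcm', mul_smul_comm, smul_mul_assoc, hBGG]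
  have hCom : Commute B C := hBC
  have hCkpos : ∀ k, (C^k * p).IsPositive := by
    have main : ∀ k, (C^k * p).IsPositive ∧ (C^(k+1) * p).IsPositive := by
      intro k
      induction k with
      | zero =>
        exact ⟨by rw [pow_zero, one_mul]; exact hppos,
               by rw [pow_one, hCp]; exact hCpos⟩
      | succ k ih =>
        refine ⟨ih.2, ?_⟩
        have h1 : C * (C^k * p) * C = C^(k+2) := by
          rw [← mul_assoc, ← pow_succ', mul_assoc, hpC, ← pow_succ]
        have h2 : C^(k+2) * p = C^(k+2) := by
          rw [pow_succ, mul_assoc, hCp, ← pow_succ]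
        have h3 : (C * (C^k * p) * C).IsPositive := aux_conj_pos hCs ih.1
        rw [h1] at h3
        rw [show k+1+1 = k+2 from rfl, h2]
        exact h3
    exact fun k => (main k).1
  -- the approximate inverse W
  obtain ⟨m0, hm0⟩ := exists_pow_lt_of_lt_one (half_pos hε) hrlt
  set m : ℕ := m0 + 1 with hm_def
  have hm1 : r^m ≤ r^m0 := pow_le_pow_of_le_one hr0 hrlt.le (Nat.le_succ m0)
  set W : H →L[ℂ] H := c'⁻¹ • (Finset.range m).sum (fun k => C^k * p) with hWdef
  have hWpos : W.IsPositive := by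
    apply aux_smul_pos (by positivity)
    exact Finset.sum_induction _ _ (fun a b ha hb => ha.add hb)
      ContinuousLinearMap.isPositive_zero (fun i _ => hCkpos i)
  have hGGC : c'⁻¹ • (G * G) = p - C := by rw [hC_def, sub_sub_cancel]
  have hGBGG : G * B = G * G := by rw [hGB, ← hGG]
  have hterm : ∀ k, c'⁻¹ • (B * (C^k * p) * B) = C^k * p - C^(k+1) * p := by
    intro k
    have hBCk : B * C^k = C^k * B := (hCom.pow_right k).eq
    have e1 : B * (C^k * p) * B = C^k * (G * G) := by
      rw [← mul_assoc, hBCk, mul_assoc (C^k) B p, ← hG_def, mul_assoc, hGBGG]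
    rw [e1, ← mul_smul_comm, hGGC, mul_sub, pow_succ, mul_assoc, hCp]
  have hBWB : B * W * B = p - C^m * p := by
    rw [hWdef, mul_smul_comm, smul_mul_assoc, Finset.mul_sum, Finset.sum_mul,
      Finset.smul_sum]
    have hsc : ((Finset.range m).sum fun k => c'⁻¹ • (B * (C^k * p) * B))
        = (Finset.range m).sum fun k => (C^k * p - C^(k+1) * p) :=
      Finset.sum_congr rfl (fun k _ => hterm k)
    rw [hsc, Finset.sum_range_sub' (fun k => C^k * p) m, pow_zero, one_mul]
  have hCm : ‖C^m * p‖ ≤ r^m0 := by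
    calc ‖C^m * p‖ ≤ ‖C^m‖ * ‖p‖ := norm_mul_le _ _
      _ ≤ ‖C‖^m * 1 := mul_le_mul (norm_pow_le' C (Nat.succ_pos m0)) hpn
            (norm_nonneg _) (pow_nonneg (norm_nonneg _) _)
      _ = ‖C‖^m := mul_one _
      _ ≤ r^m := pow_le_pow_left₀ (norm_nonneg _) hCnorm m
      _ ≤ r^m0 := hm1
  -- approximation
  set δ : ℝ := min 1 ((ε/2) / (‖W‖ * (2*‖B‖+1) + 1)) with hδdef
  have hδpos : 0 < δ := lt_min one_pos (div_pos (half_pos hε) (by positivity))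
  obtain ⟨X, hXmem, hXd⟩ := Metric.mem_closure_iff.mp hBcl δ hδpos
  rw [dist_eq_norm] at hXd
  have hXn : ‖X‖ ≤ ‖B‖ + 1 := by
    have h1 : ‖X‖ - ‖B‖ ≤ ‖X - B‖ := norm_sub_norm_le X B
    rw [norm_sub_rev] at h1
    have h2 : δ ≤ 1 := min_le_left _ _
    linarith
  refine ⟨X * W * X, mem_Lplus_conj hA hXmem hWpos, ?_⟩
  rw [dist_eq_norm]
  have e : p - X * W * X = C^m * p + (B * W * B - X * W * X) := by
    rw [hBWB]; abel
  have e2 : B * W * B - X * W * X = (B - X) * W * B + X * W * (B - X) := by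
    noncomm_ring
  have hb1 : ‖(B - X) * W * B‖ ≤ δ * ‖W‖ * ‖B‖ := by
    calc ‖(B - X) * W * B‖ ≤ ‖(B - X) * W‖ * ‖B‖ := norm_mul_le _ _
      _ ≤ (‖B - X‖ * ‖W‖) * ‖B‖ :=
          mul_le_mul_of_nonneg_right (norm_mul_le _ _) (norm_nonneg _)
      _ ≤ δ * ‖W‖ * ‖B‖ := by
          apply mul_le_mul_of_nonneg_right _ (norm_nonneg B)
          exact mul_le_mul_of_nonneg_right hXd.le (norm_nonneg W)
  have hb2 : ‖X * W * (B - X)‖ ≤ (‖B‖+1) * ‖W‖ * δ := by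
    calc ‖X * W * (B - X)‖ ≤ ‖X * W‖ * ‖B - X‖ := norm_mul_le _ _
      _ ≤ (‖X‖ * ‖W‖) * ‖B - X‖ :=
          mul_le_mul_of_nonneg_right (norm_mul_le _ _) (norm_nonneg _)
      _ ≤ (‖B‖+1) * ‖W‖ * δ := by
          apply mul_le_mul _ hXd.le (norm_nonneg _) (by positivity)
          exact mul_le_mul_of_nonneg_right hXn (norm_nonneg W)
  have hδ2 : δ * (‖W‖ * (2*‖B‖+1)) ≤ ε / 2 := by
    have h1 : δ ≤ (ε/2) / (‖W‖ * (2*‖B‖+1) + 1) := min_le_right _ _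
    have h2 : (0:ℝ) < ‖W‖ * (2*‖B‖+1) + 1 := by positivity
    calc δ * (‖W‖ * (2*‖B‖+1)) ≤ ((ε/2) / (‖W‖ * (2*‖B‖+1) + 1)) * (‖W‖ * (2*‖B‖+1) + 1) := by
          apply mul_le_mul h1 (by linarith) (by positivity) (by positivity)
      _ = ε / 2 := div_mul_cancel₀ _ h2.ne'
  have hsum : δ * ‖W‖ * ‖B‖ + (‖B‖+1) * ‖W‖ * δ ≤ δ * (‖W‖ * (2*‖B‖+1)) :=
    le_of_eq (by ring)
  calc ‖p - X * W * X‖ = ‖C^m * p + (B * W * B - X * W * X)‖ := by rw [e]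
    _ ≤ ‖C^m * p‖ + ‖B * W * B - X * W * X‖ := norm_add_le _ _
    _ ≤ ‖C^m * p‖ + (‖(B - X) * W * B‖ + ‖X * W * (B - X)‖) := by
        rw [e2]; exact add_le_add (le_refl _) (norm_add_le _ _)
    _ < ε := by linarith

lemma aux_dir_rev {A B : H →L[ℂ] H} (hA : A.IsPositive) (hB : B.IsPositive)
    (P : ℕ → (H →L[ℂ] H))
    (hsa : ∀ n : ℕ, 1 ≤ n → IsSelfAdjoint (P n))
    (hidem : ∀ n : ℕ, 1 ≤ n → P n * P n = P n)
    (hcomm : ∀ n : ℕ, 1 ≤ n → B * P n = P n * B)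
    (hhigh : ∀ n : ℕ, 1 ≤ n → (((n : ℝ)⁻¹) • (1 - P n) - B * (1 - P n)).IsPositive)
    (hP : ∀ n : ℕ, 1 ≤ n → P n ∈ closure (Lplus A)) : B ∈ closure (Lplus A) := by
  rw [Metric.mem_closure_iff]
  intro ε hε
  obtain ⟨n0, hn0⟩ := exists_nat_one_div_lt (half_pos hε)
  set n : ℕ := n0 + 1 with hn_def
  have hn : 1 ≤ n := Nat.le_add_left 1 n0
  set p : H →L[ℂ] H := P n with hp_def
  have hs : IsSelfAdjoint p := hsa n hn
  have hi : p * p = p := hidem n hn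
  have hcm : B * p = p * B := hcomm n hn
  have hhi := hhigh n hn
  have hppos := aux_proj_pos hs hi
  have hpn : ‖p‖ ≤ 1 := aux_proj_norm_le hs hi
  have hinv0 : (0:ℝ) ≤ (n : ℝ)⁻¹ := by positivity
  have hBp_pos : (B * p).IsPositive := by
    have e : B * p = p * B * p := by rw [← hcm, mul_assoc, hi]
    rw [e]
    exact aux_conj_pos hs hB
  have hs1 : IsSelfAdjoint ((1 : H →L[ℂ] H) - p) := (IsSelfAdjoint.one (H →L[ℂ] H)).sub hs
  have hi1 : ((1 : H →L[ℂ] H) - p) * (1 - p) = 1 - p := by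
    rw [sub_mul, one_mul, mul_sub, mul_one, hi]
    abel
  have hcm1 : B * (1 - p) = (1 - p) * B := by
    rw [mul_sub, sub_mul, mul_one, one_mul, hcm]
  have hB1p_pos : (B * (1 - p)).IsPositive := by
    have e : B * (1 - p) = (1 - p) * B * (1 - p) := by rw [← hcm1, mul_assoc, hi1]
    rw [e]
    exact aux_conj_pos hs1 hB
  have hhi' : (((n : ℝ)⁻¹) • (1 : H →L[ℂ] H) - B * (1 - p)).IsPositive := by
    have h2 : (((n : ℝ)⁻¹) • (1 : H →L[ℂ] H)
        - ((n : ℝ)⁻¹) • ((1 : H →L[ℂ] H) - p)).IsPositive := by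
      rw [← smul_sub, sub_sub_cancel]
      exact aux_smul_pos hinv0 hppos
    have h3 := h2.add hhi
    rwa [sub_add_sub_cancel] at h3
  have hB1p_norm : ‖B * (1 - p)‖ ≤ (n : ℝ)⁻¹ := aux_norm_le hB1p_pos hinv0 hhi'
  have hncast : (n:ℝ) = (n0:ℝ) + 1 := by rw [hn_def]; push_cast; ring
  have hinv : (n : ℝ)⁻¹ < ε / 2 := by
    rw [hncast, ← one_div]
    exact hn0
  set Wop : H →L[ℂ] H := B * p with hW_def
  set δ : ℝ := min 1 ((ε/2) / (‖Wop‖ * 3 + 1)) with hδ_def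
  have hδpos : 0 < δ := lt_min one_pos (div_pos (half_pos hε) (by positivity))
  obtain ⟨Q, hQmem, hQd⟩ := Metric.mem_closure_iff.mp (hP n hn) δ hδpos
  rw [dist_eq_norm] at hQd
  have hQn : ‖Q‖ ≤ 2 := by
    have h1 : ‖Q‖ - ‖p‖ ≤ ‖Q - p‖ := norm_sub_norm_le Q p
    rw [norm_sub_rev] at h1
    have hδ1 : δ ≤ 1 := min_le_left _ _
    linarith
  refine ⟨Q * Wop * Q, mem_Lplus_conj hA hQmem hBp_pos, ?_⟩
  rw [dist_eq_norm]
  have hpW : p * Wop = Wop := by rw [hW_def, ← mul_assoc, ← hcm, mul_assoc, hi]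
  have hWp : Wop * p = Wop := by rw [hW_def, mul_assoc, hi]
  have hpWp : p * Wop * p = Wop := by rw [hpW, hWp]
  have e : B - Q * Wop * Q = B * (1 - p) + (p * Wop * p - Q * Wop * Q) := by
    rw [hpWp, mul_sub, mul_one, ← hW_def]
    abel
  have e3 : p * Wop * p - Q * Wop * Q = (p - Q) * Wop * p + Q * Wop * (p - Q) := by
    noncomm_ring
  have hb1 : ‖(p - Q) * Wop * p‖ ≤ δ * ‖Wop‖ * 1 := by
    calc ‖(p - Q) * Wop * p‖ ≤ ‖(p - Q) * Wop‖ * ‖p‖ := norm_mul_le _ _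
      _ ≤ (‖p - Q‖ * ‖Wop‖) * ‖p‖ :=
          mul_le_mul_of_nonneg_right (norm_mul_le _ _) (norm_nonneg _)
      _ ≤ δ * ‖Wop‖ * 1 := by
          apply mul_le_mul _ hpn (norm_nonneg _) (by positivity)
          exact mul_le_mul_of_nonneg_right hQd.le (norm_nonneg _)
  have hb2 : ‖Q * Wop * (p - Q)‖ ≤ 2 * ‖Wop‖ * δ := by
    calc ‖Q * Wop * (p - Q)‖ ≤ ‖Q * Wop‖ * ‖p - Q‖ := norm_mul_le _ _
      _ ≤ (‖Q‖ * ‖Wop‖) * ‖p - Q‖ :=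
          mul_le_mul_of_nonneg_right (norm_mul_le _ _) (norm_nonneg _)
      _ ≤ 2 * ‖Wop‖ * δ := by
          apply mul_le_mul _ hQd.le (norm_nonneg _) (by positivity)
          exact mul_le_mul_of_nonneg_right hQn (norm_nonneg _)
  have hδ2 : δ * (‖Wop‖ * 3) ≤ ε / 2 := by
    have h1 : δ ≤ (ε/2) / (‖Wop‖ * 3 + 1) := min_le_right _ _
    have h2 : (0:ℝ) < ‖Wop‖ * 3 + 1 := by positivity
    calc δ * (‖Wop‖ * 3) ≤ ((ε/2) / (‖Wop‖ * 3 + 1)) * (‖Wop‖ * 3 + 1) := by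
          apply mul_le_mul h1 (by linarith) (by positivity) (by positivity)
      _ = ε / 2 := div_mul_cancel₀ _ h2.ne'
  have hsum : δ * ‖Wop‖ * 1 + 2 * ‖Wop‖ * δ ≤ δ * (‖Wop‖ * 3) := le_of_eq (by ring)
  calc ‖B - Q * Wop * Q‖ = ‖B * (1 - p) + (p * Wop * p - Q * Wop * Q)‖ := by rw [e]
    _ ≤ ‖B * (1 - p)‖ + ‖p * Wop * p - Q * Wop * Q‖ := norm_add_le _ _
    _ ≤ ‖B * (1 - p)‖ + (‖(p - Q) * Wop * p‖ + ‖Q * Wop * (p - Q)‖) := by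
        rw [e3]; exact add_le_add (le_refl _) (norm_add_le _ _)
    _ < ε := by linarith

end Aux

/-- Let `B ≥ 0` and for each `n ≥ 1` let `P n` be the spectral projection `E([1/n, ∞))` of
`B`: an orthogonal projection commuting with `B` with `(1/n)·P n ≤ B·P n` and
`B·(1 - P n) ≤ (1/n)·(1 - P n)`. Then `B ∈ 𝓛₊(A)` iff `P n ∈ 𝓛₊(A)` for all `n ≥ 1`. -/
theorem mem_closure_Lplus_iff_spectral_projections (A B : H →L[ℂ] H)
    (hA : A.IsPositive) (hB : B.IsPositive)
    (P : ℕ → (H →L[ℂ] H))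
    (hsa : ∀ n, 1 ≤ n → IsSelfAdjoint (P n))
    (hidem : ∀ n, 1 ≤ n → (P n) ∘L (P n) = P n)
    (hcomm : ∀ n, 1 ≤ n → B ∘L P n = P n ∘L B)
    (hlow : ∀ n, 1 ≤ n → (B ∘L P n - ((n : ℝ)⁻¹) • P n).IsPositive)
    (hhigh : ∀ n, 1 ≤ n → (((n : ℝ)⁻¹) • (1 - P n) - B ∘L (1 - P n)).IsPositive) :
    B ∈ closure (Lplus A) ↔ ∀ n, 1 ≤ n → P n ∈ closure (Lplus A) := by
  constructor
  · intro hBcl n hn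
    exact aux_dir_fwd hA hB hn (hsa n hn) (hidem n hn) (hcomm n hn) (hlow n hn) hBcl
  · intro hP
    exact aux_dir_rev hA hB P hsa (fun n hn => hidem n hn) (fun n hn => hcomm n hn)
      (fun n hn => hhigh n hn) hP
end

section
/- Let A ∈ B₊(H) be compact and B ∈ B₊(H) compact with R(B) ⊆ closure R(A). Then B ∈ 𝓛₊(A), the norm closure of the positive operators dominated by a positive multiple of A. Consequently 𝓛₊(A) for compact positive A equals the set of all compact positive B with R(B) ⊆ closure R(A). -/
set_option synthInstance.maxHeartbeats 1000000
set_option maxHeartbeats 2000000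
set_option linter.unusedSectionVars false


variable {H : Type*} [NormedAddCommGroup H] [InnerProductSpace ℂ H] [CompleteSpace H]

open ContinuousLinearMap RCLike
open scoped InnerProductSpace

/-- For a positive operator `T`, `‖T x‖ ^ 2 ≤ ‖T‖ * re ⟪T x, x⟫`. -/
lemma aux_norm_sq_le_of_isPositive {T : H →L[ℂ] H} (hT : T.IsPositive) (x : H) :
    ‖T x‖ ^ 2 ≤ ‖T‖ * re ⟪T x, x⟫_ℂ := by
  have hT' : 0 ≤ T := (nonneg_iff_isPositive T).mpr hT
  set s := CFC.sqrt T with hs_def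
  have hs : 0 ≤ s := CFC.sqrt_nonneg (a := T)
  have hss : s * s = T := CFC.sqrt_mul_sqrt_self T hT'
  have hsa : IsSelfAdjoint s := IsSelfAdjoint.of_nonneg hs
  have happ : ∀ y, T y = s (s y) := by
    intro y; rw [← hss]; rfl
  have hnorm_s : ‖s‖ * ‖s‖ = ‖T‖ := by
    rw [← hss]
    rw [← CStarRing.norm_star_mul_self (x := s), hsa.star_eq]
  have h1 : ‖s x‖ ^ 2 = re ⟪T x, x⟫_ℂ := by
    rw [← inner_self_eq_norm_sq (𝕜 := ℂ)]
    rw [happ]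
    congr 1
    exact ((isSelfAdjoint_iff_isSymmetric.mp hsa) (s x) x).symm
  calc ‖T x‖ ^ 2 = ‖s (s x)‖ ^ 2 := by rw [happ]
    _ ≤ (‖s‖ * ‖s x‖) ^ 2 := by
        have := s.le_opNorm (s x)
        exact pow_le_pow_left₀ (norm_nonneg _) this 2
    _ = (‖s‖ * ‖s‖) * ‖s x‖ ^ 2 := by ring
    _ = ‖T‖ * re ⟪T x, x⟫_ℂ := by rw [hnorm_s, h1]

/-- Rank one operator `x ↦ ⟪v, x⟫ • v`. -/
noncomputable def rk (v : H) : H →L[ℂ] H := (innerSL ℂ v).smulRight v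

lemma rk_apply (v x : H) : rk v x = ⟪v, x⟫_ℂ • v := rfl

lemma rk_isSelfAdjoint (v : H) : IsSelfAdjoint (rk v) := by
  rw [isSelfAdjoint_iff']
  refine ((eq_adjoint_iff (rk v) (rk v)).mpr fun x y => ?_).symm
  simp only [rk_apply, inner_smul_left, inner_smul_right]
  rw [← inner_conj_symm v x]
  simp only [RCLike.conj_conj, Complex.conj_conj]
  ring

lemma rk_inner_nonneg (v x : H) : 0 ≤ re ⟪(rk v) x, x⟫_ℂ := by
  rw [rk_apply, inner_smul_left, mul_comm, Complex.mul_conj]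
  simp [Complex.normSq_nonneg]
  
lemma rk_sub_norm_le (e a : H) : ‖rk e - rk a‖ ≤ (‖e‖ + ‖a‖) * ‖e - a‖ := by
  refine opNorm_le_bound _ (by positivity) fun x => ?_
  have : (rk e - rk a) x = ⟪e - a, x⟫_ℂ • e + ⟪a, x⟫_ℂ • (e - a) := by
    simp only [sub_apply, rk_apply, inner_sub_left, smul_sub, sub_smul]
    abel
  rw [this]
  calc ‖⟪e - a, x⟫_ℂ • e + ⟪a, x⟫_ℂ • (e - a)‖
      ≤ ‖⟪e - a, x⟫_ℂ • e‖ + ‖⟪a, x⟫_ℂ • (e - a)‖ := norm_add_le _ _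
    _ ≤ ‖e - a‖ * ‖x‖ * ‖e‖ + ‖a‖ * ‖x‖ * ‖e - a‖ := by
        rw [norm_smul, norm_smul]
        gcongr <;> exact norm_inner_le_norm _ _
    _ = (‖e‖ + ‖a‖) * ‖e - a‖ * ‖x‖ := by ring

lemma aux_inner_le_of_dominated {A X : H →L[ℂ] H} {c : ℝ}
    (hd : (c • A - X).IsPositive) (u : H) :
    re ⟪X u, u⟫_ℂ ≤ c * re ⟪A u, u⟫_ℂ := by
  have h1 := hd.re_inner_nonneg_left u
  have h2 : (c • A - X) u = (c : ℂ) • A u - X u := by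
    simp [sub_apply, smul_apply]
  rw [h2, inner_sub_left, inner_smul_left, map_sub] at h1
  have h3 : re ((starRingEnd ℂ) (c : ℂ) * ⟪A u, u⟫_ℂ) = c * re ⟪A u, u⟫_ℂ := by
    rw [Complex.conj_ofReal]
    simp [RCLike.re_to_complex, Complex.mul_re]
  rw [h3] at h1
  linarith

lemma aux_norm_sq_le_of_dominated {A X : H →L[ℂ] H} {c : ℝ} (hc : 0 ≤ c)
    (hd : (c • A - X).IsPositive) (hX : X.IsPositive) (u : H) :
    ‖X u‖ ^ 2 ≤ (‖X‖ * c) * (‖A u‖ * ‖u‖) := by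
  have h1 := aux_norm_sq_le_of_isPositive hX u
  have h2 := aux_inner_le_of_dominated hd u
  have h3 : re ⟪A u, u⟫_ℂ ≤ ‖A u‖ * ‖u‖ :=
    (RCLike.re_le_norm _).trans (norm_inner_le_norm _ _)
  have h4 : c * re ⟪A u, u⟫_ℂ ≤ c * (‖A u‖ * ‖u‖) :=
    mul_le_mul_of_nonneg_left h3 hc
  calc ‖X u‖ ^ 2 ≤ ‖X‖ * re ⟪X u, u⟫_ℂ := h1
    _ ≤ ‖X‖ * (c * (‖A u‖ * ‖u‖)) :=
        mul_le_mul_of_nonneg_left (h2.trans h4) (norm_nonneg X)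
    _ = (‖X‖ * c) * (‖A u‖ * ‖u‖) := by ring

lemma aux_isCompact_of_dominated {A X : H →L[ℂ] H} (hAc : IsCompactOperator ⇑A)
    {c : ℝ} (hc : 0 < c) (hd : (c • A - X).IsPositive) (hX : X.IsPositive) :
    IsCompactOperator ⇑X := by
  set M : ℝ := ‖X‖ * c with hM
  have hM0 : 0 ≤ M := mul_nonneg (norm_nonneg _) hc.le
  have key : ∀ u : H, ‖X u‖ ^ 2 ≤ M * (‖A u‖ * ‖u‖) :=
    fun u => aux_norm_sq_le_of_dominated hc.le hd hX u
  obtain ⟨K, hK, hKmem⟩ := hAc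
  obtain ⟨r, hr, hrsub⟩ := Metric.mem_nhds_iff.mp hKmem
  -- A '' ball 0 r is totally bounded
  have hTB : TotallyBounded (⇑A '' Metric.ball 0 r) :=
    hK.totallyBounded.subset (by
      rintro - ⟨u, hu, rfl⟩
      exact hrsub hu)
  -- show X '' ball 0 r is totally bounded
  have hTBX : TotallyBounded (⇑X '' Metric.ball 0 r) := by
    rw [Metric.totallyBounded_iff]
    intro ε hε
    set δ : ℝ := ε ^ 2 / (2 * (M + 1) * (2 * r)) with hδ
    have hδ0 : 0 < δ := by positivity
    obtain ⟨t, htsub, htfin, htcover⟩ :=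
      totallyBounded_iff_subset.mp hTB {p : H × H | dist p.1 p.2 < δ}
        (Metric.dist_mem_uniformity hδ0)
    classical
    -- choose preimages
    have hpre : ∀ y ∈ t, ∃ x, x ∈ Metric.ball (0:H) r ∧ A x = y := by
      intro y hy
      obtain ⟨x, hx, hxy⟩ := htsub hy
      exact ⟨x, hx, hxy⟩
    choose! g hg1 hg2 using hpre
    refine ⟨⇑X '' (g '' t), (htfin.image g).image ⇑X, ?_⟩
    rintro - ⟨u, hu, rfl⟩
    have : A u ∈ ⋃ y ∈ t, {x | dist x y < δ} := htcover ⟨u, hu, rfl⟩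
    obtain ⟨y, hy, hdy⟩ := Set.mem_iUnion₂.mp this
    refine Set.mem_iUnion₂.mpr ⟨X (g y), ⟨g y, ⟨y, hy, rfl⟩, rfl⟩, ?_⟩
    -- estimate
    have h1 : ‖A (u - g y)‖ < δ := by
      rw [map_sub, ← dist_eq_norm, hg2 y hy]
      exact hdy
    have h2 : ‖u - g y‖ ≤ 2 * r := by
      have hu' : ‖u‖ < r := by simpa [Metric.mem_ball, dist_eq_norm] using hu
      have hg' : ‖g y‖ < r := by
        have := hg1 y hy
        simpa [Metric.mem_ball, dist_eq_norm] using this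
      calc ‖u - g y‖ ≤ ‖u‖ + ‖g y‖ := norm_sub_le _ _
        _ ≤ 2 * r := by linarith
    have h3 : ‖X u - X (g y)‖ ^ 2 < ε ^ 2 := by
      have := key (u - g y)
      rw [map_sub] at this
      have h4 : M * (‖A (u - g y)‖ * ‖u - g y‖) ≤ (M + 1) * (δ * (2 * r)) := by
        have : ‖A (u - g y)‖ * ‖u - g y‖ ≤ δ * (2 * r) :=
          mul_le_mul h1.le h2 (norm_nonneg _) (by positivity)
        have h5 : M * (‖A (u - g y)‖ * ‖u - g y‖) ≤ M * (δ * (2 * r)) :=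
          mul_le_mul_of_nonneg_left this hM0
        nlinarith [mul_pos hδ0 (by positivity : (0:ℝ) < 2 * r)]
      have h6 : (M + 1) * (δ * (2 * r)) = ε ^ 2 / 2 := by
        rw [hδ]
        field_simp
      nlinarith [sq_nonneg ε, hε]
    rw [Metric.mem_ball, dist_eq_norm]
    exact lt_of_pow_lt_pow_left₀ 2 hε.le h3
  -- conclude
  refine ⟨closure (⇑X '' Metric.ball 0 r), ?_, ?_⟩
  · exact hTBX.closure.isCompact_of_isClosed isClosed_closure
  · refine Filter.mem_of_superset (Metric.ball_mem_nhds 0 hr) ?_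
    intro u hu
    exact subset_closure ⟨u, hu, rfl⟩

lemma aux_apply_eq_zero {T : H →L[ℂ] H} (hT : T.IsPositive) {u : H}
    (h : re ⟪T u, u⟫_ℂ ≤ 0) : T u = 0 := by
  have h1 := aux_norm_sq_le_of_isPositive hT u
  have h2 : ‖T u‖ ^ 2 ≤ 0 := by
    have := mul_le_mul_of_nonneg_left h (norm_nonneg T)
    simpa using h1.trans this
  have : ‖T u‖ = 0 := by nlinarith [norm_nonneg (T u)]
  simpa using this

lemma aux_range_subset {A X : H →L[ℂ] H} (hA : A.IsPositive) {c : ℝ}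
    (hd : (c • A - X).IsPositive) (hX : X.IsPositive) :
    LinearMap.range (X : H →ₗ[ℂ] H) ≤ (LinearMap.range (A : H →ₗ[ℂ] H)).topologicalClosure := by
  rw [← Submodule.orthogonal_orthogonal_eq_closure]
  rintro - ⟨x, rfl⟩
  rw [Submodule.mem_orthogonal]
  intro u hu
  -- u is orthogonal to range A, hence A u = 0
  have hAu : A u = 0 := by
    refine aux_apply_eq_zero hA ?_
    have : ⟪A u, u⟫_ℂ = 0 :=
      (Submodule.mem_orthogonal _ u).mp hu (A u) ⟨u, rfl⟩
    rw [this]; simp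
  -- hence X u = 0
  have hXu : X u = 0 := by
    refine aux_apply_eq_zero hX ?_
    have := aux_inner_le_of_dominated hd u
    rw [hAu] at this
    simpa using this
  -- hence ⟪u, X x⟫ = 0
  have : ⟪u, X x⟫_ℂ = ⟪X u, x⟫_ℂ := by
    rw [← hX.isSelfAdjoint.adjoint_eq, adjoint_inner_left, hX.isSelfAdjoint.adjoint_eq]
  change ⟪u, X x⟫_ℂ = 0
  rw [this, hXu]
  simp

lemma aux_sum_rk_isSelfAdjoint {n : ℕ} (v : Fin n → H) :
    IsSelfAdjoint (∑ i, rk (v i)) := by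
  unfold IsSelfAdjoint
  rw [star_sum]
  exact Finset.sum_congr rfl fun i _ => rk_isSelfAdjoint (v i)

lemma aux_symm {T : H →L[ℂ] H} (hT : IsSelfAdjoint T) (x y : H) :
    ⟪T x, y⟫_ℂ = ⟪x, T y⟫_ℂ := by
  rw [← hT.adjoint_eq, adjoint_inner_left, hT.adjoint_eq]

lemma aux_re_sub_apply (A X : H →L[ℂ] H) (c : ℝ) (x : H) :
    re ⟪(c • A - X) x, x⟫_ℂ = c * re ⟪A x, x⟫_ℂ - re ⟪X x, x⟫_ℂ := by
  have h2 : (c • A - X) x = (c : ℂ) • A x - X x := by simp [sub_apply, smul_apply]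
  rw [h2, inner_sub_left, inner_smul_left, map_sub, Complex.conj_ofReal]
  simp [RCLike.re_to_complex, Complex.mul_re]

lemma aux_mem_closure (A : H →L[ℂ] H) (hA : A.IsPositive) (B : H →L[ℂ] H)
    (hB : B.IsPositive) (hBc : IsCompactOperator ⇑B)
    (hrange : LinearMap.range (B : H →ₗ[ℂ] H) ≤ (LinearMap.range (A : H →ₗ[ℂ] H)).topologicalClosure) :
    B ∈ closure (Lplus A) := by
  rw [Metric.mem_closure_iff]
  intro ε hε
  classical
  set V := (LinearMap.range (A : H →ₗ[ℂ] H)).topologicalClosure with hV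
  obtain ⟨K, hK, hKmem⟩ := hBc
  obtain ⟨r, hr0, hrsub⟩ := Metric.mem_nhds_iff.mp hKmem
  have hTB : TotallyBounded (⇑B '' Metric.ball 0 r) :=
    hK.totallyBounded.subset (by rintro - ⟨u, hu, rfl⟩; exact hrsub hu)
  set δ : ℝ := ε * r / 16 with hδ
  have hδ0 : 0 < δ := by positivity
  obtain ⟨t, htsub, htfin, htcover⟩ :=
    totallyBounded_iff_subset.mp hTB {p : H × H | dist p.1 p.2 < δ}
      (Metric.dist_mem_uniformity hδ0)
  have htV : t ⊆ (V : Set H) := by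
    intro y hy
    obtain ⟨x, -, rfl⟩ := htsub hy
    exact hrange ⟨x, rfl⟩
  -- the finite-dimensional subspace spanned by the net
  set W : Submodule ℂ H := Submodule.span ℂ t with hW
  have htW : t ⊆ (W : Set H) := Submodule.subset_span
  have hWV : W ≤ V := Submodule.span_le.mpr htV
  have hWfin : FiniteDimensional ℂ W := by
    exact FiniteDimensional.span_of_finite ℂ htfin
  set n : ℕ := Module.finrank ℂ W with hn
  set b : OrthonormalBasis (Fin n) ℂ W := stdOrthonormalBasis ℂ W with hb
  set e : Fin n → H := fun i => (b i : H) with he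
  have heW : ∀ i, e i ∈ W := fun i => (b i).2
  have heV : ∀ i, e i ∈ V := fun i => hWV (heW i)
  have he1 : ∀ i, ‖e i‖ = 1 := by
    intro i
    have := b.orthonormal.1 i
    exact this
  have he2 : ∀ i j, ⟪e i, e j⟫_ℂ = if i = j then 1 else 0 := by
    intro i j
    by_cases h : i = j
    · subst h
      simp only [if_pos rfl]
      rw [show (⟪e i, e i⟫_ℂ) = (‖e i‖ : ℂ) ^ 2 from by
        rw [inner_self_eq_norm_sq_to_K]; norm_num]
      rw [he1 i]; norm_num
    · rw [if_neg h]
      have := b.orthonormal.2 h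
      simp only [Submodule.coe_inner] at this
      exact this
  -- the projection onto W
  set P : H →L[ℂ] H := ∑ i, rk (e i) with hP
  have hPapp : ∀ x, P x = ∑ i, ⟪e i, x⟫_ℂ • e i := by
    intro x
    rw [hP, sum_apply]
    exact Finset.sum_congr rfl fun i _ => rfl
  have hPsa : IsSelfAdjoint P := aux_sum_rk_isSelfAdjoint e
  have hPW : ∀ x, P x ∈ W := by
    intro x
    rw [hPapp]
    exact Submodule.sum_mem _ fun i _ => Submodule.smul_mem _ _ (heW i)
  have hF2 : ∀ (x : H) (j : Fin n), ⟪e j, x - P x⟫_ℂ = 0 := by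
    intro x j
    rw [inner_sub_right, hPapp, inner_sum]
    rw [Finset.sum_eq_single j]
    · rw [inner_smul_right, he2 j j, if_pos rfl, mul_one, sub_self]
    · intro i _ hij
      rw [inner_smul_right, he2 j i, if_neg (Ne.symm hij), mul_zero]
    · intro h; exact absurd (Finset.mem_univ j) h
  have hF3 : ∀ (x : H), ∀ w ∈ W, ⟪w, x - P x⟫_ℂ = 0 := by
    intro x w hw
    have h1 : ∑ i, b.repr ⟨w, hw⟩ i • b i = (⟨w, hw⟩ : W) := b.sum_repr ⟨w, hw⟩
    have h2 : w = ∑ i, b.repr ⟨w, hw⟩ i • e i := by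
      have := congrArg (Submodule.subtype W) h1
      simp only [map_sum, map_smul, Submodule.coe_subtype] at this
      exact this.symm
    rw [h2, sum_inner]
    refine Finset.sum_eq_zero fun i _ => ?_
    rw [inner_smul_left, hF2 x i, mul_zero]
  have hF5 : ∀ (x : H), ∀ w ∈ W, ‖x - P x‖ ≤ ‖x - w‖ := by
    intro x w hw
    have horth : ⟪x - P x, P x - w⟫_ℂ = 0 := by
      rw [← inner_conj_symm, hF3 x (P x - w) (Submodule.sub_mem _ (hPW x) hw)]
      simp
    have hdecomp : x - w = (x - P x) + (P x - w) := by abel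
    have := norm_add_sq (𝕜 := ℂ) (x - P x) (P x - w)
    rw [← hdecomp] at this
    have h2 : ‖x - w‖ ^ 2 = ‖x - P x‖ ^ 2 + ‖P x - w‖ ^ 2 := by
      rw [this, horth]
      simp
    have := sq_nonneg ‖P x - w‖
    refine le_of_pow_le_pow_left₀ two_ne_zero (norm_nonneg _) ?_
    nlinarith
  have hF6 : ∀ x, ‖P x‖ ≤ ‖x‖ := by
    intro x
    have horth : ⟪P x, x - P x⟫_ℂ = 0 := hF3 x (P x) (hPW x)
    have hdecomp : x = P x + (x - P x) := by abel
    have hns := norm_add_sq (𝕜 := ℂ) (P x) (x - P x)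
    rw [← hdecomp, horth] at hns
    refine le_of_pow_le_pow_left₀ two_ne_zero (norm_nonneg _) ?_
    simp at hns
    nlinarith [sq_nonneg ‖x - P x‖, hns]
  have hPnorm : ‖P‖ ≤ 1 := opNorm_le_bound _ zero_le_one (by simpa using hF6)
  -- the distance estimate ‖B - P B‖
  set D : H →L[ℂ] H := B - P ∘L B with hD
  have hDbound : ∀ x, ‖D x‖ ≤ (2 * δ / r) * ‖x‖ := by
    intro x
    by_cases hx : x = 0
    · simp [hx]
    · have hxn : 0 < ‖x‖ := norm_pos_iff.mpr hx
      have hrne : r ≠ 0 := ne_of_gt hr0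
      set y : H := ((r / (2 * ‖x‖) : ℝ) : ℂ) • x with hy
      have hyn : ‖y‖ = r / 2 := by
        rw [hy, norm_smul, Complex.norm_real, Real.norm_of_nonneg (by positivity)]
        field_simp
      have hymem : y ∈ Metric.ball (0 : H) r := by
        rw [Metric.mem_ball, dist_zero_right, hyn]
        linarith
      obtain ⟨z, hz, hdz⟩ := Set.mem_iUnion₂.mp (htcover ⟨y, hymem, rfl⟩)
      have hDy : ‖D y‖ < δ := by
        have hDyy : D y = (B y) - P (B y) := by
          simp [hD, sub_apply, comp_apply]
        rw [hDyy]
        calc ‖B y - P (B y)‖ ≤ ‖B y - z‖ := hF5 (B y) z (htW hz)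
          _ < δ := by simpa [dist_eq_norm] using hdz
      have hxy : x = ((2 * ‖x‖ / r : ℝ) : ℂ) • y := by
        rw [hy, smul_smul, ← Complex.ofReal_mul]
        rw [show (2 * ‖x‖ / r) * (r / (2 * ‖x‖)) = 1 by field_simp]
        simp
      calc ‖D x‖ = ‖((2 * ‖x‖ / r : ℝ) : ℂ) • D y‖ := by
            conv_lhs => rw [hxy]
            rw [map_smul]
        _ = (2 * ‖x‖ / r) * ‖D y‖ := by
            rw [norm_smul, Complex.norm_real, Real.norm_of_nonneg (by positivity)]
        _ ≤ (2 * ‖x‖ / r) * δ :=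
            mul_le_mul_of_nonneg_left hDy.le (by positivity)
        _ = (2 * δ / r) * ‖x‖ := by field_simp
  have hDnorm : ‖D‖ ≤ 2 * δ / r := opNorm_le_bound _ (by positivity) hDbound
  have hDadj : adjoint D = B - B ∘L P := by
    rw [hD, map_sub, adjoint_comp, hPsa.adjoint_eq, hB.isSelfAdjoint.adjoint_eq]
  have hBPBP : ‖B - P ∘L (B ∘L P)‖ ≤ ε / 4 := by
    have hid : B - P ∘L (B ∘L P) = D + P ∘L (adjoint D) := by
      rw [hDadj, hD]
      ext x
      simp [comp_apply, sub_apply, add_apply, map_sub]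
    rw [hid]
    have h1 : ‖P ∘L (adjoint D)‖ ≤ ‖D‖ := by
      calc ‖P ∘L (adjoint D)‖ ≤ ‖P‖ * ‖adjoint D‖ := opNorm_comp_le _ _
        _ ≤ 1 * ‖adjoint D‖ := by gcongr
        _ = ‖D‖ := by rw [one_mul, adjoint.norm_map]
    calc ‖D + P ∘L (adjoint D)‖ ≤ ‖D‖ + ‖P ∘L (adjoint D)‖ := norm_add_le _ _
      _ ≤ (2 * δ / r) + (2 * δ / r) := by
          refine add_le_add hDnorm (h1.trans hDnorm)
      _ ≤ ε / 4 := by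
          have hrne : r ≠ 0 := ne_of_gt hr0
          have h8 : 2 * δ / r = ε / 8 := by
            rw [hδ]; field_simp; ring
          rw [h8]; linarith
  -- Step 3: perturb the basis vectors into the range of A
  set η : ℝ := min (1 / (3 * ((n : ℝ) + 1))) (ε / (36 * ((n : ℝ) + 1) * (‖B‖ + 1))) with hη
  have hη0 : 0 < η := lt_min (by positivity) (by positivity)
  have hη1 : η ≤ 1 / (3 * ((n : ℝ) + 1)) := min_le_left _ _
  have hη2 : η ≤ ε / (36 * ((n : ℝ) + 1) * (‖B‖ + 1)) := min_le_right _ _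
  have hηle1 : η ≤ 1 := by
    refine hη1.trans ?_
    rw [div_le_one (by positivity)]
    have : (0:ℝ) ≤ (n : ℝ) := Nat.cast_nonneg n
    linarith
  have happrox : ∀ i : Fin n, ∃ v : H, ‖e i - A v‖ < η := by
    intro i
    have hmem : e i ∈ closure ((LinearMap.range (A : H →ₗ[ℂ] H) : Submodule ℂ H) : Set H) := heV i
    obtain ⟨w, hw, hwd⟩ := Metric.mem_closure_iff.mp hmem η hη0
    obtain ⟨v, rfl⟩ := hw
    exact ⟨v, by rwa [dist_eq_norm] at hwd⟩
  choose u hu using happrox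
  set a : Fin n → H := fun i => A (u i) with ha
  set Q : H →L[ℂ] H := ∑ i, rk (a i) with hQ
  have hQsa : IsSelfAdjoint Q := aux_sum_rk_isSelfAdjoint a
  have hanorm : ∀ i, ‖a i‖ ≤ 2 := by
    intro i
    calc ‖a i‖ = ‖e i - (e i - a i)‖ := by congr 1; abel
      _ ≤ ‖e i‖ + ‖e i - a i‖ := norm_sub_le _ _
      _ ≤ 1 + 1 := by
          rw [he1 i]
          exact add_le_add_right ((hu i).le.trans hηle1) 1
      _ = 2 := by norm_num
  have hPQ : ‖P - Q‖ ≤ 3 * ((n : ℝ) + 1) * η := by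
    rw [hP, hQ, ← Finset.sum_sub_distrib]
    calc ‖∑ i, (rk (e i) - rk (a i))‖ ≤ ∑ i, ‖rk (e i) - rk (a i)‖ :=
          norm_sum_le _ _
      _ ≤ ∑ _i : Fin n, (3 * η) := by
          refine Finset.sum_le_sum fun i _ => ?_
          calc ‖rk (e i) - rk (a i)‖ ≤ (‖e i‖ + ‖a i‖) * ‖e i - a i‖ :=
                rk_sub_norm_le _ _
            _ ≤ (1 + 2) * η := by
                refine mul_le_mul ?_ (hu i).le (norm_nonneg _) (by norm_num)
                rw [he1 i]
                exact add_le_add_right (hanorm i) 1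
            _ = 3 * η := by ring
      _ = (n : ℝ) * (3 * η) := by
          rw [Finset.sum_const, Finset.card_univ, Fintype.card_fin, nsmul_eq_mul]
      _ ≤ 3 * ((n : ℝ) + 1) * η := by nlinarith [hη0.le, Nat.cast_nonneg (α := ℝ) n]
  have hPQ1 : ‖P - Q‖ ≤ 1 := by
    refine hPQ.trans ?_
    calc 3 * ((n : ℝ) + 1) * η ≤ 3 * ((n : ℝ) + 1) * (1 / (3 * ((n : ℝ) + 1))) := by
          refine mul_le_mul_of_nonneg_left hη1 (by positivity)
      _ = 1 := by field_simp
  have hQnorm : ‖Q‖ ≤ 2 := by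
    calc ‖Q‖ = ‖P - (P - Q)‖ := by congr 1; abel
      _ ≤ ‖P‖ + ‖P - Q‖ := norm_sub_le _ _
      _ ≤ 1 + 1 := add_le_add hPnorm hPQ1
      _ = 2 := by norm_num
  have hPQε : ‖P - Q‖ ≤ ε / (12 * (‖B‖ + 1)) := by
    refine hPQ.trans ?_
    calc 3 * ((n : ℝ) + 1) * η
        ≤ 3 * ((n : ℝ) + 1) * (ε / (36 * ((n : ℝ) + 1) * (‖B‖ + 1))) :=
          mul_le_mul_of_nonneg_left hη2 (by positivity)
      _ = ε / (12 * (‖B‖ + 1)) := by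
          have hB1 : (0:ℝ) < ‖B‖ + 1 := by positivity
          field_simp
          ring
  have hKey : ‖P ∘L (B ∘L P) - Q ∘L (B ∘L Q)‖ ≤ ε / 4 := by
    have hid : P ∘L (B ∘L P) - Q ∘L (B ∘L Q)
        = (P - Q) ∘L (B ∘L P) + Q ∘L (B ∘L (P - Q)) := by
      ext x
      simp only [comp_apply, sub_apply, add_apply, map_sub]
      abel
    rw [hid]
    have hterm1 : ‖(P - Q) ∘L (B ∘L P)‖ ≤ ‖P - Q‖ * ‖B‖ := by
      calc ‖(P - Q) ∘L (B ∘L P)‖ ≤ ‖P - Q‖ * ‖B ∘L P‖ := opNorm_comp_le _ _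
        _ ≤ ‖P - Q‖ * (‖B‖ * ‖P‖) :=
            mul_le_mul_of_nonneg_left (opNorm_comp_le _ _) (norm_nonneg _)
        _ ≤ ‖P - Q‖ * (‖B‖ * 1) := by
            refine mul_le_mul_of_nonneg_left ?_ (norm_nonneg _)
            exact mul_le_mul_of_nonneg_left hPnorm (norm_nonneg _)
        _ = ‖P - Q‖ * ‖B‖ := by ring
    have hterm2 : ‖Q ∘L (B ∘L (P - Q))‖ ≤ 2 * (‖B‖ * ‖P - Q‖) := by
      calc ‖Q ∘L (B ∘L (P - Q))‖ ≤ ‖Q‖ * ‖B ∘L (P - Q)‖ := opNorm_comp_le _ _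
        _ ≤ ‖Q‖ * (‖B‖ * ‖P - Q‖) :=
            mul_le_mul_of_nonneg_left (opNorm_comp_le _ _) (norm_nonneg _)
        _ ≤ 2 * (‖B‖ * ‖P - Q‖) := by
            refine mul_le_mul_of_nonneg_right hQnorm (by positivity)
    calc ‖(P - Q) ∘L (B ∘L P) + Q ∘L (B ∘L (P - Q))‖
        ≤ ‖(P - Q) ∘L (B ∘L P)‖ + ‖Q ∘L (B ∘L (P - Q))‖ := norm_add_le _ _
      _ ≤ ‖P - Q‖ * ‖B‖ + 2 * (‖B‖ * ‖P - Q‖) := add_le_add hterm1 hterm2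
      _ = 3 * ‖B‖ * ‖P - Q‖ := by ring
      _ ≤ 3 * (‖B‖ + 1) * (ε / (12 * (‖B‖ + 1))) := by
          have h1 : 3 * ‖B‖ * ‖P - Q‖ ≤ 3 * (‖B‖ + 1) * ‖P - Q‖ := by
            nlinarith [norm_nonneg (P - Q), norm_nonneg B]
          refine h1.trans (mul_le_mul_of_nonneg_left hPQε (by positivity))
      _ = ε / 4 := by
          have hB1 : (0:ℝ) < ‖B‖ + 1 := by positivity
          field_simp
          ring
  -- the candidate operator
  set X : H →L[ℂ] H := Q ∘L (B ∘L Q) with hX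
  have hXpos : X.IsPositive := by
    have h := hB.adjoint_conj Q
    rwa [hQsa.adjoint_eq] at h
  -- X is dominated by a multiple of A
  set c1 : ℝ := ∑ i, ‖u i‖ * ‖a i‖ with hc1
  have hc10 : 0 ≤ c1 :=
    Finset.sum_nonneg fun i _ => mul_nonneg (norm_nonneg _) (norm_nonneg _)
  have hQx : ∀ x, ‖Q x‖ ≤ c1 * ‖A x‖ := by
    intro x
    rw [hQ, sum_apply]
    calc ‖∑ i, rk (a i) x‖ ≤ ∑ i, ‖rk (a i) x‖ := norm_sum_le _ _
      _ ≤ ∑ i, (‖u i‖ * ‖a i‖) * ‖A x‖ := by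
          refine Finset.sum_le_sum fun i _ => ?_
          rw [rk_apply, norm_smul]
          have hinner : ⟪a i, x⟫_ℂ = ⟪u i, A x⟫_ℂ := by
            rw [ha]
            exact aux_symm hA.isSelfAdjoint (u i) x
          rw [hinner]
          calc ‖⟪u i, A x⟫_ℂ‖ * ‖a i‖ ≤ (‖u i‖ * ‖A x‖) * ‖a i‖ :=
                mul_le_mul_of_nonneg_right (norm_inner_le_norm _ _) (norm_nonneg _)
            _ = (‖u i‖ * ‖a i‖) * ‖A x‖ := by ring
      _ = c1 * ‖A x‖ := by rw [← Finset.sum_mul]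
  set c : ℝ := ‖A‖ * c1 ^ 2 * ‖B‖ + 1 with hc
  have hc0 : 0 < c := by positivity
  have hdom : (c • A - X).IsPositive := by
    constructor
    · have h1 : IsSelfAdjoint (c • A) := by
        rw [IsSelfAdjoint, star_smul, star_trivial, hA.isSelfAdjoint.star_eq]
      exact (h1.sub hXpos.isSelfAdjoint).isSymmetric
    · intro x
      show 0 ≤ re ⟪(c • A - X) x, x⟫_ℂ
      rw [aux_re_sub_apply]
      have hXax : re ⟪X x, x⟫_ℂ = re ⟪B (Q x), Q x⟫_ℂ := by
        have h0 : X x = Q (B (Q x)) := rfl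
        rw [h0, aux_symm hQsa (B (Q x)) x]
      have h1 : re ⟪B (Q x), Q x⟫_ℂ ≤ ‖B‖ * ‖Q x‖ ^ 2 := by
        calc re ⟪B (Q x), Q x⟫_ℂ ≤ ‖⟪B (Q x), Q x⟫_ℂ‖ := RCLike.re_le_norm _
          _ ≤ ‖B (Q x)‖ * ‖Q x‖ := norm_inner_le_norm _ _
          _ ≤ (‖B‖ * ‖Q x‖) * ‖Q x‖ :=
              mul_le_mul_of_nonneg_right (B.le_opNorm _) (norm_nonneg _)
          _ = ‖B‖ * ‖Q x‖ ^ 2 := by ring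
      have h2 : ‖Q x‖ ^ 2 ≤ c1 ^ 2 * ‖A x‖ ^ 2 := by
        have := hQx x
        nlinarith [norm_nonneg (Q x), norm_nonneg (A x)]
      have h3 : ‖A x‖ ^ 2 ≤ ‖A‖ * re ⟪A x, x⟫_ℂ := aux_norm_sq_le_of_isPositive hA x
      have h4 : 0 ≤ re ⟪A x, x⟫_ℂ := hA.re_inner_nonneg_left x
      have h5 : ‖B‖ * ‖Q x‖ ^ 2 ≤ ‖B‖ * (c1 ^ 2 * ‖A x‖ ^ 2) :=
        mul_le_mul_of_nonneg_left h2 (norm_nonneg _)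
      have h6 : ‖B‖ * (c1 ^ 2 * ‖A x‖ ^ 2) ≤ ‖B‖ * c1 ^ 2 * (‖A‖ * re ⟪A x, x⟫_ℂ) := by
        have := mul_le_mul_of_nonneg_left h3 (by positivity : (0:ℝ) ≤ ‖B‖ * c1 ^ 2)
        calc ‖B‖ * (c1 ^ 2 * ‖A x‖ ^ 2) = ‖B‖ * c1 ^ 2 * ‖A x‖ ^ 2 := by ring
          _ ≤ ‖B‖ * c1 ^ 2 * (‖A‖ * re ⟪A x, x⟫_ℂ) := this
      have h7 : c * re ⟪A x, x⟫_ℂ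
          = ‖B‖ * c1 ^ 2 * (‖A‖ * re ⟪A x, x⟫_ℂ) + re ⟪A x, x⟫_ℂ := by
        rw [hc]; ring
      linarith
  -- conclusion
  refine ⟨X, ⟨hXpos, c, hc0, hdom⟩, ?_⟩
  rw [dist_eq_norm]
  calc ‖B - X‖ = ‖(B - P ∘L (B ∘L P)) + (P ∘L (B ∘L P) - X)‖ := by congr 1; abel
    _ ≤ ‖B - P ∘L (B ∘L P)‖ + ‖P ∘L (B ∘L P) - X‖ := norm_add_le _ _
    _ ≤ ε / 4 + ε / 4 := add_le_add hBPBP hKey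
    _ < ε := by linarith

/-- If `A ≥ 0` is compact and `B ≥ 0` is compact with `R(B) ⊆ closure R(A)`, then
`B ∈ 𝓛₊(A)`; consequently, for compact positive `A`, `𝓛₊(A)` is exactly the set of all
compact positive operators whose range is contained in the closure of the range of `A`. -/
theorem closure_Lplus_of_compact (A : H →L[ℂ] H) (hA : A.IsPositive)
    (hAc : IsCompactOperator ⇑A) :
    (∀ B : H →L[ℂ] H, B.IsPositive → IsCompactOperator ⇑B →
      LinearMap.range (B : H →ₗ[ℂ] H) ≤ (LinearMap.range (A : H →ₗ[ℂ] H)).topologicalClosure →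
      B ∈ closure (Lplus A)) ∧
    closure (Lplus A) = {B : H →L[ℂ] H | B.IsPositive ∧ IsCompactOperator ⇑B ∧
      LinearMap.range (B : H →ₗ[ℂ] H) ≤ (LinearMap.range (A : H →ₗ[ℂ] H)).topologicalClosure} := by
  have part1 : ∀ B : H →L[ℂ] H, B.IsPositive → IsCompactOperator ⇑B →
      LinearMap.range (B : H →ₗ[ℂ] H) ≤ (LinearMap.range (A : H →ₗ[ℂ] H)).topologicalClosure →
      B ∈ closure (Lplus A) :=
    fun B hB hBc hr => aux_mem_closure A hA B hB hBc hr
  refine ⟨part1, ?_⟩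
  apply Set.Subset.antisymm
  · intro X hX
    obtain ⟨f, hf, hftends⟩ := mem_closure_iff_seq_limit.mp hX
    have hfp : ∀ k, (f k).IsPositive := fun k => (hf k).1
    have happly : ∀ x : H, Filter.Tendsto (fun k => f k x) Filter.atTop (nhds (X x)) := by
      intro x
      have h := hftends
      rw [tendsto_iff_norm_sub_tendsto_zero] at h ⊢
      refine squeeze_zero (fun k => norm_nonneg _) (fun k => ?_)
        (by simpa using h.mul_const ‖x‖)
      calc ‖f k x - X x‖ = ‖(f k - X) x‖ := by simp [sub_apply]
        _ ≤ ‖f k - X‖ * ‖x‖ := le_opNorm _ _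
    have hXpos : X.IsPositive := by
      constructor
      · refine IsSelfAdjoint.isSymmetric ?_
        have h1 : Filter.Tendsto (fun k => star (f k)) Filter.atTop (nhds (star X)) :=
          hftends.star
        have h2 : (fun k => star (f k)) = f := funext fun k => (hfp k).isSelfAdjoint
        rw [h2] at h1
        exact tendsto_nhds_unique h1 hftends
      · intro x
        show 0 ≤ re ⟪X x, x⟫_ℂ
        have h3 : Filter.Tendsto (fun k => re ⟪f k x, x⟫_ℂ) Filter.atTop
            (nhds (re ⟪X x, x⟫_ℂ)) :=
          (RCLike.continuous_re.tendsto _).comp ((happly x).inner tendsto_const_nhds)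
        exact ge_of_tendsto h3 (Filter.Eventually.of_forall fun k => (hfp k).2 x)
    refine ⟨hXpos, ?_, ?_⟩
    · refine isCompactOperator_of_tendsto hftends
        (Filter.Eventually.of_forall fun k => ?_)
      obtain ⟨c, hc, hd⟩ := (hf k).2
      exact aux_isCompact_of_dominated hAc hc hd (hfp k)
    · rintro - ⟨x, rfl⟩
      have hmem : ∀ k, f k x ∈ (LinearMap.range (A : H →ₗ[ℂ] H)).topologicalClosure := by
        intro k
        obtain ⟨c, hc, hd⟩ := (hf k).2
        exact aux_range_subset hA hd (hfp k) ⟨x, rfl⟩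
      exact (LinearMap.range (A : H →ₗ[ℂ] H)).isClosed_topologicalClosure.mem_of_tendsto
        (happly x) (Filter.Eventually.of_forall hmem)
  · rintro X ⟨hpos, hcomp, hrange⟩
    exact part1 X hpos hcomp hrange
end
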